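/- arXiv:0910.0499 — 12 statements merged into one kernel-verified Lean document; each statement's English description precedes it below -/
import Mathlib

section
/- Let K ≤ P be positive integers and K₁, K₂, K₃ i.i.d. uniform K-subsets of {1,…,P}. Then the probability that all three pairwise intersections are nonempty (i.e., nodes 1,2,3 form a triangle in the random key graph) equals β(K,P) := (1−q)³ + q³ − q·r, where q = q(K,P) and r = r(K,P). -/
open Finset

/-- `q(K,P) = C(P-K,K)/C(P,K)` if `2K ≤ P`, else 0. -/
noncomputable def qKP (K P : ℕ) : ℝ :=
  if 2 * K ≤ P then ((P - K).choose K : ℝ) / (P.choose K) else 0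

/-- `r(K,P) = C(P-2K,K)/C(P,K)` if `3K ≤ P`, else 0. -/
noncomputable def rKP (K P : ℕ) : ℝ :=
  if 3 * K ≤ P then ((P - 2 * K).choose K : ℝ) / (P.choose K) else 0

/-- `β(K,P) = (1-q)³ + q³ - q r`, the probability that three nodes form a triangle. -/
noncomputable def betaKP (K P : ℕ) : ℝ :=
  (1 - qKP K P) ^ 3 + (qKP K P) ^ 3 - qKP K P * rKP K P

lemma count_disjoint {P K : ℕ} (S : Finset (Fin P)) :
    ∑ C ∈ (univ : Finset (Fin P)).powersetCard K, (if C ∩ S = ∅ then (1:ℝ) else 0)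
      = ((P - S.card).choose K : ℝ) := by
  classical
  rw [Finset.sum_boole]
  congr 1
  have h : ((univ : Finset (Fin P)).powersetCard K).filter (fun C => C ∩ S = ∅)
      = Sᶜ.powersetCard K := by
    ext C
    simp only [Finset.mem_filter, Finset.mem_powersetCard, Finset.subset_univ, true_and,
      ← Finset.disjoint_iff_inter_eq_empty, ← le_compl_iff_disjoint_right, Finset.le_iff_subset]
    tauto
  rw [h, Finset.card_powersetCard, Finset.card_compl, Fintype.card_fin]

theorem prob_triangle (K P : ℕ) (hK : 0 < K) (hKP : K ≤ P) :
    ((((Finset.univ.powersetCard K ×ˢ (Finset.univ.powersetCard K ×ˢ Finset.univ.powersetCard K) :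
          Finset (Finset (Fin P) × (Finset (Fin P) × Finset (Fin P)))).filter
          (fun t => (t.1 ∩ t.2.1).Nonempty ∧ (t.1 ∩ t.2.2).Nonempty ∧ (t.2.1 ∩ t.2.2).Nonempty)).card : ℝ) /
        ((Finset.univ.powersetCard K ×ˢ (Finset.univ.powersetCard K ×ˢ Finset.univ.powersetCard K) :
          Finset (Finset (Fin P) × (Finset (Fin P) × Finset (Fin P)))).card : ℝ))
      = betaKP K P := by
  classical
  set N := (univ : Finset (Fin P)).powersetCard K with hN
  set n : ℝ := (P.choose K : ℝ) with hn_def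
  set M : ℝ := ((P - K).choose K : ℝ) with hM_def
  set R : ℝ := ((P - 2 * K).choose K : ℝ) with hR_def
  have hNcard : (N.card : ℝ) = n := by
    simp [hN, Finset.card_powersetCard, hn_def]
  have hnpos : (0:ℝ) < n := by
    have := Nat.choose_pos hKP
    simp only [hn_def]
    exact_mod_cast this
  have hn0 : n ≠ 0 := ne_of_gt hnpos
  -- indicator of disjointness
  set f : Finset (Fin P) → Finset (Fin P) → ℝ :=
    fun X Y => if X ∩ Y = ∅ then 1 else 0 with hf_def
  have hf_sum' : ∀ A ∈ N, ∑ B ∈ N, f B A = M := by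
    intro A hA
    have h := count_disjoint (K := K) A
    rw [Finset.mem_powersetCard_univ.mp hA] at h
    exact h
  have hf_comm : ∀ A B, f A B = f B A := by
    intro A B; simp [hf_def, Finset.inter_comm]
  have hf_sum : ∀ A ∈ N, ∑ B ∈ N, f A B = M := by
    intro A hA
    rw [Finset.sum_congr rfl fun B _ => hf_comm A B]
    exact hf_sum' A hA
  -- sum over C of product of two indicators
  have hg : ∀ A B : Finset (Fin P), ∑ C ∈ N, f A C * f B C
      = ((P - (A ∪ B).card).choose K : ℝ) := by
    intro A B
    have h := count_disjoint (K := K) (A ∪ B)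
    rw [← h]
    refine Finset.sum_congr rfl fun C _ => ?_
    simp only [hf_def]
    rw [Finset.inter_comm C, Finset.union_inter_distrib_right]
    by_cases h1 : A ∩ C = ∅ <;> by_cases h2 : B ∩ C = ∅ <;>
      simp [h1, h2, Finset.union_eq_empty]
  have htr : ∀ A ∈ N, ∀ B ∈ N,
      f A B * ((P - (A ∪ B).card).choose K : ℝ) = f A B * R := by
    intro A hA B hB
    by_cases h : A ∩ B = ∅
    · have hd : Disjoint A B := Finset.disjoint_iff_inter_eq_empty.mpr h
      rw [Finset.card_union_of_disjoint hd, Finset.mem_powersetCard_univ.mp hA,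
        Finset.mem_powersetCard_univ.mp hB, ← two_mul, ← hR_def]
    · simp [hf_def, h]
  -- the key counting identity
  have key : (((N ×ˢ (N ×ˢ N)).filter
      (fun t : Finset (Fin P) × (Finset (Fin P) × Finset (Fin P)) =>
        (t.1 ∩ t.2.1).Nonempty ∧ (t.1 ∩ t.2.2).Nonempty ∧ (t.2.1 ∩ t.2.2).Nonempty)).card : ℝ)
      = n^3 - 3*n^2*M + 3*n*M^2 - n*M*R := by
    rw [Finset.card_filter]
    push_cast
    rw [Finset.sum_product]
    have hstep : ∀ A ∈ N, ∑ p ∈ N ×ˢ N,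
        (if (A ∩ p.1).Nonempty ∧ (A ∩ p.2).Nonempty ∧ (p.1 ∩ p.2).Nonempty then (1:ℝ) else 0)
        = ∑ B ∈ N, ((1 - f A B) * (n - 2*M) + ((P - (A ∪ B).card).choose K : ℝ) - f A B * R) := by
      intro A hA
      rw [Finset.sum_product]
      refine Finset.sum_congr rfl fun B hB => ?_
      have hind : ∀ C, (if (A ∩ B).Nonempty ∧ (A ∩ C).Nonempty ∧ (B ∩ C).Nonempty
          then (1:ℝ) else 0) = (1 - f A B) * ((1 - f A C) * (1 - f B C)) := by
        intro C
        simp only [hf_def, Finset.nonempty_iff_ne_empty]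
        by_cases h1 : A ∩ B = ∅ <;> by_cases h2 : A ∩ C = ∅ <;> by_cases h3 : B ∩ C = ∅ <;>
          simp [h1, h2, h3]
      rw [Finset.sum_congr rfl fun C _ => hind C, ← Finset.mul_sum]
      have e1 : ∑ C ∈ N, (1 - f A C) * (1 - f B C)
          = n - 2*M + ∑ C ∈ N, f A C * f B C := by
        have expand : ∀ C, (1 - f A C) * (1 - f B C)
            = 1 - f A C - f B C + f A C * f B C := fun C => by ring
        rw [Finset.sum_congr rfl fun C _ => expand C]
        rw [Finset.sum_add_distrib, Finset.sum_sub_distrib, Finset.sum_sub_distrib,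
          Finset.sum_const, hf_sum A hA, hf_sum B hB, nsmul_eq_mul, mul_one, hNcard]
        ring
      rw [e1, hg A B]
      have h2 := htr A hA B hB
      calc (1 - f A B) * (n - 2*M + ((P - (A ∪ B).card).choose K : ℝ))
          = (1 - f A B) * (n - 2*M) + ((P - (A ∪ B).card).choose K : ℝ)
            - f A B * ((P - (A ∪ B).card).choose K : ℝ) := by ring
        _ = _ := by rw [h2]
    rw [Finset.sum_congr rfl hstep]
    -- now compute the double sum
    have split : ∀ A ∈ N, ∑ B ∈ N,
        ((1 - f A B) * (n - 2*M) + ((P - (A ∪ B).card).choose K : ℝ) - f A B * R)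
        = (n - M) * (n - 2*M) + (∑ B ∈ N, ((P - (A ∪ B).card).choose K : ℝ)) - M * R := by
      intro A hA
      rw [Finset.sum_sub_distrib, Finset.sum_add_distrib, ← Finset.sum_mul, ← Finset.sum_mul,
        Finset.sum_sub_distrib, Finset.sum_const, hf_sum A hA]
      simp [hNcard]
    rw [Finset.sum_congr rfl split]
    have hgsum : ∑ A ∈ N, ∑ B ∈ N, ((P - (A ∪ B).card).choose K : ℝ) = n * M^2 := by
      have : ∀ A ∈ N, ∑ B ∈ N, ((P - (A ∪ B).card).choose K : ℝ)
          = ∑ B ∈ N, ∑ C ∈ N, f A C * f B C := by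
        intro A _
        exact Finset.sum_congr rfl fun B _ => (hg A B).symm
      rw [Finset.sum_congr rfl this]
      have swap : ∀ A ∈ N, ∑ B ∈ N, ∑ C ∈ N, f A C * f B C = M^2 := by
        intro A hA
        rw [Finset.sum_comm]
        have : ∀ C ∈ N, ∑ B ∈ N, f A C * f B C = f A C * M := by
          intro C hC
          rw [← Finset.mul_sum, hf_sum' C hC]
        rw [Finset.sum_congr rfl this, ← Finset.sum_mul, hf_sum A hA]
        ring
      rw [Finset.sum_congr rfl swap, Finset.sum_const, nsmul_eq_mul, hNcard]
    rw [Finset.sum_sub_distrib, Finset.sum_add_distrib, Finset.sum_const, Finset.sum_const,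
      hgsum, nsmul_eq_mul, nsmul_eq_mul, hNcard]
    ring
  -- denominator
  have hcard : (((N ×ˢ (N ×ˢ N)).card : ℝ)) = n^3 := by
    rw [Finset.card_product, Finset.card_product]
    push_cast
    rw [hNcard]; ring
  -- q and r in terms of M, R, n
  have hq : qKP K P = M / n := by
    unfold qKP
    split_ifs with h
    · rfl
    · have hz : (P - K).choose K = 0 := Nat.choose_eq_zero_of_lt (by omega)
      rw [hM_def]
      simp [hz]
  have hr : rKP K P = R / n := by
    unfold rKP
    split_ifs with h
    · rfl
    · have hz : (P - 2 * K).choose K = 0 := Nat.choose_eq_zero_of_lt (by omega)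
      rw [hR_def]
      simp [hz]
  rw [key, hcard, betaKP, hq, hr]
  field_simp
  ring
end

section
/- For positive integers K ≤ P, the inequality r(K,P) ≤ q(K,P)² holds, and consequently β(K,P) = (1−q)³ + q³ − q·r ≥ (1−q(K,P))³ > 0. -/
lemma choose_step (K n m : ℕ) (hn : n ≤ m) :
    n.choose K * (m+1).choose K ≤ (n+1).choose K * m.choose K := by
  rcases lt_or_ge n K with h | h
  · simp [Nat.choose_eq_zero_of_lt h]
  · have hm : K ≤ m := h.trans hn
    set u := n+1-K with hud
    set v := m+1-K with hvd
    have e1 : n.choose K * (u+K) = (n+1).choose K * u := by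
      have := Nat.choose_mul_succ_eq n K
      have hu : n+1 = u+K := by omega
      rw [← hu]; rw [this]
    have e2 : m.choose K * (v+K) = (m+1).choose K * v := by
      have := Nat.choose_mul_succ_eq m K
      have hv : m+1 = v+K := by omega
      rw [← hv]; rw [this]
    have key : n.choose K * (m+1).choose K * (u*v) ≤ (n+1).choose K * m.choose K * (u*v) := by
      calc n.choose K * (m+1).choose K * (u*v)
          = (n.choose K * u) * ((m+1).choose K * v) := by ring
        _ = (n.choose K * u) * (m.choose K * (v+K)) := by rw [e2]
        _ = (n.choose K * m.choose K) * (u*(v+K)) := by ring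
        _ ≤ (n.choose K * m.choose K) * ((u+K)*v) := by
            have h1 : u*K ≤ v*K := Nat.mul_le_mul_right K (by omega)
            exact Nat.mul_le_mul_left _ (by nlinarith)
        _ = (n.choose K * (u+K)) * (m.choose K * v) := by ring
        _ = ((n+1).choose K * u) * (m.choose K * v) := by rw [e1]
        _ = (n+1).choose K * m.choose K * (u*v) := by ring
    exact Nat.le_of_mul_le_mul_right key (Nat.mul_pos (by omega) (by omega))

lemma choose_logconcave (K n t : ℕ) :
    n.choose K * (n+2*t).choose K ≤ ((n+t).choose K)^2 := by
  induction t generalizing n with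
  | zero => simp [pow_two]
  | succ t ih =>
      have h1 : n.choose K * (n+2*(t+1)).choose K ≤ (n+1).choose K * (n+2*t+1).choose K := by
        have := choose_step K n (n+2*t+1) (by omega)
        have e : n+2*(t+1) = (n+2*t+1)+1 := by ring
        rw [e]; exact this
      have h2 : (n+1).choose K * ((n+1)+2*t).choose K ≤ (((n+1)+t).choose K)^2 := ih (n+1)
      have e2 : (n+1)+2*t = n+2*t+1 := by ring
      have e3 : (n+1)+t = n+(t+1) := by ring
      rw [e2, e3] at h2
      exact h1.trans h2

lemma choose_strict (K m : ℕ) (hK : 0 < K) (hKm : K ≤ m) :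
    m.choose K < (m+1).choose K := by
  obtain ⟨k, rfl⟩ := Nat.exists_eq_succ_of_ne_zero (Nat.pos_iff_ne_zero.mp hK)
  show m.choose (k+1) < (m+1).choose (k+1)
  have h : (m+1).choose (k+1) = m.choose k + m.choose (k+1) := Nat.choose_succ_succ m k
  have hpos : 0 < m.choose k := Nat.choose_pos (by omega)
  omega

theorem r_le_q_sq_and_beta_pos (K P : ℕ) (hK : 0 < K) (hKP : K ≤ P) :
    rKP K P ≤ (qKP K P) ^ 2 ∧
    (1 - qKP K P) ^ 3 ≤ betaKP K P ∧
    0 < (1 - qKP K P) ^ 3 := by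
  have hC : (0:ℝ) < P.choose K := by exact_mod_cast Nat.choose_pos hKP
  have hq0 : 0 ≤ qKP K P := by
    unfold qKP; split
    · positivity
    · exact le_refl 0
  have hq1 : qKP K P < 1 := by
    unfold qKP; split
    · rename_i h2
      rw [div_lt_one hC]
      have hlt : (P-K).choose K < ((P-K)+1).choose K := choose_strict K (P-K) hK (by omega)
      have hle : ((P-K)+1).choose K ≤ P.choose K := Nat.choose_le_choose K (by omega)
      exact_mod_cast hlt.trans_le hle
    · norm_num
  have hr : rKP K P ≤ (qKP K P)^2 := by
    unfold rKP
    split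
    · rename_i h3
      have h2 : 2*K ≤ P := by omega
      have hnat : (P-2*K).choose K * P.choose K ≤ ((P-K).choose K)^2 := by
        have := choose_logconcave K (P-2*K) K
        have e1 : P-2*K+2*K = P := by omega
        have e2 : P-2*K+K = P-K := by omega
        rw [e1, e2] at this
        exact this
      have hnatR : ((P-2*K).choose K : ℝ) * P.choose K ≤ ((P-K).choose K)^2 := by
        exact_mod_cast hnat
      unfold qKP
      rw [if_pos h2, div_pow, div_le_div_iff₀ hC (by positivity)]
      nlinarith
    · exact sq_nonneg _
  refine ⟨hr, ?_, ?_⟩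
  · unfold betaKP
    nlinarith [mul_le_mul_of_nonneg_left hr hq0]
  · have : 0 < 1 - qKP K P := by linarith
    positivity
end

section
/- For positive integers K ≤ P and n ≥ 3, the expected number of triangles in the random key graph K(n; K,P) equals C(n,3)·β(K,P), where β(K,P) = (1−q(K,P))³ + q(K,P)³ − q(K,P)·r(K,P). -/
open Finset

/-- Sample space of the random key graph: assignments of a `K`-subset of the key pool
`Fin P` to each of the `n` nodes (all equally likely). -/
def keySpace (n K P : ℕ) : Finset (Fin n → Finset (Fin P)) :=
  Fintype.piFinset (fun _ => Finset.univ.powersetCard K)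

/-- Number of (unlabelled) triangles in the key graph induced by the key assignment `f`:
unordered triples of nodes whose key rings pairwise intersect. -/
def numTriangles (n P : ℕ) (f : Fin n → Finset (Fin P)) : ℕ :=
  ((Finset.univ.powersetCard 3 : Finset (Finset (Fin n))).filter
    (fun s => ∀ i ∈ s, ∀ j ∈ s, i ≠ j → (f i ∩ f j).Nonempty)).card

section Aux



lemma count_disj {P K : ℕ} (x : Finset (Fin P)) (hx : x.card = K) :
    ((Finset.univ.powersetCard K : Finset (Finset (Fin P))).filter (fun y => x ∩ y = ∅)).card
      = (P - K).choose K := by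
  have h : (Finset.univ.powersetCard K : Finset (Finset (Fin P))).filter (fun y => x ∩ y = ∅)
      = xᶜ.powersetCard K := by
    ext y
    simp only [Finset.mem_filter, Finset.mem_powersetCard, Finset.subset_univ, true_and,
      ← Finset.disjoint_iff_inter_eq_empty, ← le_compl_iff_disjoint_left]
    tauto
  rw [h, Finset.card_powersetCard, Finset.card_compl, Fintype.card_fin, hx]

lemma count_disj2 {P K : ℕ} (x y : Finset (Fin P)) (hx : x.card = K) (hy : y.card = K)
    (hxy : x ∩ y = ∅) :
    ((Finset.univ.powersetCard K : Finset (Finset (Fin P))).filter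
        (fun z => x ∩ z = ∅ ∧ y ∩ z = ∅)).card = (P - 2 * K).choose K := by
  have h : (Finset.univ.powersetCard K : Finset (Finset (Fin P))).filter
        (fun z => x ∩ z = ∅ ∧ y ∩ z = ∅) = (x ∪ y)ᶜ.powersetCard K := by
    ext z
    simp only [Finset.mem_filter, Finset.mem_powersetCard, Finset.subset_univ, true_and,
      ← Finset.disjoint_iff_inter_eq_empty, ← le_compl_iff_disjoint_left,
      Finset.compl_union, Finset.le_iff_subset, Finset.subset_inter_iff]
    tauto
  rw [h, Finset.card_powersetCard, Finset.card_compl, Fintype.card_fin,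
    Finset.card_union_of_disjoint (Finset.disjoint_iff_inter_eq_empty.mpr hxy), hx, hy,
    two_mul]

variable {α : Type*} [DecidableEq α]

lemma fiber_card {n : ℕ} (a b c : Fin n) (hab : a ≠ b) (hac : a ≠ c) (hbc : b ≠ c)
    (A : Finset α) (x y z : α) (hx : x ∈ A) (hy : y ∈ A) (hz : z ∈ A) :
    ((Fintype.piFinset fun _ : Fin n => A).filter
      (fun f => (f a, f b, f c) = (x, y, z))).card = A.card ^ (n - 3) := by
  have hset : (Fintype.piFinset fun _ : Fin n => A).filter
      (fun f => (f a, f b, f c) = (x, y, z))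
      = Fintype.piFinset (fun i : Fin n =>
          if i = a then {x} else if i = b then {y} else if i = c then {z} else A) := by
    ext f
    simp only [Finset.mem_filter, Fintype.mem_piFinset, Prod.mk.injEq]
    constructor
    · rintro ⟨hf, h1, h2, h3⟩ i
      split_ifs with ha hb hc
      · subst ha; simp [h1]
      · subst hb; simp [h2]
      · subst hc; simp [h3]
      · exact hf i
    · intro h
      refine ⟨fun i => ?_, ?_, ?_, ?_⟩
      · have := h i
        split_ifs at this with ha hb hc
        · simp only [Finset.mem_singleton] at this; rw [this]; subst ha; exact hx
        · simp only [Finset.mem_singleton] at this; rw [this]; subst hb; exact hy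
        · simp only [Finset.mem_singleton] at this; rw [this]; subst hc; exact hz
        · exact this
      · have := h a; simpa using this
      · have := h b; rw [if_neg (Ne.symm hab)] at this; simpa using this
      · have := h c; rw [if_neg (Ne.symm hac), if_neg (Ne.symm hbc)] at this; simpa using this
  rw [hset, Fintype.card_piFinset]
  have hsub : ({a, b, c} : Finset (Fin n)) ⊆ Finset.univ := Finset.subset_univ _
  rw [← Finset.prod_sdiff hsub]
  have h1 : ∏ i ∈ ({a, b, c} : Finset (Fin n)),
      (if i = a then ({x} : Finset α) else if i = b then {y} else if i = c then {z} else A).card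
      = 1 := by
    rw [Finset.prod_insert (by simp [hab, hac]), Finset.prod_insert (by simp [hbc]),
      Finset.prod_singleton]
    simp [hab, hac, hbc, Ne.symm hab, Ne.symm hac, Ne.symm hbc]
  have h2 : ∏ i ∈ Finset.univ \ ({a, b, c} : Finset (Fin n)),
      (if i = a then ({x} : Finset α) else if i = b then {y} else if i = c then {z} else A).card
      = A.card ^ (n - 3) := by
    rw [Finset.prod_congr rfl (fun i hi => ?_), Finset.prod_const]
    · congr 1
      rw [Finset.card_sdiff_of_subset hsub, Finset.card_univ, Fintype.card_fin]
      congr 1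
      rw [Finset.card_insert_of_notMem (by simp [hab, hac]),
        Finset.card_insert_of_notMem (by simp [hbc]), Finset.card_singleton]
    · simp only [Finset.mem_sdiff, Finset.mem_insert, Finset.mem_singleton] at hi
      push_neg at hi
      rw [if_neg hi.2.1, if_neg hi.2.2.1, if_neg hi.2.2.2]
  rw [h1, h2, mul_one]

lemma marg {n : ℕ} (a b c : Fin n) (hab : a ≠ b) (hac : a ≠ c) (hbc : b ≠ c)
    (A : Finset α) (φ : α → α → α → ℝ) :
    ∑ f ∈ Fintype.piFinset (fun _ : Fin n => A), φ (f a) (f b) (f c)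
      = (A.card : ℝ) ^ (n - 3) * ∑ x ∈ A, ∑ y ∈ A, ∑ z ∈ A, φ x y z := by
  have hmaps : ∀ f ∈ Fintype.piFinset (fun _ : Fin n => A),
      (f a, f b, f c) ∈ A ×ˢ A ×ˢ A := by
    intro f hf
    simp only [Fintype.mem_piFinset] at hf
    simp [hf a, hf b, hf c]
  rw [← Finset.sum_fiberwise_of_maps_to hmaps (fun f => φ (f a) (f b) (f c))]
  rw [Finset.sum_product]
  simp only [Finset.sum_product]
  rw [Finset.mul_sum]
  refine Finset.sum_congr rfl fun x hx => ?_
  rw [Finset.mul_sum]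
  refine Finset.sum_congr rfl fun y hy => ?_
  rw [Finset.mul_sum]
  refine Finset.sum_congr rfl fun z hz => ?_
  have : ∀ f ∈ (Fintype.piFinset fun _ : Fin n => A).filter
      (fun f => (f a, f b, f c) = (x, y, z)), φ (f a) (f b) (f c) = φ x y z := by
    intro f hf
    simp only [Finset.mem_filter, Prod.mk.injEq] at hf
    rw [hf.2.1, hf.2.2.1, hf.2.2.2]
  rw [Finset.sum_congr rfl this, Finset.sum_const, fiber_card a b c hab hac hbc A x y z hx hy hz,
    nsmul_eq_mul, Nat.cast_pow, mul_comm]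


noncomputable def eD {P : ℕ} (x y : Finset (Fin P)) : ℝ := if x ∩ y = ∅ then 1 else 0

lemma triple_sum (K P : ℕ) :
    (∑ x ∈ (Finset.univ.powersetCard K : Finset (Finset (Fin P))),
     ∑ y ∈ (Finset.univ.powersetCard K : Finset (Finset (Fin P))),
     ∑ z ∈ (Finset.univ.powersetCard K : Finset (Finset (Fin P))),
       (if ((x ∩ y).Nonempty ∧ (x ∩ z).Nonempty ∧ (y ∩ z).Nonempty) then (1:ℝ) else 0))
    = (P.choose K : ℝ) ^ 3 - 3 * (P.choose K : ℝ) ^ 2 * ((P - K).choose K : ℝ)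
      + 3 * (P.choose K : ℝ) * ((P - K).choose K : ℝ) ^ 2
      - (P.choose K : ℝ) * ((P - K).choose K : ℝ) * ((P - 2 * K).choose K : ℝ) := by
  set A := (Finset.univ.powersetCard K : Finset (Finset (Fin P))) with hA
  set N : ℝ := (P.choose K : ℝ)
  set D : ℝ := ((P - K).choose K : ℝ)
  set R : ℝ := ((P - 2 * K).choose K : ℝ)
  have hcardA : (A.card : ℝ) = N := by
    rw [hA, Finset.card_powersetCard, Finset.card_univ, Fintype.card_fin]
  have hmem : ∀ x ∈ A, x.card = K := fun x hx => (Finset.mem_powersetCard.mp hx).2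
  -- basic sums of eD
  have E1 : ∀ x ∈ A, ∑ y ∈ A, eD x y = D := by
    intro x hx
    rw [show (fun y => eD x y) = fun y => if x ∩ y = ∅ then (1:ℝ) else 0 from rfl]
    rw [Finset.sum_boole, count_disj x (hmem x hx)]
  have E1' : ∀ z ∈ A, ∑ x ∈ A, eD x z = D := by
    intro z hz
    have : ∀ x, eD x z = eD z x := by intro x; simp [eD, Finset.inter_comm]
    simp_rw [this]
    exact E1 z hz
  have Emul : ∀ x y z : Finset (Fin P), eD x z * eD y z
      = if (x ∩ z = ∅ ∧ y ∩ z = ∅) then (1:ℝ) else 0 := by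
    intro x y z
    simp only [eD]
    split_ifs with h1 h2 h3 h4 h5 <;> simp_all
  have E2 : ∀ x ∈ A, ∀ y ∈ A, x ∩ y = ∅ → ∑ z ∈ A, eD x z * eD y z = R := by
    intro x hx y hy hxy
    simp_rw [Emul]
    rw [Finset.sum_boole, count_disj2 x y (hmem x hx) (hmem y hy) hxy]
  -- indicator as a product
  have hphi : ∀ x y z : Finset (Fin P),
      (if ((x ∩ y).Nonempty ∧ (x ∩ z).Nonempty ∧ (y ∩ z).Nonempty) then (1:ℝ) else 0)
        = (1 - eD x y) * (1 - eD x z) * (1 - eD y z) := by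
    intro x y z
    simp only [eD]
    by_cases h1 : x ∩ y = ∅ <;> by_cases h2 : x ∩ z = ∅ <;> by_cases h3 : y ∩ z = ∅ <;>
      simp [h1, h2, h3, Finset.nonempty_iff_ne_empty]
  simp_rw [hphi]
  -- inner z-sum
  have hz : ∀ x ∈ A, ∀ y ∈ A,
      ∑ z ∈ A, (1 - eD x y) * (1 - eD x z) * (1 - eD y z)
        = (1 - eD x y) * (N - 2 * D + ∑ z ∈ A, eD x z * eD y z) := by
    intro x hx y hy
    have step : ∑ z ∈ A, (1 - eD x y) * (1 - eD x z) * (1 - eD y z)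
        = (1 - eD x y) * ∑ z ∈ A, (1 - eD x z) * (1 - eD y z) := by
      rw [Finset.mul_sum]; exact Finset.sum_congr rfl fun z _ => by ring
    rw [step]
    congr 1
    have expand : ∀ z, (1 - eD x z) * (1 - eD y z)
        = 1 - eD x z - eD y z + eD x z * eD y z := by intro z; ring
    simp_rw [expand]
    rw [Finset.sum_add_distrib, Finset.sum_sub_distrib, Finset.sum_sub_distrib,
      Finset.sum_const, E1 x hx, E1 y hy, nsmul_eq_mul, mul_one, hcardA]
    ring
  rw [Finset.sum_congr rfl (fun x hx => Finset.sum_congr rfl (fun y hy => hz x hx y hy))]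
  -- now handle the y-sum for fixed x
  have hy : ∀ x ∈ A,
      ∑ y ∈ A, (1 - eD x y) * (N - 2 * D + ∑ z ∈ A, eD x z * eD y z)
        = N * (N - 2 * D) - (N - 2 * D) * D + D * D - D * R := by
    intro x hx
    have key : ∀ y ∈ A, (1 - eD x y) * (N - 2 * D + ∑ z ∈ A, eD x z * eD y z)
        = (N - 2 * D) - (N - 2 * D) * eD x y + (∑ z ∈ A, eD x z * eD y z) - eD x y * R := by
      intro y hy'
      by_cases h : x ∩ y = ∅
      · rw [E2 x hx y hy' h]
        simp only [eD, if_pos h]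
        ring
      · simp only [eD, if_neg h]
        ring
    rw [Finset.sum_congr rfl key]
    rw [Finset.sum_sub_distrib, Finset.sum_add_distrib, Finset.sum_sub_distrib,
      Finset.sum_const, ← Finset.mul_sum, ← Finset.sum_mul, E1 x hx, nsmul_eq_mul, hcardA]
    -- remaining: ∑ y ∈ A, ∑ z ∈ A, eD x z * eD y z = D * D
    have hG : ∑ y ∈ A, ∑ z ∈ A, eD x z * eD y z = D * D := by
      rw [Finset.sum_comm]
      have : ∀ z ∈ A, ∑ y ∈ A, eD x z * eD y z = eD x z * D := by
        intro z hz'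
        rw [← Finset.mul_sum, E1' z hz']
      rw [Finset.sum_congr rfl this, ← Finset.sum_mul, E1 x hx]
    rw [hG]
  rw [Finset.sum_congr rfl hy, Finset.sum_const, nsmul_eq_mul, hcardA]
  ring

end Aux

theorem expected_number_of_triangles (n K P : ℕ) (hn : 3 ≤ n) (hK : 0 < K) (hKP : K ≤ P) :
    (∑ f ∈ keySpace n K P, (numTriangles n P f : ℝ)) / ((keySpace n K P).card : ℝ)
      = (n.choose 3 : ℝ) * betaKP K P := by
  set A := (Finset.univ.powersetCard K : Finset (Finset (Fin P))) with hAdef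
  have hcardA : A.card = P.choose K := by
    rw [hAdef, Finset.card_powersetCard, Finset.card_univ, Fintype.card_fin]
  have hNpos : 0 < P.choose K := Nat.choose_pos hKP
  have hN : ((P.choose K : ℝ)) ≠ 0 := by positivity
  -- q and r without the guards
  have hq : qKP K P = ((P - K).choose K : ℝ) / (P.choose K) := by
    rw [qKP]
    split_ifs with h
    · rfl
    · rw [Nat.choose_eq_zero_of_lt (by omega)]
      simp
  have hr : rKP K P = ((P - 2 * K).choose K : ℝ) / (P.choose K) := by
    rw [rKP]
    split_ifs with h
    · rfl
    · rw [Nat.choose_eq_zero_of_lt (by omega)]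
      simp
  -- card of key space
  have hcardKS : ((keySpace n K P).card : ℝ) = (P.choose K : ℝ) ^ n := by
    rw [keySpace, Fintype.card_piFinset]
    push_cast
    simp [hcardA]
  -- numTriangles as a sum of indicators
  have hnum : ∀ f : Fin n → Finset (Fin P), (numTriangles n P f : ℝ)
      = ∑ s ∈ (Finset.univ.powersetCard 3 : Finset (Finset (Fin n))),
          (if (∀ i ∈ s, ∀ j ∈ s, i ≠ j → (f i ∩ f j).Nonempty) then (1:ℝ) else 0) := by
    intro f
    rw [numTriangles, Finset.card_filter]
    push_cast
    exact Finset.sum_congr rfl fun s _ => by split_ifs <;> simp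
  simp_rw [hnum]
  rw [Finset.sum_comm]
  -- per-triple computation
  have hper : ∀ s ∈ (Finset.univ.powersetCard 3 : Finset (Finset (Fin n))),
      ∑ f ∈ keySpace n K P,
        (if (∀ i ∈ s, ∀ j ∈ s, i ≠ j → (f i ∩ f j).Nonempty) then (1:ℝ) else 0)
      = (P.choose K : ℝ) ^ (n - 3) *
        ∑ x ∈ A, ∑ y ∈ A, ∑ z ∈ A,
          (if ((x ∩ y).Nonempty ∧ (x ∩ z).Nonempty ∧ (y ∩ z).Nonempty) then (1:ℝ) else 0) := by
    intro s hs
    have hs3 : s.card = 3 := (Finset.mem_powersetCard.mp hs).2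
    obtain ⟨a, b, c, hab, hac, hbc, rfl⟩ := Finset.card_eq_three.mp hs3
    have hiff : ∀ f : Fin n → Finset (Fin P),
        (∀ i ∈ ({a,b,c} : Finset (Fin n)), ∀ j ∈ ({a,b,c} : Finset (Fin n)),
          i ≠ j → (f i ∩ f j).Nonempty)
        ↔ ((f a ∩ f b).Nonempty ∧ (f a ∩ f c).Nonempty ∧ (f b ∩ f c).Nonempty) := by
      intro f
      constructor
      · intro h
        exact ⟨h a (by simp) b (by simp) hab, h a (by simp) c (by simp) hac,
          h b (by simp) c (by simp) hbc⟩
      · rintro ⟨h1, h2, h3⟩ i hi j hj hij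
        simp only [Finset.mem_insert, Finset.mem_singleton] at hi hj
        rcases hi with rfl | rfl | rfl <;> rcases hj with rfl | rfl | rfl <;>
          first
            | exact absurd rfl hij
            | assumption
            | (rw [Finset.inter_comm]; assumption)
    have hre : ∀ f : Fin n → Finset (Fin P),
        (if (∀ i ∈ ({a,b,c} : Finset (Fin n)), ∀ j ∈ ({a,b,c} : Finset (Fin n)),
            i ≠ j → (f i ∩ f j).Nonempty) then (1:ℝ) else 0)
        = (if ((f a ∩ f b).Nonempty ∧ (f a ∩ f c).Nonempty ∧ (f b ∩ f c).Nonempty)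
            then (1:ℝ) else 0) := by
      intro f; simp only [hiff]
    rw [Finset.sum_congr rfl (fun f _ => hre f)]
    rw [keySpace]
    rw [marg a b c hab hac hbc A
      (fun x y z => if ((x ∩ y).Nonempty ∧ (x ∩ z).Nonempty ∧ (y ∩ z).Nonempty)
        then (1:ℝ) else 0), hcardA]
  rw [Finset.sum_congr rfl hper, Finset.sum_const, nsmul_eq_mul]
  rw [Finset.card_powersetCard, Finset.card_univ, Fintype.card_fin]
  rw [triple_sum, hcardKS]
  rw [betaKP, hq, hr]
  have hpow : (P.choose K : ℝ) ^ n = (P.choose K : ℝ) ^ (n - 3) * (P.choose K : ℝ) ^ 3 := by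
    rw [← pow_add]
    congr 1
    omega
  rw [hpow]
  field_simp
  ring
end

section
/- Let K, P : ℕ → ℕ be sequences with K_n ≤ P_n. Then lim_{n→∞} q(K_n,P_n) = 1 if and only if lim_{n→∞} K_n²/P_n = 0, and under either condition 1 − q(K_n,P_n) is asymptotically equivalent to K_n²/P_n (their ratio tends to 1). -/
open Filter Finset

lemma qKP_eq_prod {K P : ℕ} (h : 2 * K ≤ P) :
    qKP K P = ∏ i ∈ Finset.range K, (1 - (K : ℝ) / ((P : ℝ) - i)) := by
  have hKP : K ≤ P := by omega
  rw [qKP, if_pos h]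
  have h1 : (K.factorial : ℝ) * (P - K).choose K = ((P - K).descFactorial K : ℝ) := by
    rw [Nat.descFactorial_eq_factorial_mul_choose]; push_cast; ring
  have h2 : (K.factorial : ℝ) * P.choose K = (P.descFactorial K : ℝ) := by
    rw [Nat.descFactorial_eq_factorial_mul_choose]; push_cast; ring
  have hfac : (K.factorial : ℝ) ≠ 0 := by positivity
  have hchoose : (P.choose K : ℝ) ≠ 0 := by
    have := Nat.choose_pos hKP; positivity
  have key : ((P - K).choose K : ℝ) / (P.choose K)
      = ((P - K).descFactorial K : ℝ) / (P.descFactorial K : ℝ) := by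
    rw [← h1, ← h2, mul_div_mul_left _ _ hfac]
  rw [key, Nat.descFactorial_eq_prod_range, Nat.descFactorial_eq_prod_range]
  push_cast
  rw [← Finset.prod_div_distrib]
  refine Finset.prod_congr rfl (fun i hi => ?_)
  have hi' : i < K := Finset.mem_range.mp hi
  have h3 : K + i ≤ P := by omega
  have h4 : i ≤ P := by omega
  have hd : (P : ℝ) - i ≠ 0 := by
    have : (i : ℝ) < P := by exact_mod_cast lt_of_lt_of_le (by omega : i < P) le_rfl
    linarith
  have e1 : P - K - i = P - (K + i) := by omega
  rw [e1, Nat.cast_sub h3, Nat.cast_sub h4]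
  push_cast
  field_simp
  ring

lemma aux_pow_le (x : ℝ) (hx0 : 0 ≤ x) (hx1 : x ≤ 1) (n : ℕ) :
    (1 - x) ^ n ≤ 1 / (1 + n * x) := by
  have hpos : (0:ℝ) < 1 + n * x := by positivity
  rw [le_div_iff₀ hpos]
  have b1 : 1 + (n:ℝ) * x ≤ (1 + x) ^ n := one_add_mul_le_pow (by linarith) n
  calc (1-x)^n * (1+n*x) ≤ (1-x)^n * (1+x)^n :=
        mul_le_mul_of_nonneg_left b1 (pow_nonneg (by linarith) n)
    _ = (1 - x^2)^n := by rw [← mul_pow]; ring_nf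
    _ ≤ 1 := pow_le_one₀ (by nlinarith) (by nlinarith)

lemma qKP_nonneg (K P : ℕ) : 0 ≤ qKP K P := by
  unfold qKP; split
  · positivity
  · exact le_refl 0

lemma qKP_le_one (K P : ℕ) : qKP K P ≤ 1 := by
  unfold qKP; split
  · next h =>
    have hKP : K ≤ P := by omega
    have h1 : (0:ℝ) < P.choose K := by exact_mod_cast Nat.choose_pos hKP
    rw [div_le_one h1]
    exact_mod_cast Nat.choose_le_choose K (Nat.sub_le P K)
  · norm_num

lemma qKP_le {K P : ℕ} (h : 2 * K ≤ P) (hP : 0 < P) :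
    qKP K P ≤ 1 / (1 + (K:ℝ)^2 / P) := by
  have hPr : (0:ℝ) < P := by exact_mod_cast hP
  have hstep : ∀ i ∈ Finset.range K, (0:ℝ) ≤ 1 - (K:ℝ)/((P:ℝ) - i) ∧
      1 - (K:ℝ)/((P:ℝ) - i) ≤ 1 - (K:ℝ)/P := by
    intro i hi
    have hi' : i < K := Finset.mem_range.mp hi
    have hK2 : (K:ℝ) + (i:ℝ) + 1 ≤ (P:ℝ) - (K:ℝ) + (i:ℝ) + 1 := by
      have : (K:ℝ) ≤ (P:ℝ) - K := by
        have : (2*K:ℕ) ≤ P := h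
        have : ((2*K:ℕ):ℝ) ≤ P := by exact_mod_cast this
        push_cast at this; linarith
      linarith
    have hdi : (0:ℝ) < (P:ℝ) - i := by
      have : (i:ℝ) + 1 ≤ K := by exact_mod_cast hi'
      have : ((2*K:ℕ):ℝ) ≤ P := by exact_mod_cast h
      push_cast at this; linarith
    constructor
    · have hKlt : (K:ℝ) ≤ (P:ℝ) - i := by
        have : ((2*K:ℕ):ℝ) ≤ P := by exact_mod_cast h
        have hiK : (i:ℝ) ≤ (K:ℝ) - 1 := by
          have : (i:ℝ) + 1 ≤ K := by exact_mod_cast hi'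
          linarith
        push_cast at this; linarith
      have := div_le_one_of_le₀ hKlt (le_of_lt hdi)
      linarith
    · have hle : (P:ℝ) - i ≤ P := by
        have : (0:ℝ) ≤ i := by positivity
        linarith
      have := div_le_div_of_nonneg_left (by positivity : (0:ℝ) ≤ (K:ℝ)) hdi hle
      linarith
  have hx0 : (0:ℝ) ≤ (K:ℝ)/P := by positivity
  have hx1 : (K:ℝ)/P ≤ 1 := by
    rw [div_le_one hPr]; exact_mod_cast (by omega : K ≤ P)
  calc qKP K P = ∏ i ∈ Finset.range K, (1 - (K:ℝ)/((P:ℝ) - i)) := qKP_eq_prod h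
    _ ≤ ∏ _i ∈ Finset.range K, (1 - (K:ℝ)/P) :=
        Finset.prod_le_prod (fun i hi => (hstep i hi).1) (fun i hi => (hstep i hi).2)
    _ = (1 - (K:ℝ)/P) ^ K := by rw [Finset.prod_const, Finset.card_range]
    _ ≤ 1 / (1 + K * ((K:ℝ)/P)) := aux_pow_le _ hx0 hx1 K
    _ = 1 / (1 + (K:ℝ)^2 / P) := by rw [mul_div_assoc']; ring_nf

lemma qKP_ge {K P : ℕ} (h : 2 * K ≤ P) :
    1 - (K:ℝ)^2 / ((P:ℝ) - K + 1) ≤ qKP K P := by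
  have hc : ((2*K:ℕ):ℝ) ≤ P := by exact_mod_cast h
  have hc' : 2*(K:ℝ) ≤ P := by push_cast at hc; linarith
  set x : ℝ := (K:ℝ) / ((P:ℝ) - K + 1) with hx
  have hden : (0:ℝ) < (P:ℝ) - K + 1 := by linarith
  have hx0 : 0 ≤ x := by positivity
  have hx1 : x ≤ 1 := by
    rw [hx, div_le_one hden]; linarith
  have hstep : ∀ i ∈ Finset.range K, (0:ℝ) ≤ 1 - x ∧
      1 - x ≤ 1 - (K:ℝ)/((P:ℝ) - i) := by
    intro i hi
    have hi' : (i:ℝ) + 1 ≤ K := by exact_mod_cast Finset.mem_range.mp hi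
    have hdi : (0:ℝ) < (P:ℝ) - i := by linarith
    refine ⟨by linarith, ?_⟩
    have hle : (P:ℝ) - i ≤ (P:ℝ) - K + 1 → False → True := fun _ _ => trivial
    have : (P:ℝ) - K + 1 ≤ (P:ℝ) - i := by linarith
    have := div_le_div_of_nonneg_left (by positivity : (0:ℝ) ≤ (K:ℝ)) hden this
    linarith
  have hprod : (1 - x) ^ K ≤ qKP K P := by
    rw [qKP_eq_prod h]
    calc (1 - x) ^ K = ∏ _i ∈ Finset.range K, (1 - x) := by
          rw [Finset.prod_const, Finset.card_range]
      _ ≤ ∏ i ∈ Finset.range K, (1 - (K:ℝ)/((P:ℝ) - i)) :=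
          Finset.prod_le_prod (fun i hi => (hstep i hi).1) (fun i hi => (hstep i hi).2)
  have hbern : 1 - (K:ℝ) * x ≤ (1 - x) ^ K := by
    have := one_add_mul_le_pow (a := -x) (by linarith) K
    rw [← sub_eq_add_neg] at this; linarith
  have hKx : (K:ℝ) * x = (K:ℝ)^2 / ((P:ℝ) - K + 1) := by
    rw [hx, mul_div_assoc']; ring_nf
  linarith [hKx ▸ hbern, hprod]

lemma aux_div (a b : ℝ) (ha : a ≠ 0) : (a / b) / a = 1 / b := by
  rw [div_div, mul_comm, div_mul_cancel_left₀ ha, one_div]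

theorem q_to_one_iff_and_asymptotics (K P : ℕ → ℕ)
    (hK : ∀ n, 0 < K n) (hKP : ∀ n, K n ≤ P n) :
    (Tendsto (fun n => qKP (K n) (P n)) atTop (nhds 1) ↔
      Tendsto (fun n => ((K n : ℝ) ^ 2) / (P n : ℝ)) atTop (nhds 0))
    ∧
    (Tendsto (fun n => ((K n : ℝ) ^ 2) / (P n : ℝ)) atTop (nhds 0) →
      Tendsto (fun n => (1 - qKP (K n) (P n)) / (((K n : ℝ) ^ 2) / (P n : ℝ)))
        atTop (nhds 1)) := by
  set r : ℕ → ℝ := fun n => ((K n : ℝ) ^ 2) / (P n : ℝ) with hrdef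
  have hP : ∀ n, (0:ℝ) < P n := fun n => by
    exact_mod_cast lt_of_lt_of_le (hK n) (hKP n)
  have hK1 : ∀ n, (1:ℝ) ≤ K n := fun n => by exact_mod_cast hK n
  have hr0 : ∀ n, 0 < r n := fun n => by
    have := hP n; have := hK1 n
    simp only [hrdef]; positivity
  have hKsq : ∀ n, (K n:ℝ) ≤ (K n:ℝ)^2 := fun n => by nlinarith [hK1 n]
  have hreq : ∀ n, (K n:ℝ)^2 = r n * P n := fun n => by
    simp only [hrdef]; rw [div_mul_cancel₀ _ (hP n).ne']
  have hhalf : ∀ n, r n < 1/2 → 2 * K n ≤ P n := by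
    intro n hn
    have h1 := hreq n
    have h2 : 2*(K n:ℝ) ≤ (P n:ℝ) := by
      nlinarith [hKsq n, hP n, mul_pos (by linarith : (0:ℝ) < 1 - 2 * r n) (hP n)]
    exact_mod_cast h2
  have hchain : ∀ n, r n < 1/2 → 1 - qKP (K n) (P n) ≤ r n / (1 - r n) := by
    intro n hn
    have h2 := hhalf n hn
    have hge := qKP_ge h2
    have h1 := hreq n
    have hd1 : (0:ℝ) < (1 - r n) * P n := mul_pos (by linarith) (hP n)
    have hd2 : (1 - r n) * (P n:ℝ) ≤ (P n:ℝ) - K n + 1 := by nlinarith [hKsq n]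
    have hdd := div_le_div_of_nonneg_left (sq_nonneg (K n:ℝ)) hd1 hd2
    have heq : (K n:ℝ)^2 / ((1 - r n) * P n) = r n / (1 - r n) := by
      rw [h1, mul_comm (r n) ((P n:ℝ)), mul_comm (1 - r n) ((P n:ℝ)),
        mul_div_mul_left _ _ (hP n).ne']
    rw [heq] at hdd
    linarith
  have hlow : ∀ n, 2 * K n ≤ P n → r n / (1 + r n) ≤ 1 - qKP (K n) (P n) := by
    intro n h2
    have hle := qKP_le h2 (lt_of_lt_of_le (hK n) (hKP n))
    have hpos : (0:ℝ) < 1 + r n := by linarith [hr0 n]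
    have hid : 1 - 1/(1 + r n) = r n / (1 + r n) := by field_simp; ring
    simp only [hrdef] at hle ⊢
    simp only [hrdef] at hid
    linarith
  have fwd : Tendsto (fun n => qKP (K n) (P n)) atTop (nhds 1) →
      Tendsto r atTop (nhds 0) := by
    intro hq1
    have hev2 : ∀ᶠ n in atTop, 2 * K n ≤ P n := by
      have h12 : ∀ᶠ n in atTop, (1:ℝ)/2 < qKP (K n) (P n) :=
        hq1.eventually_const_lt (by norm_num)
      filter_upwards [h12] with n hn
      by_contra hc
      rw [qKP, if_neg hc] at hn; norm_num at hn
    have h1q : Tendsto (fun n => 1 - qKP (K n) (P n)) atTop (nhds 0) := by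
      simpa using (tendsto_const_nhds (x := (1:ℝ))).sub hq1
    have hs : Tendsto (fun n => r n / (1 + r n)) atTop (nhds 0) := by
      refine tendsto_of_tendsto_of_tendsto_of_le_of_le' tendsto_const_nhds h1q ?_ ?_
      · exact Eventually.of_forall fun n => by
          have := hr0 n; positivity
      · filter_upwards [hev2] with n hn using hlow n hn
    have hid : ∀ n, r n = (r n/(1+r n)) / (1 - r n/(1+r n)) := by
      intro n
      have h := hr0 n
      have hpos : (0:ℝ) < 1 + r n := by linarith
      field_simp
      ring
    have hlim : Tendsto (fun n => (r n/(1+r n)) / (1 - r n/(1+r n))) atTop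
        (nhds ((0:ℝ)/(1-0))) := hs.div (tendsto_const_nhds.sub hs) (by norm_num)
    have := hlim.congr (fun n => (hid n).symm)
    simpa using this
  have bwd : Tendsto r atTop (nhds 0) →
      Tendsto (fun n => qKP (K n) (P n)) atTop (nhds 1) := by
    intro hr1
    have hev : ∀ᶠ n in atTop, r n < 1/2 := hr1.eventually_lt_const (by norm_num)
    have hlower : Tendsto (fun n => 1 - r n / (1 - r n)) atTop (nhds 1) := by
      have : Tendsto (fun n => 1 - r n / (1 - r n)) atTop (nhds (1 - 0/(1-0))) :=
        tendsto_const_nhds.sub (hr1.div (tendsto_const_nhds.sub hr1) (by norm_num))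
      simpa using this
    refine tendsto_of_tendsto_of_tendsto_of_le_of_le' hlower tendsto_const_nhds ?_
      (Eventually.of_forall fun n => qKP_le_one _ _)
    filter_upwards [hev] with n hn
    linarith [hchain n hn]
  refine ⟨⟨fwd, bwd⟩, ?_⟩
  intro hr1
  have hev : ∀ᶠ n in atTop, r n < 1/2 := hr1.eventually_lt_const (by norm_num)
  have hupperlim : Tendsto (fun n => 1 / (1 - r n)) atTop (nhds 1) := by
    have : Tendsto (fun n => (1:ℝ) / (1 - r n)) atTop (nhds (1/(1-0))) :=
      tendsto_const_nhds.div (tendsto_const_nhds.sub hr1) (by norm_num)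
    simpa using this
  have hlowerlim : Tendsto (fun n => 1 / (1 + r n)) atTop (nhds 1) := by
    have : Tendsto (fun n => (1:ℝ) / (1 + r n)) atTop (nhds (1/(1+0))) :=
      tendsto_const_nhds.div (tendsto_const_nhds.add hr1) (by norm_num)
    simpa using this
  refine tendsto_of_tendsto_of_tendsto_of_le_of_le' hlowerlim hupperlim ?_ ?_
  · filter_upwards [hev] with n hn
    have h2 := hhalf n hn
    have hl := hlow n h2
    have hrp := hr0 n
    have hpos : (0:ℝ) < 1 + r n := by linarith
    have : (r n / (1 + r n)) / r n ≤ (1 - qKP (K n) (P n)) / r n := by gcongr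
    have heq : (r n / (1 + r n)) / r n = 1 / (1 + r n) := aux_div _ _ hrp.ne'
    rw [heq] at this
    exact this
  · filter_upwards [hev] with n hn
    have hc := hchain n hn
    have hrp := hr0 n
    have hq0 := qKP_le_one (K n) (P n)
    have : (1 - qKP (K n) (P n)) / r n ≤ (r n / (1 - r n)) / r n := by gcongr
    have heq : (r n / (1 - r n)) / r n = 1 / (1 - r n) := aux_div _ _ hrp.ne'
    rw [heq] at this
    exact this
end

section
/- Let K, P : ℕ → ℕ be sequences with K_n ≤ P_n and K_n²/P_n → 0. Then β(K_n,P_n) is asymptotically equivalent to τ(K_n,P_n) := K_n³/P_n² + (K_n²/P_n)³, i.e., their ratio tends to 1. -/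
open Filter

/-- `τ(K,P) = K³/P² + (K²/P)³`. -/
noncomputable def tauKP (K P : ℕ) : ℝ :=
  (K : ℝ) ^ 3 / (P : ℝ) ^ 2 + ((K : ℝ) ^ 2 / (P : ℝ)) ^ 3

open Finset in
lemma aux_W1 (n : ℕ) (t : ℕ → ℝ) (h0 : ∀ i ∈ range n, 0 ≤ t i)
    (h1 : ∀ i ∈ range n, t i ≤ 1) :
    1 - ∑ i ∈ range n, t i ≤ ∏ i ∈ range n, (1 - t i) := by
  induction n with
  | zero => simp
  | succ m ih =>
    rw [prod_range_succ, sum_range_succ]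
    have hm := ih (fun i hi => h0 i (mem_range.2 ((mem_range.1 hi).trans (Nat.lt_succ_self m))))
      (fun i hi => h1 i (mem_range.2 ((mem_range.1 hi).trans (Nat.lt_succ_self m))))
    have hS : 0 ≤ ∑ i ∈ range m, t i :=
      sum_nonneg (fun i hi => h0 i (mem_range.2 ((mem_range.1 hi).trans (Nat.lt_succ_self m))))
    have h0m := h0 m (self_mem_range_succ m)
    have h1m := h1 m (self_mem_range_succ m)
    have hP1 : ∏ i ∈ range m, (1 - t i) ≤ 1 :=
      prod_le_one (fun i hi => by
          linarith [h0 i (mem_range.2 ((mem_range.1 hi).trans (Nat.lt_succ_self m))),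
            h1 i (mem_range.2 ((mem_range.1 hi).trans (Nat.lt_succ_self m)))])
        (fun i hi => by
          linarith [h0 i (mem_range.2 ((mem_range.1 hi).trans (Nat.lt_succ_self m)))])
    nlinarith

open Finset in
lemma aux_W2 (n : ℕ) (t : ℕ → ℝ) (h0 : ∀ i ∈ range n, 0 ≤ t i) :
    1 + ∑ i ∈ range n, t i ≤ ∏ i ∈ range n, (1 + t i) := by
  induction n with
  | zero => simp
  | succ m ih =>
    rw [prod_range_succ, sum_range_succ]
    have hm := ih (fun i hi => h0 i (mem_range.2 ((mem_range.1 hi).trans (Nat.lt_succ_self m))))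
    have hS : 0 ≤ ∑ i ∈ range m, t i :=
      sum_nonneg (fun i hi => h0 i (mem_range.2 ((mem_range.1 hi).trans (Nat.lt_succ_self m))))
    have h0m := h0 m (self_mem_range_succ m)
    nlinarith

open Finset in
lemma aux_choose_ratio (k p m : ℕ) :
    ((m.choose k : ℝ)) / (p.choose k : ℝ)
      = (∏ i ∈ range k, ((m - i : ℕ) : ℝ)) / (∏ i ∈ range k, ((p - i : ℕ) : ℝ)) := by
  have h1 : (m.descFactorial k : ℝ) = k.factorial * m.choose k := by
    exact_mod_cast congrArg Nat.cast (Nat.descFactorial_eq_factorial_mul_choose m k)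
  have h2 : (p.descFactorial k : ℝ) = k.factorial * p.choose k := by
    exact_mod_cast congrArg Nat.cast (Nat.descFactorial_eq_factorial_mul_choose p k)
  have h3 : ((∏ i ∈ range k, (m - i) : ℕ) : ℝ) = ∏ i ∈ range k, ((m - i : ℕ) : ℝ) := by
    push_cast; ring
  have h4 : ((∏ i ∈ range k, (p - i) : ℕ) : ℝ) = ∏ i ∈ range k, ((p - i : ℕ) : ℝ) := by
    push_cast; ring
  rw [← h3, ← h4, ← Nat.descFactorial_eq_prod_range, ← Nat.descFactorial_eq_prod_range, h1, h2]
  have hf : (k.factorial : ℝ) ≠ 0 := by exact_mod_cast k.factorial_ne_zero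
  rw [mul_div_mul_left _ _ hf]

/-! Small arithmetic helper lemmas, kept standalone so that `nlinarith` works in a
tiny context. -/

lemma help_pm (t : ℝ) (h0 : 0 ≤ t) (h1 : t ≤ 1) :
    0 ≤ (1 - t) * (1 + t) ∧ (1 - t) * (1 + t) ≤ 1 :=
  ⟨by nlinarith, by nlinarith⟩

lemma help_a (Kr Pr : ℝ) (hK1 : 1 ≤ Kr) (hP10 : 10 * Kr ^ 2 ≤ Pr) :
    Kr ^ 2 / (Pr - Kr) ≤ 2 * (Kr ^ 2 / Pr) := by
  have h1 : Kr ≤ Kr ^ 2 := by nlinarith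
  have h2 : 0 < Pr := by nlinarith
  have h3 : 0 < Pr - Kr := by nlinarith
  rw [div_le_iff₀ h3]
  have : 2 * (Kr ^ 2 / Pr) * (Pr - Kr) = 2 * Kr ^ 2 * (Pr - Kr) / Pr := by ring
  rw [this, le_div_iff₀ h2]
  nlinarith

lemma help_b (Kr Pr : ℝ) (hK1 : 1 ≤ Kr) (hP10 : 10 * Kr ^ 2 ≤ Pr) :
    Kr ^ 2 / (Pr - 2 * Kr) ≤ 2 * (Kr ^ 2 / Pr) := by
  have h1 : Kr ≤ Kr ^ 2 := by nlinarith
  have h2 : 0 < Pr := by nlinarith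
  have h3 : 0 < Pr - 2 * Kr := by nlinarith
  rw [div_le_iff₀ h3]
  have : 2 * (Kr ^ 2 / Pr) * (Pr - 2 * Kr) = 2 * Kr ^ 2 * (Pr - 2 * Kr) / Pr := by ring
  rw [this, le_div_iff₀ h2]
  nlinarith

lemma help_c (Kr Pr : ℝ) (hK1 : 1 ≤ Kr) (hP10 : 10 * Kr ^ 2 ≤ Pr) :
    Kr ^ 2 / (Pr - Kr) ≤ (Kr ^ 2 / Pr) * (1 + 2 * (Kr ^ 2 / Pr)) := by
  have h1 : Kr ≤ Kr ^ 2 := by nlinarith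
  have h2 : 0 < Pr := by nlinarith
  have h3 : 0 < Pr - Kr := by nlinarith
  rw [div_le_iff₀ h3]
  have heq : Kr ^ 2 / Pr * (1 + 2 * (Kr ^ 2 / Pr)) * (Pr - Kr)
      = Kr ^ 2 * (Pr + 2 * Kr ^ 2) * (Pr - Kr) / Pr ^ 2 := by
    field_simp
  rw [heq, le_div_iff₀ (by positivity)]
  have h5 : (0:ℝ) ≤ Kr ^ 2 * Pr * (Kr ^ 2 - Kr) :=
    mul_nonneg (mul_nonneg (sq_nonneg Kr) h2.le) (by linarith)
  have h6 : (0:ℝ) ≤ Kr ^ 2 * Kr ^ 2 * (Pr - 2 * Kr) :=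
    mul_nonneg (mul_nonneg (sq_nonneg Kr) (sq_nonneg Kr)) (by linarith)
  nlinarith [h5, h6]

lemma help_S_small (Kr Pr : ℝ) (hK1 : 1 ≤ Kr) (hP10 : 10 * Kr ^ 2 ≤ Pr) :
    Kr ^ 3 / ((Pr - Kr) * (Pr - 3 * Kr)) ≤ 1 / 63 := by
  have h1 : Kr ≤ Kr ^ 2 := by nlinarith
  have h3 : 9 * Kr ^ 2 ≤ Pr - Kr := by nlinarith
  have h4 : 7 * Kr ^ 2 ≤ Pr - 3 * Kr := by nlinarith
  have h5 : (0:ℝ) < 9 * Kr ^ 2 := by positivity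
  have h6 : (0:ℝ) < 7 * Kr ^ 2 := by positivity
  have hden : (0:ℝ) < (Pr - Kr) * (Pr - 3 * Kr) := by nlinarith
  rw [div_le_div_iff₀ hden (by norm_num)]
  have key : 9 * Kr ^ 2 * (7 * Kr ^ 2) ≤ (Pr - Kr) * (Pr - 3 * Kr) :=
    mul_le_mul h3 h4 (by positivity) (by linarith)
  have h7 : (0:ℝ) ≤ Kr ^ 3 * (Kr - 1) :=
    mul_nonneg (pow_nonneg (by linarith) 3) (by linarith)
  nlinarith [key, h7]

lemma help_SK (Kr Pr : ℝ) (hK1 : 1 ≤ Kr) (hP10 : 10 * Kr ^ 2 ≤ Pr) :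
    Kr ^ 2 / ((Pr - Kr) * (Pr - 3 * Kr)) ≤ 1 := by
  have h1 : Kr ≤ Kr ^ 2 := by nlinarith
  have h3 : 9 * Kr ^ 2 ≤ Pr - Kr := by nlinarith
  have h4 : 7 * Kr ^ 2 ≤ Pr - 3 * Kr := by nlinarith
  have hden : (0:ℝ) < (Pr - Kr) * (Pr - 3 * Kr) := by nlinarith
  rw [div_le_one hden]
  have key : 9 * Kr ^ 2 * (7 * Kr ^ 2) ≤ (Pr - Kr) * (Pr - 3 * Kr) :=
    mul_le_mul h3 h4 (by positivity) (by linarith)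
  have h7 : (0:ℝ) ≤ Kr ^ 2 * (Kr ^ 2 - 1) :=
    mul_nonneg (sq_nonneg Kr) (by linarith)
  nlinarith [key, h7]

lemma help_S_yx (Kr Pr : ℝ) (hK1 : 1 ≤ Kr) (hP10 : 10 * Kr ^ 2 ≤ Pr) :
    Kr ^ 3 / ((Pr - Kr) * (Pr - 3 * Kr))
      ≤ (Kr ^ 3 / Pr ^ 2) * (1 + 7 * (Kr ^ 2 / Pr)) := by
  have h1 : Kr ≤ Kr ^ 2 := by nlinarith
  have h2 : 0 < Pr := by nlinarith
  have h3 : 9 * Kr ^ 2 ≤ Pr - Kr := by nlinarith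
  have h4 : 7 * Kr ^ 2 ≤ Pr - 3 * Kr := by nlinarith
  have hden : (0:ℝ) < (Pr - Kr) * (Pr - 3 * Kr) := by nlinarith
  rw [div_le_iff₀ hden]
  have heq : Kr ^ 3 / Pr ^ 2 * (1 + 7 * (Kr ^ 2 / Pr)) * ((Pr - Kr) * (Pr - 3 * Kr))
      = Kr ^ 3 * ((Pr + 7 * Kr ^ 2) * ((Pr - Kr) * (Pr - 3 * Kr))) / Pr ^ 3 := by
    field_simp
  rw [heq, le_div_iff₀ (by positivity)]
  have hKpos : (0:ℝ) < Kr := lt_of_lt_of_le one_pos hK1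
  have hK3 : (0:ℝ) < Kr ^ 3 := by positivity
  -- reduce to: Pr^3 ≤ (Pr + 7Kr²)(Pr - Kr)(Pr - 3Kr)
  have key : Pr ^ 3 ≤ (Pr + 7 * Kr ^ 2) * ((Pr - Kr) * (Pr - 3 * Kr)) := by
    have e1 : (Pr - Kr) * (Pr - 3 * Kr) ≥ (Pr - Kr ^ 2) * (Pr - 3 * Kr ^ 2) := by
      nlinarith
    have e2 : Pr ^ 3 ≤ (Pr + 7 * Kr ^ 2) * ((Pr - Kr ^ 2) * (Pr - 3 * Kr ^ 2)) := by
      have t1 : (0:ℝ) ≤ Kr ^ 2 * Pr * (Pr - 10 * Kr ^ 2) :=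
        mul_nonneg (mul_nonneg (sq_nonneg Kr) h2.le) (by linarith)
      have t2 : (0:ℝ) ≤ Kr ^ 2 * Kr ^ 2 * (Pr - 10 * Kr ^ 2) :=
        mul_nonneg (mul_nonneg (sq_nonneg Kr) (sq_nonneg Kr)) (by linarith)
      have t3 : (0:ℝ) ≤ Kr ^ 2 * Kr ^ 2 * Kr ^ 2 :=
        mul_nonneg (mul_nonneg (sq_nonneg Kr) (sq_nonneg Kr)) (sq_nonneg Kr)
      nlinarith [t1, t2, t3]
    nlinarith [sq_nonneg Kr]
  nlinarith [mul_le_mul_of_nonneg_left key (le_of_lt hK3)]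

lemma help_eps_lo (q x : ℝ) (hx : 0 < x) (h : q * (1 + x) ≤ 1) :
    x / (1 + x) ≤ 1 - q := by
  have h1 : (0:ℝ) < 1 + x := by linarith
  rw [div_le_iff₀ h1]
  nlinarith

lemma help_E1_hi (E S x y : ℝ) (hx : 0 < x) (hx10 : x ≤ 1 / 10) (hy : 0 < y)
    (hyx : y ≤ x ^ 2) (hE : 1 ≤ E) (hES : E * (1 - S) ≤ 1) (hS0 : 0 ≤ S)
    (hS63 : S ≤ 1 / 63) (hSy : S ≤ y * (1 + 7 * x)) :
    E - 1 ≤ y * (1 + 8 * x) := by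
  have h2 : (0:ℝ) < 1 - S := by linarith
  have h1 : E - 1 ≤ S / (1 - S) := by
    rw [le_div_iff₀ h2]; nlinarith
  have h3 : S / (1 - S) ≤ S * (1 + 2 * S) := by
    rw [div_le_iff₀ h2]
    nlinarith [mul_nonneg (mul_nonneg hS0 hS0) (by linarith : (0:ℝ) ≤ 1 - 2 * S)]
  have h4 : S * (1 + 2 * S) ≤ y * (1 + 7 * x) * (1 + 2 * S) := by nlinarith
  have h5 : y * (1 + 7 * x) * (1 + 2 * S) ≤ y * (1 + 8 * x) := by
    have hSx : S ≤ 2 * x ^ 2 := by nlinarith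
    nlinarith [mul_pos hx hx, mul_pos hy hx]
  linarith

lemma help_final (x y ε q q' E : ℝ) (hx : 0 < x) (hx10 : x ≤ 1 / 10) (hy : 0 < y)
    (hε1 : x / (1 + x) ≤ ε) (hε2 : ε ≤ x * (1 + 2 * x))
    (hq : 1 - 2 * x ≤ q) (hq1 : q ≤ 1) (hq' : 1 - 2 * x ≤ q') (hq'1 : q' ≤ 1)
    (hE1 : y ≤ E - 1) (hE2 : E - 1 ≤ y * (1 + 8 * x)) :
    (y + x ^ 3) * (1 - 10 * x) ≤ ε ^ 3 + q ^ 2 * q' * (E - 1) ∧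
      ε ^ 3 + q ^ 2 * q' * (E - 1) ≤ (y + x ^ 3) * (1 + 10 * x) := by
  have hεnn : 0 ≤ ε := le_trans (by positivity) hε1
  have hqq'1 : q ^ 2 * q' ≤ 1 := by nlinarith
  have h08 : (0:ℝ) ≤ 1 - 2 * x := by linarith
  have hqq'lo : 1 - 6 * x ≤ q ^ 2 * q' := by
    have s1 : (1 - 2 * x) ^ 2 ≤ q ^ 2 := by nlinarith
    have s2 : (1 - 2 * x) ^ 2 * (1 - 2 * x) ≤ q ^ 2 * q' :=
      mul_le_mul s1 hq' h08 (sq_nonneg q)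
    nlinarith [mul_nonneg (mul_nonneg hx.le hx.le) hx.le, mul_nonneg hx.le hx.le]
  have hE1nn : 0 ≤ E - 1 := by linarith
  have hmid_lo : y * (1 - 6 * x) ≤ q ^ 2 * q' * (E - 1) := by nlinarith
  have hmid_hi : q ^ 2 * q' * (E - 1) ≤ y * (1 + 8 * x) := by nlinarith
  have hcube_lo : x ^ 3 * (1 - 3 * x) ≤ ε ^ 3 := by
    have h1 : (0:ℝ) < 1 + x := by linarith
    have h2 : (x / (1 + x)) ^ 3 ≤ ε ^ 3 := pow_le_pow_left₀ (by positivity) hε1 3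
    have h3 : x ^ 3 * (1 - 3 * x) ≤ (x / (1 + x)) ^ 3 := by
      rw [div_pow, le_div_iff₀ (by positivity)]
      have h4 : (1 - 3 * x) * (1 + x) ^ 3 ≤ 1 := by
        nlinarith [sq_nonneg x, pow_nonneg hx.le 3, pow_nonneg hx.le 4,
          mul_nonneg (mul_nonneg hx.le hx.le) hx.le,
          mul_nonneg (mul_nonneg (mul_nonneg hx.le hx.le) hx.le) hx.le]
      calc x ^ 3 * (1 - 3 * x) * (1 + x) ^ 3 = x ^ 3 * ((1 - 3 * x) * (1 + x) ^ 3) := by ring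
        _ ≤ x ^ 3 * 1 := mul_le_mul_of_nonneg_left h4 (pow_nonneg hx.le 3)
        _ = x ^ 3 := by ring
    linarith
  have hcube_hi : ε ^ 3 ≤ x ^ 3 * (1 + 10 * x) := by
    have h2 : ε ^ 3 ≤ (x * (1 + 2 * x)) ^ 3 := pow_le_pow_left₀ hεnn hε2 3
    have h3 : (x * (1 + 2 * x)) ^ 3 ≤ x ^ 3 * (1 + 10 * x) := by
      have hxx : x ^ 2 ≤ x / 10 := by nlinarith
      have hxxx : x ^ 3 ≤ x / 100 := by nlinarith [mul_le_mul_of_nonneg_left hxx hx.le]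
      have h5 : (1 + 2 * x) ^ 3 ≤ 1 + 10 * x := by nlinarith
      calc (x * (1 + 2 * x)) ^ 3 = x ^ 3 * (1 + 2 * x) ^ 3 := by ring
        _ ≤ x ^ 3 * (1 + 10 * x) := mul_le_mul_of_nonneg_left h5 (pow_nonneg hx.le 3)
    linarith
  have t1 : 0 ≤ x * y := mul_nonneg hx.le hy.le
  have t2 : (0:ℝ) ≤ x ^ 4 := by positivity
  constructor
  · linarith [t1, t2, hcube_lo, hmid_lo]
  · linarith [t1, t2, hcube_hi, hmid_hi]

open Finset in
set_option maxHeartbeats 1000000 in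
lemma beta_bounds (k p : ℕ) (hk : 1 ≤ k) (hp : 10 * k ^ 2 ≤ p) :
    tauKP k p * (1 - 10 * ((k : ℝ) ^ 2 / p)) ≤ betaKP k p ∧
      betaKP k p ≤ tauKP k p * (1 + 10 * ((k : ℝ) ^ 2 / p)) := by
  set Kr : ℝ := (k : ℝ) with hKr
  set Pr : ℝ := (p : ℝ) with hPr
  have hK1 : (1 : ℝ) ≤ Kr := by rw [hKr]; exact_mod_cast hk
  have hP10 : 10 * Kr ^ 2 ≤ Pr := by rw [hKr, hPr]; exact_mod_cast hp
  have hKsq : Kr ≤ Kr ^ 2 := by nlinarith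
  have hPpos : (0 : ℝ) < Pr := by nlinarith
  have hPK : 9 * Kr ^ 2 ≤ Pr - Kr := by nlinarith
  have hP2K : 8 * Kr ^ 2 ≤ Pr - 2 * Kr := by nlinarith
  have hP3K : 7 * Kr ^ 2 ≤ Pr - 3 * Kr := by nlinarith
  have hK2_1 : (1:ℝ) ≤ Kr ^ 2 := le_trans hK1 hKsq
  set x : ℝ := Kr ^ 2 / Pr with hx
  set y : ℝ := Kr ^ 3 / Pr ^ 2 with hy
  have hxpos : 0 < x := by rw [hx]; positivity
  have hx10 : x ≤ 1 / 10 := by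
    rw [hx, div_le_div_iff₀ hPpos (by norm_num)]; linarith
  have hypos : 0 < y := by rw [hy]; positivity
  have hyx : y ≤ x ^ 2 := by
    rw [hy, hx, div_pow, div_le_div_iff₀ (by positivity) (by positivity)]
    nlinarith [mul_nonneg (mul_nonneg (pow_nonneg (by positivity : (0:ℝ) ≤ Kr) 3)
      (sq_nonneg Pr)) (by linarith : (0:ℝ) ≤ Kr - 1)]
  -- nat inequalities
  have h2k : 2 * k ≤ p := by nlinarith
  have h3k : 3 * k ≤ p := by nlinarith
  -- real factor functions
  set a : ℕ → ℝ := fun i => Pr - Kr - i with ha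
  set b : ℕ → ℝ := fun i => Pr - i with hb
  set c : ℕ → ℝ := fun i => Pr - 2 * Kr - i with hc
  have hIb : ∀ i ∈ range k, Pr - Kr ≤ b i ∧ b i ≤ Pr := by
    intro i hi
    have hiK : (i : ℝ) ≤ Kr := by
      rw [hKr]; exact_mod_cast (mem_range.1 hi).le
    have hi0 : (0 : ℝ) ≤ (i : ℝ) := Nat.cast_nonneg i
    exact ⟨by simp only [hb]; linarith, by simp only [hb]; linarith⟩
  have hIa : ∀ i ∈ range k, Pr - 2 * Kr ≤ a i ∧ a i ≤ Pr - Kr := by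
    intro i hi
    have hiK : (i : ℝ) ≤ Kr := by
      rw [hKr]; exact_mod_cast (mem_range.1 hi).le
    have hi0 : (0 : ℝ) ≤ (i : ℝ) := Nat.cast_nonneg i
    exact ⟨by simp only [ha]; linarith, by simp only [ha]; linarith⟩
  have hIc : ∀ i ∈ range k, Pr - 3 * Kr ≤ c i ∧ c i ≤ Pr - 2 * Kr := by
    intro i hi
    have hiK : (i : ℝ) ≤ Kr := by
      rw [hKr]; exact_mod_cast (mem_range.1 hi).le
    have hi0 : (0 : ℝ) ≤ (i : ℝ) := Nat.cast_nonneg i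
    exact ⟨by simp only [hc]; linarith, by simp only [hc]; linarith⟩
  have hbpos : ∀ i ∈ range k, 0 < b i := fun i hi => by linarith [(hIb i hi).1]
  have hapos : ∀ i ∈ range k, 0 < a i := fun i hi => by linarith [(hIa i hi).1]
  have hcpos : ∀ i ∈ range k, 0 < c i := fun i hi => by linarith [(hIc i hi).1]
  -- product representations
  have hq_eq : qKP k p = ∏ i ∈ range k, (a i / b i) := by
    rw [qKP, if_pos h2k, aux_choose_ratio, ← prod_div_distrib]
    refine prod_congr rfl fun i hi => ?_
    have hik : i < k := mem_range.1 hi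
    have h1 : k + i ≤ p := by omega
    have h2 : i ≤ p := by omega
    congr 1
    · rw [Nat.sub_sub]
      rw [Nat.cast_sub h1]
      push_cast [ha]; ring
    · rw [Nat.cast_sub h2]
  have hr_eq : rKP k p = ∏ i ∈ range k, (c i / b i) := by
    rw [rKP, if_pos h3k, aux_choose_ratio, ← prod_div_distrib]
    refine prod_congr rfl fun i hi => ?_
    have hik : i < k := mem_range.1 hi
    have h1 : 2 * k + i ≤ p := by omega
    have h2 : i ≤ p := by omega
    congr 1
    · rw [Nat.sub_sub]
      rw [Nat.cast_sub h1]
      push_cast [hc]; ring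
    · rw [Nat.cast_sub h2]
  set q : ℝ := qKP k p with hqdef
  set q' : ℝ := ∏ i ∈ range k, (c i / a i) with hq'def
  set E : ℝ := ∏ i ∈ range k, ((a i) ^ 2 / (b i * c i)) with hEdef
  -- identities
  have hrq : rKP k p = q * q' := by
    rw [hr_eq, hq_eq, ← prod_mul_distrib]
    refine prod_congr rfl fun i hi => ?_
    have h1 := (hapos i hi).ne'
    have h2 := (hbpos i hi).ne'
    field_simp
  have hq2 : q ^ 2 = q * q' * E := by
    rw [hq_eq, ← prod_mul_distrib, ← prod_mul_distrib, ← prod_pow]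
    refine prod_congr rfl fun i hi => ?_
    have h1 := (hapos i hi).ne'
    have h2 := (hbpos i hi).ne'
    have h3 := (hcpos i hi).ne'
    field_simp
  -- q as product of (1 - t i)
  have hq_prod : q = ∏ i ∈ range k, (1 - Kr / b i) := by
    rw [hq_eq]
    refine prod_congr rfl fun i hi => ?_
    have h2 := (hbpos i hi).ne'
    have : a i = b i - Kr := by simp only [ha, hb]; ring
    rw [this]; field_simp
  have hq'_prod : q' = ∏ i ∈ range k, (1 - Kr / a i) := by
    rw [hq'def]
    refine prod_congr rfl fun i hi => ?_
    have h1 := (hapos i hi).ne'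
    have : c i = a i - Kr := by simp only [ha, hc]; ring
    rw [this]; field_simp
  have hE_prod : E = ∏ i ∈ range k, (1 + Kr ^ 2 / (b i * c i)) := by
    rw [hEdef]
    refine prod_congr rfl fun i hi => ?_
    have h2 := (hbpos i hi).ne'
    have h3 := (hcpos i hi).ne'
    have key : (a i) ^ 2 = b i * c i + Kr ^ 2 := by simp only [ha, hb, hc]; ring
    rw [key]; field_simp
  -- bounds on t i = Kr / b i
  have hKpos : (0:ℝ) < Kr := lt_of_lt_of_le one_pos hK1
  have ht_bounds : ∀ i ∈ range k, Kr / Pr ≤ Kr / b i ∧ Kr / b i ≤ Kr / (Pr - Kr) := by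
    intro i hi
    obtain ⟨h1, h2⟩ := hIb i hi
    have hbp := hbpos i hi
    exact ⟨div_le_div_of_nonneg_left (by linarith) hbp h2,
      div_le_div_of_nonneg_left (by linarith) (by linarith) h1⟩
  have htK : Kr / (Pr - Kr) ≤ 1 := by
    rw [div_le_one (by linarith)]; linarith
  have ht_nonneg : ∀ i ∈ range k, 0 ≤ Kr / b i := fun i hi =>
    le_trans (by positivity) (ht_bounds i hi).1
  have ht_le1 : ∀ i ∈ range k, Kr / b i ≤ 1 := fun i hi =>
    le_trans (ht_bounds i hi).2 htK
  -- sum bounds for t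
  have hsum_t_hi : ∑ i ∈ range k, Kr / b i ≤ Kr ^ 2 / (Pr - Kr) := by
    calc ∑ i ∈ range k, Kr / b i ≤ ∑ _i ∈ range k, Kr / (Pr - Kr) :=
          sum_le_sum fun i hi => (ht_bounds i hi).2
      _ = Kr * (Kr / (Pr - Kr)) := by
          rw [sum_const, card_range, nsmul_eq_mul, hKr]
      _ = Kr ^ 2 / (Pr - Kr) := by ring
  have hsum_t_lo : x ≤ ∑ i ∈ range k, Kr / b i := by
    calc x = Kr * (Kr / Pr) := by rw [hx]; ring
      _ = ∑ _i ∈ range k, Kr / Pr := by rw [sum_const, card_range, nsmul_eq_mul, hKr]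
      _ ≤ ∑ i ∈ range k, Kr / b i := sum_le_sum fun i hi => (ht_bounds i hi).1
  -- q bounds
  have hq_nonneg : 0 ≤ q := by
    rw [hq_prod]
    exact prod_nonneg fun i hi => by linarith [ht_le1 i hi]
  have hq_le1 : q ≤ 1 := by
    rw [hq_prod]
    exact prod_le_one (fun i hi => by linarith [ht_le1 i hi])
      (fun i hi => by linarith [ht_nonneg i hi])
  have hq_lo : 1 - Kr ^ 2 / (Pr - Kr) ≤ q := by
    rw [hq_prod]
    calc 1 - Kr ^ 2 / (Pr - Kr) ≤ 1 - ∑ i ∈ range k, Kr / b i := by linarith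
      _ ≤ ∏ i ∈ range k, (1 - Kr / b i) := aux_W1 k _ ht_nonneg ht_le1
  have hq_hi : q * (1 + x) ≤ 1 := by
    have hQ : 1 + x ≤ ∏ i ∈ range k, (1 + Kr / b i) := by
      calc 1 + x ≤ 1 + ∑ i ∈ range k, Kr / b i := by linarith
        _ ≤ _ := aux_W2 k _ ht_nonneg
    have hprod : q * ∏ i ∈ range k, (1 + Kr / b i) ≤ 1 := by
      rw [hq_prod, ← prod_mul_distrib]
      exact prod_le_one
        (fun i hi => (help_pm _ (ht_nonneg i hi) (ht_le1 i hi)).1)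
        (fun i hi => (help_pm _ (ht_nonneg i hi) (ht_le1 i hi)).2)
    calc q * (1 + x) ≤ q * ∏ i ∈ range k, (1 + Kr / b i) :=
          mul_le_mul_of_nonneg_left hQ hq_nonneg
      _ ≤ 1 := hprod
  -- bounds on s i = Kr / a i
  have hs_bounds : ∀ i ∈ range k, 0 ≤ Kr / a i ∧ Kr / a i ≤ Kr / (Pr - 2 * Kr) := by
    intro i hi
    obtain ⟨h1, _⟩ := hIa i hi
    have hap := hapos i hi
    exact ⟨by positivity, div_le_div_of_nonneg_left (by linarith) (by linarith) h1⟩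
  have hsK : Kr / (Pr - 2 * Kr) ≤ 1 := by
    rw [div_le_one (by linarith)]; linarith
  have hq'_nonneg : 0 ≤ q' := by
    rw [hq'_prod]
    exact prod_nonneg fun i hi => by linarith [(hs_bounds i hi).2, hsK]
  have hq'_le1 : q' ≤ 1 := by
    rw [hq'_prod]
    exact prod_le_one (fun i hi => by linarith [(hs_bounds i hi).2, hsK])
      (fun i hi => by linarith [(hs_bounds i hi).1])
  have hq'_lo : 1 - Kr ^ 2 / (Pr - 2 * Kr) ≤ q' := by
    rw [hq'_prod]
    have hsum : ∑ i ∈ range k, Kr / a i ≤ Kr ^ 2 / (Pr - 2 * Kr) := by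
      calc ∑ i ∈ range k, Kr / a i ≤ ∑ _i ∈ range k, Kr / (Pr - 2 * Kr) :=
            sum_le_sum fun i hi => (hs_bounds i hi).2
        _ = Kr * (Kr / (Pr - 2 * Kr)) := by rw [sum_const, card_range, nsmul_eq_mul, hKr]
        _ = Kr ^ 2 / (Pr - 2 * Kr) := by ring
    calc 1 - Kr ^ 2 / (Pr - 2 * Kr) ≤ 1 - ∑ i ∈ range k, Kr / a i := by linarith
      _ ≤ _ := aux_W1 k _ (fun i hi => (hs_bounds i hi).1)
          (fun i hi => le_trans (hs_bounds i hi).2 hsK)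
  -- bounds on d i = Kr^2 / (b i * c i)
  set S : ℝ := Kr ^ 3 / ((Pr - Kr) * (Pr - 3 * Kr)) with hS
  have hden2 : (0:ℝ) < (Pr - Kr) * (Pr - 3 * Kr) :=
    mul_pos (by linarith) (by linarith)
  have hd_bounds : ∀ i ∈ range k,
      Kr ^ 2 / Pr ^ 2 ≤ Kr ^ 2 / (b i * c i) ∧
        Kr ^ 2 / (b i * c i) ≤ Kr ^ 2 / ((Pr - Kr) * (Pr - 3 * Kr)) := by
    intro i hi
    obtain ⟨hb1, hb2⟩ := hIb i hi
    obtain ⟨hc1, hc2⟩ := hIc i hi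
    have hbp := hbpos i hi
    have hcp := hcpos i hi
    have hbc_hi : b i * c i ≤ Pr ^ 2 := by
      calc b i * c i ≤ Pr * Pr :=
            mul_le_mul hb2 (by linarith) (le_of_lt hcp) (by linarith)
        _ = Pr ^ 2 := by ring
    have hbc_lo : (Pr - Kr) * (Pr - 3 * Kr) ≤ b i * c i :=
      mul_le_mul hb1 hc1 (by linarith) (le_of_lt hbp)
    exact ⟨div_le_div_of_nonneg_left (by positivity) (by positivity) hbc_hi,
      div_le_div_of_nonneg_left (by positivity) hden2 hbc_lo⟩
  have hSpos : 0 < S := by rw [hS]; positivity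
  have hS_small : S ≤ 1 / 63 := by rw [hS]; exact help_S_small Kr Pr hK1 hP10
  have hSK_le : Kr ^ 2 / ((Pr - Kr) * (Pr - 3 * Kr)) ≤ 1 := help_SK Kr Pr hK1 hP10
  have hd_nonneg : ∀ i ∈ range k, 0 ≤ Kr ^ 2 / (b i * c i) := fun i hi =>
    le_trans (by positivity) (hd_bounds i hi).1
  have hd_le1 : ∀ i ∈ range k, Kr ^ 2 / (b i * c i) ≤ 1 := fun i hi =>
    le_trans (hd_bounds i hi).2 hSK_le
  have hsum_d_hi : ∑ i ∈ range k, Kr ^ 2 / (b i * c i) ≤ S := by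
    calc ∑ i ∈ range k, Kr ^ 2 / (b i * c i)
        ≤ ∑ _i ∈ range k, Kr ^ 2 / ((Pr - Kr) * (Pr - 3 * Kr)) :=
          sum_le_sum fun i hi => (hd_bounds i hi).2
      _ = Kr * (Kr ^ 2 / ((Pr - Kr) * (Pr - 3 * Kr))) := by
          rw [sum_const, card_range, nsmul_eq_mul, hKr]
      _ = S := by rw [hS]; field_simp
  have hsum_d_lo : y ≤ ∑ i ∈ range k, Kr ^ 2 / (b i * c i) := by
    calc y = Kr * (Kr ^ 2 / Pr ^ 2) := by rw [hy]; ring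
      _ = ∑ _i ∈ range k, Kr ^ 2 / Pr ^ 2 := by rw [sum_const, card_range, nsmul_eq_mul, hKr]
      _ ≤ _ := sum_le_sum fun i hi => (hd_bounds i hi).1
  have hE_lo : 1 + y ≤ E := by
    rw [hE_prod]
    calc 1 + y ≤ 1 + ∑ i ∈ range k, Kr ^ 2 / (b i * c i) := by linarith
      _ ≤ _ := aux_W2 k _ hd_nonneg
  have hE_hi : E * (1 - S) ≤ 1 := by
    have hE_nonneg : 0 ≤ E := by
      rw [hE_prod]
      exact prod_nonneg fun i hi => by linarith [hd_nonneg i hi]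
    have hW : 1 - S ≤ ∏ i ∈ range k, (1 - Kr ^ 2 / (b i * c i)) := by
      calc 1 - S ≤ 1 - ∑ i ∈ range k, Kr ^ 2 / (b i * c i) := by linarith
        _ ≤ _ := aux_W1 k _ hd_nonneg hd_le1
    have hprod : E * ∏ i ∈ range k, (1 - Kr ^ 2 / (b i * c i)) ≤ 1 := by
      rw [hE_prod, ← prod_mul_distrib]
      refine prod_le_one (fun i hi => ?_) (fun i hi => ?_)
      · rw [mul_comm]
        exact (help_pm _ (hd_nonneg i hi) (hd_le1 i hi)).1
      · rw [mul_comm]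
        exact (help_pm _ (hd_nonneg i hi) (hd_le1 i hi)).2
    calc E * (1 - S) ≤ E * ∏ i ∈ range k, (1 - Kr ^ 2 / (b i * c i)) :=
          mul_le_mul_of_nonneg_left hW hE_nonneg
      _ ≤ 1 := hprod
  -- translate to x,y-bounds using the helpers
  have hq_lo' : 1 - 2 * x ≤ q := by
    have := help_a Kr Pr hK1 hP10
    rw [← hx] at this
    linarith
  have hq'_lo' : 1 - 2 * x ≤ q' := by
    have := help_b Kr Pr hK1 hP10
    rw [← hx] at this
    linarith
  have hε_lo : x / (1 + x) ≤ 1 - q := help_eps_lo q x hxpos hq_hi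
  have hε_hi : 1 - q ≤ x * (1 + 2 * x) := by
    have := help_c Kr Pr hK1 hP10
    rw [← hx] at this
    linarith
  have hE1_hi : E - 1 ≤ y * (1 + 8 * x) := by
    refine help_E1_hi E S x y hxpos hx10 hypos hyx (by linarith) hE_hi
      (le_of_lt hSpos) hS_small ?_
    have := help_S_yx Kr Pr hK1 hP10
    rw [← hx, ← hy, ← hS] at this
    exact this
  -- beta decomposition
  have hbeta : betaKP k p = (1 - q) ^ 3 + q ^ 2 * q' * (E - 1) := by
    have hqq : qKP k p = q := hqdef.symm
    simp only [betaKP, hqq, hrq]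
    linear_combination q * hq2
  have htau : tauKP k p = y + x ^ 3 := by
    simp only [tauKP, hy, hx, hKr, hPr]
  rw [hbeta, htau]
  exact help_final x y (1 - q) q q' E hxpos hx10 hypos hε_lo hε_hi hq_lo' hq_le1
    hq'_lo' hq'_le1 (by linarith) hE1_hi

theorem beta_asymptotically_tau (K P : ℕ → ℕ)
    (hK : ∀ n, 0 < K n) (hKP : ∀ n, K n ≤ P n)
    (hlim : Tendsto (fun n => ((K n : ℝ) ^ 2) / (P n : ℝ)) atTop (nhds 0)) :
    Tendsto (fun n => betaKP (K n) (P n) / tauKP (K n) (P n)) atTop (nhds 1) := by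
  set x : ℕ → ℝ := fun n => ((K n : ℝ) ^ 2) / (P n : ℝ) with hxdef
  have hev : ∀ᶠ n in atTop, 10 * (K n) ^ 2 ≤ P n := by
    filter_upwards [hlim.eventually (eventually_le_nhds (by norm_num : (0:ℝ) < 1/10))] with n hn
    have hPpos : 0 < P n := lt_of_lt_of_le (hK n) (hKP n)
    have hPq : (0:ℝ) < (P n : ℝ) := by exact_mod_cast hPpos
    have : (10 : ℝ) * (K n : ℝ) ^ 2 ≤ (P n : ℝ) := by
      have := (div_le_iff₀ hPq).1 hn
      linarith
    exact_mod_cast this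
  have hbounds : ∀ᶠ n in atTop,
      1 - 10 * x n ≤ betaKP (K n) (P n) / tauKP (K n) (P n) ∧
        betaKP (K n) (P n) / tauKP (K n) (P n) ≤ 1 + 10 * x n := by
    filter_upwards [hev] with n hn
    obtain ⟨h1, h2⟩ := beta_bounds (K n) (P n) (hK n) hn
    have hPpos : (0:ℝ) < (P n : ℝ) := by
      exact_mod_cast lt_of_lt_of_le (hK n) (hKP n)
    have hKpos : (0:ℝ) < (K n : ℝ) := by exact_mod_cast hK n
    have htaupos : 0 < tauKP (K n) (P n) := by
      rw [tauKP]; positivity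
    constructor
    · rw [le_div_iff₀ htaupos]
      calc (1 - 10 * x n) * tauKP (K n) (P n) = tauKP (K n) (P n) * (1 - 10 * x n) := by ring
        _ ≤ _ := h1
    · rw [div_le_iff₀ htaupos]
      calc betaKP (K n) (P n) ≤ tauKP (K n) (P n) * (1 + 10 * x n) := h2
        _ = (1 + 10 * x n) * tauKP (K n) (P n) := by ring
  have hlow : Tendsto (fun n => 1 - 10 * x n) atTop (nhds 1) := by
    have h : Tendsto (fun n => 10 * x n) atTop (nhds 0) := by
      simpa using hlim.const_mul (10:ℝ)
    simpa using tendsto_const_nhds.sub h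
  have hhigh : Tendsto (fun n => 1 + 10 * x n) atTop (nhds 1) := by
    have h : Tendsto (fun n => 10 * x n) atTop (nhds 0) := by
      simpa using hlim.const_mul (10:ℝ)
    simpa using tendsto_const_nhds.add h
  exact tendsto_of_tendsto_of_tendsto_of_le_of_le' hlow hhigh
    (hbounds.mono fun n h => h.1) (hbounds.mono fun n h => h.2)
end

section
/- Let K, P : ℕ → ℕ with K_n ≤ P_n, K_n²/P_n → 0, and 3K_n ≤ P_n eventually. Then 1 − r(K_n,P_n)/q(K_n,P_n)² is asymptotically equivalent to K_n³/P_n². -/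
open Filter

open Finset in
lemma aux_cast_dF (n k : ℕ) (h : k ≤ n) :
    (n.descFactorial k : ℝ) = ∏ i ∈ range k, ((n : ℝ) - i) := by
  rw [Nat.descFactorial_eq_prod_range, Nat.cast_prod]
  refine Finset.prod_congr rfl fun i hi => ?_
  rw [Nat.cast_sub]
  simp at hi; omega

lemma aux_choose_cast_dF (n k : ℕ) :
    (n.choose k : ℝ) = (n.descFactorial k : ℝ) / (k.factorial : ℝ) := by
  rw [eq_div_iff (by positivity)]
  rw [← Nat.cast_mul, mul_comm, ← Nat.descFactorial_eq_factorial_mul_choose]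

open Finset in
lemma aux_key_identity (k p : ℕ) (hk : 0 < k) (h3 : 3 * k ≤ p) :
    rKP k p / (qKP k p) ^ 2
      = ∏ i ∈ range k, (1 - (k : ℝ) ^ 2 / ((p : ℝ) - k - i) ^ 2) := by
  have h2 : 2 * k ≤ p := by omega
  have hq : qKP k p = (((p - k).descFactorial k : ℝ)) / ((p.descFactorial k : ℝ)) := by
    rw [qKP, if_pos h2, aux_choose_cast_dF, aux_choose_cast_dF]
    have hf : (k.factorial : ℝ) ≠ 0 := by positivity
    field_simp
  have hr : rKP k p = (((p - 2 * k).descFactorial k : ℝ)) / ((p.descFactorial k : ℝ)) := by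
    rw [rKP, if_pos h3, aux_choose_cast_dF, aux_choose_cast_dF]
    have hf : (k.factorial : ℝ) ≠ 0 := by positivity
    field_simp
  have hpos : ∀ i ∈ range k, (0 : ℝ) < (p : ℝ) - k - i := by
    intro i hi; simp only [mem_range] at hi
    have : (i : ℝ) < k := by exact_mod_cast hi
    have : (2 * k : ℝ) ≤ p := by exact_mod_cast h2
    push_cast at *; linarith
  have hA : (0 : ℝ) < ∏ i ∈ range k, ((p : ℝ) - i) := by
    apply Finset.prod_pos; intro i hi
    have : (0:ℝ) ≤ k := by positivity
    linarith [hpos i hi]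
  have hB : (0 : ℝ) < ∏ i ∈ range k, ((p : ℝ) - k - i) := Finset.prod_pos hpos
  rw [hq, hr, aux_cast_dF p k (by omega), aux_cast_dF (p - k) k (by omega),
    aux_cast_dF (p - 2 * k) k (by omega)]
  have e1 : ∀ i ∈ range k, ((↑(p - k) : ℝ) - i) = (p : ℝ) - k - i := by
    intro i hi; rw [Nat.cast_sub (by omega)]
  have e2 : ∀ i ∈ range k, ((↑(p - 2 * k) : ℝ) - i) = (p : ℝ) - 2 * k - i := by
    intro i hi; rw [Nat.cast_sub (by omega)]; push_cast; ring
  rw [Finset.prod_congr rfl e1, Finset.prod_congr rfl e2]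
  have step : (∏ x ∈ range k, ((p:ℝ) - 2 * k - x)) / (∏ i ∈ range k, ((p:ℝ) - i)) /
      ((∏ x ∈ range k, ((p:ℝ) - k - x)) / (∏ i ∈ range k, ((p:ℝ) - i))) ^ 2
      = ((∏ x ∈ range k, ((p:ℝ) - 2 * k - x)) * ∏ i ∈ range k, ((p:ℝ) - i)) /
        (∏ x ∈ range k, ((p:ℝ) - k - x)) ^ 2 := by
    rw [div_pow]
    field_simp
  rw [step, ← Finset.prod_pow, ← Finset.prod_mul_distrib, ← Finset.prod_div_distrib]
  refine Finset.prod_congr rfl fun i hi => ?_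
  have hb := hpos i hi
  field_simp
  ring

open Finset in
lemma aux_weier (s : Finset ℕ) (f : ℕ → ℝ) (h0 : ∀ i ∈ s, 0 ≤ f i) (h1 : ∀ i ∈ s, f i ≤ 1) :
    1 - ∑ i ∈ s, f i ≤ ∏ i ∈ s, (1 - f i) := by
  induction s using Finset.induction with
  | empty => simp
  | insert _ _ hx ih =>
    rename_i a s
    rw [Finset.sum_insert hx, Finset.prod_insert hx]
    have h0' : ∀ i ∈ s, 0 ≤ f i := fun i hi => h0 i (mem_insert_of_mem hi)
    have h1' : ∀ i ∈ s, f i ≤ 1 := fun i hi => h1 i (mem_insert_of_mem hi)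
    have ihh := ih h0' h1'
    have ha0 := h0 a (mem_insert_self a s)
    have ha1 := h1 a (mem_insert_self a s)
    have hs0 : 0 ≤ ∑ i ∈ s, f i := Finset.sum_nonneg h0'
    nlinarith

open Finset in
lemma aux_prod_le_exp (s : Finset ℕ) (f : ℕ → ℝ) (h1 : ∀ i ∈ s, f i ≤ 1) :
    ∏ i ∈ s, (1 - f i) ≤ Real.exp (-(∑ i ∈ s, f i)) := by
  calc ∏ i ∈ s, (1 - f i) ≤ ∏ i ∈ s, Real.exp (-(f i)) := by
        apply Finset.prod_le_prod
        · intro i hi; linarith [h1 i hi]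
        · intro i hi; linarith [Real.add_one_le_exp (-(f i))]
    _ = Real.exp (∑ i ∈ s, -(f i)) := (Real.exp_sum s _).symm
    _ = Real.exp (-(∑ i ∈ s, f i)) := by rw [Finset.sum_neg_distrib]

open Finset in
lemma aux_exp_neg_le (S : ℝ) (h0 : 0 ≤ S) (h1 : S ≤ 1) : Real.exp (-S) ≤ 1 - S + S ^ 2 := by
  have hb := Real.exp_bound (x := -S) (by rw [abs_neg, abs_of_nonneg h0]; exact h1)
    (n := 2) (by norm_num)
  rw [abs_neg, abs_of_nonneg h0] at hb
  have h2 : ∑ m ∈ range 2, (-S) ^ m / (m.factorial : ℝ) = 1 - S := by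
    simp [Finset.sum_range_succ]
    ring
  rw [h2] at hb
  have := (abs_sub_le_iff.1 hb).1
  have hc : ((Nat.succ 2 : ℕ) : ℝ) / ((Nat.factorial 2 : ℕ) * (2:ℕ)) = 3/4 := by
    norm_num [Nat.factorial]
  rw [hc] at this
  nlinarith

noncomputable def Sf (k p : ℕ) : ℝ := ∑ i ∈ Finset.range k, (k:ℝ)^2/((p:ℝ)-k-i)^2

lemma Sf_nonneg (k p : ℕ) : 0 ≤ Sf k p :=
  Finset.sum_nonneg fun i _ => by positivity

lemma aux_den_pos (k p : ℕ) (hk : 0 < k) (h3 : 3 * k ≤ p) {i : ℕ} (hi : i ∈ Finset.range k) :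
    0 < (p:ℝ) - k - i ∧ (p:ℝ) - k - i ≤ p ∧ (p:ℝ) - 2*k ≤ (p:ℝ) - k - i := by
  simp only [Finset.mem_range] at hi
  have h1 : (i:ℝ) < k := by exact_mod_cast hi
  have h2 : (3*k : ℝ) ≤ p := by exact_mod_cast h3
  have h4 : (1:ℝ) ≤ k := by exact_mod_cast hk
  refine ⟨by linarith, by linarith, by linarith⟩

lemma Sf_lb (k p : ℕ) (hk : 0 < k) (h3 : 3 * k ≤ p) :
    (k:ℝ)^3/(p:ℝ)^2 ≤ Sf k p := by
  have hp : (0:ℝ) < p := by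
    have : (3*k:ℝ) ≤ p := by exact_mod_cast h3
    have : (1:ℝ) ≤ k := by exact_mod_cast hk
    linarith
  have hterm : ∀ i ∈ Finset.range k, (k:ℝ)^2/(p:ℝ)^2 ≤ (k:ℝ)^2/((p:ℝ)-k-i)^2 := by
    intro i hi
    obtain ⟨h1, h2, _⟩ := aux_den_pos k p hk h3 hi
    apply div_le_div_of_nonneg_left (by positivity) (by positivity)
    nlinarith
  calc (k:ℝ)^3/(p:ℝ)^2 = ∑ _i ∈ Finset.range k, (k:ℝ)^2/(p:ℝ)^2 := by
        rw [Finset.sum_const, Finset.card_range, nsmul_eq_mul]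
        field_simp
    _ ≤ Sf k p := Finset.sum_le_sum hterm

lemma Sf_ub (k p : ℕ) (hk : 0 < k) (h3 : 3 * k ≤ p) :
    Sf k p ≤ (k:ℝ)^3/((p:ℝ)-2*k)^2 := by
  have hd : (0:ℝ) < (p:ℝ) - 2*k := by
    have : (3*k:ℝ) ≤ p := by exact_mod_cast h3
    have : (1:ℝ) ≤ k := by exact_mod_cast hk
    linarith
  have hterm : ∀ i ∈ Finset.range k, (k:ℝ)^2/((p:ℝ)-k-i)^2 ≤ (k:ℝ)^2/((p:ℝ)-2*k)^2 := by
    intro i hi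
    obtain ⟨h1, _, h2⟩ := aux_den_pos k p hk h3 hi
    apply div_le_div_of_nonneg_left (by positivity) (by positivity)
    nlinarith
  calc Sf k p ≤ ∑ _i ∈ Finset.range k, (k:ℝ)^2/((p:ℝ)-2*k)^2 := Finset.sum_le_sum hterm
    _ = (k:ℝ)^3/((p:ℝ)-2*k)^2 := by
        rw [Finset.sum_const, Finset.card_range, nsmul_eq_mul]
        field_simp

theorem one_sub_r_div_q_sq_asymptotics (K P : ℕ → ℕ)
    (hK : ∀ n, 0 < K n) (hKP : ∀ n, K n ≤ P n)
    (hlim : Tendsto (fun n => ((K n : ℝ) ^ 2) / (P n : ℝ)) atTop (nhds 0))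
    (h3K : ∀ᶠ n in atTop, 3 * K n ≤ P n) :
    Tendsto (fun n =>
        (1 - rKP (K n) (P n) / (qKP (K n) (P n)) ^ 2) / ((K n : ℝ) ^ 3 / (P n : ℝ) ^ 2))
      atTop (nhds 1) := by
  have hP3 : ∀ᶠ n in atTop, 3 ≤ P n := by
    filter_upwards [h3K] with n hn
    have := hK n; omega
  have hKdP : Tendsto (fun n => (K n : ℝ) / (P n : ℝ)) atTop (nhds 0) := by
    apply tendsto_of_tendsto_of_tendsto_of_le_of_le' tendsto_const_nhds hlim
    · filter_upwards [hP3] with n hn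
      positivity
    · filter_upwards [hP3] with n hn
      have hp : (0:ℝ) < P n := by exact_mod_cast (by omega : 0 < P n)
      have h1 : (1:ℝ) ≤ K n := by exact_mod_cast hK n
      have : (K n:ℝ) ≤ (K n:ℝ)^2 := by nlinarith
      gcongr
  have hden : Tendsto (fun n => 1 - 2 * ((K n:ℝ)/(P n:ℝ))) atTop (nhds 1) := by
    have := tendsto_const_nhds (x := (1:ℝ)) (f := atTop (α := ℕ)) |>.sub (hKdP.const_mul 2)
    simpa using this
  have hg : Tendsto (fun n => (P n:ℝ)/((P n:ℝ) - 2 * K n)) atTop (nhds 1) := by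
    have h := (tendsto_const_nhds (x := (1:ℝ)) (f := atTop (α := ℕ))).div hden one_ne_zero
    rw [div_one] at h
    apply h.congr'
    filter_upwards [h3K, hP3] with n hn3 hnp
    have hp : (0:ℝ) < P n := by exact_mod_cast (by omega : 0 < P n)
    have h1 : (1:ℝ) ≤ K n := by exact_mod_cast hK n
    have h3 : (3 * K n:ℝ) ≤ P n := by exact_mod_cast hn3
    have hd : (0:ℝ) < (P n:ℝ) - 2 * K n := by linarith
    rw [Pi.div_apply]
    field_simp
  have hg2 : Tendsto (fun n => ((P n:ℝ)/((P n:ℝ) - 2 * K n))^2) atTop (nhds 1) := by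
    simpa using hg.pow 2
  have hT : Tendsto (fun n => (K n:ℝ)^3/(P n:ℝ)^2) atTop (nhds 0) := by
    have h := hlim.mul hKdP
    rw [mul_zero] at h
    apply h.congr
    intro n
    rw [div_mul_div_comm]
    ring_nf
  have hTg2 : Tendsto (fun n => ((K n:ℝ)^3/(P n:ℝ)^2) * ((P n:ℝ)/((P n:ℝ) - 2 * K n))^2)
      atTop (nhds 0) := by
    simpa using hT.mul hg2
  -- eventual bound  S ≤ T * g^2
  have hSub : ∀ᶠ n in atTop, Sf (K n) (P n) ≤
      ((K n:ℝ)^3/(P n:ℝ)^2) * ((P n:ℝ)/((P n:ℝ) - 2 * K n))^2 := by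
    filter_upwards [h3K] with n hn3
    have h1 : (1:ℝ) ≤ K n := by exact_mod_cast hK n
    have h3 : (3 * K n:ℝ) ≤ P n := by exact_mod_cast hn3
    have hp : (0:ℝ) < P n := by linarith
    have hd : (0:ℝ) < (P n:ℝ) - 2 * K n := by linarith
    have heq : (K n:ℝ)^3/((P n:ℝ)-2*(K n:ℝ))^2
        = ((K n:ℝ)^3/(P n:ℝ)^2) * ((P n:ℝ)/((P n:ℝ) - 2 * K n))^2 := by
      field_simp
    calc Sf (K n) (P n) ≤ (K n:ℝ)^3/((P n:ℝ)-2*(K n:ℝ))^2 := Sf_ub _ _ (hK n) hn3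
      _ = _ := heq
  have hS0 : Tendsto (fun n => Sf (K n) (P n)) atTop (nhds 0) := by
    apply tendsto_of_tendsto_of_tendsto_of_le_of_le' tendsto_const_nhds hTg2
    · exact Eventually.of_forall fun n => Sf_nonneg _ _
    · exact hSub
  have hShalf : ∀ᶠ n in atTop, Sf (K n) (P n) < 1/2 :=
    hS0.eventually (gt_mem_nhds (by norm_num))
  -- squeeze
  have hlow : Tendsto (fun n => 1 - Sf (K n) (P n)) atTop (nhds 1) := by
    have := tendsto_const_nhds (x := (1:ℝ)) (f := atTop (α := ℕ)) |>.sub hS0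
    simpa using this
  apply tendsto_of_tendsto_of_tendsto_of_le_of_le' hlow hg2
  · -- lower bound : 1 - S ≤ F
    filter_upwards [h3K, hShalf, hSub] with n hn3 hhalf hub
    set k := K n
    set p := P n
    have hk := hK n
    have h1 : (1:ℝ) ≤ k := by exact_mod_cast hk
    have h3 : (3 * k:ℝ) ≤ p := by exact_mod_cast hn3
    have hp : (0:ℝ) < p := by linarith
    have hT0 : (0:ℝ) < (k:ℝ)^3/(p:ℝ)^2 := by positivity
    set S := Sf k p with hSdef
    have hS0' : 0 ≤ S := Sf_nonneg _ _
    have hTleS : (k:ℝ)^3/(p:ℝ)^2 ≤ S := Sf_lb _ _ hk hn3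
    rw [aux_key_identity k p hk hn3]
    have hx0 : ∀ i ∈ Finset.range k, 0 ≤ (k:ℝ)^2/((p:ℝ)-k-i)^2 :=
      fun i _ => by positivity
    have hx1 : ∀ i ∈ Finset.range k, (k:ℝ)^2/((p:ℝ)-k-i)^2 ≤ 1 := by
      intro i hi
      have hle := Finset.single_le_sum hx0 hi
      have hsum : ∑ x ∈ Finset.range k, (k:ℝ)^2/((p:ℝ)-k-x)^2 = S := rfl
      rw [hsum] at hle
      linarith
    have hprod : ∏ i ∈ Finset.range k, (1 - (k:ℝ)^2/((p:ℝ)-k-i)^2) ≤ Real.exp (-S) :=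
      aux_prod_le_exp (Finset.range k) (fun i => (k:ℝ)^2/((p:ℝ)-k-i)^2) hx1
    have hexp := aux_exp_neg_le S hS0' (by linarith)
    have hlb : S - S^2 ≤ 1 - ∏ i ∈ Finset.range k, (1 - (k:ℝ)^2/((p:ℝ)-k-i)^2) := by
      linarith [hprod.trans hexp]
    rw [le_div_iff₀ hT0]
    -- (1 - S) * T ≤ 1 - ∏ : since (1-S)*T ≤ (1-S)*S ≤ S - S^2 ≤ 1 - ∏
    nlinarith [hlb, hTleS, hhalf, hS0']
  · -- upper bound : F ≤ g^2
    filter_upwards [h3K, hShalf, hSub] with n hn3 hhalf hub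
    set k := K n
    set p := P n
    have hk := hK n
    have h1 : (1:ℝ) ≤ k := by exact_mod_cast hk
    have h3 : (3 * k:ℝ) ≤ p := by exact_mod_cast hn3
    have hp : (0:ℝ) < p := by linarith
    have hT0 : (0:ℝ) < (k:ℝ)^3/(p:ℝ)^2 := by positivity
    set S := Sf k p with hSdef
    rw [aux_key_identity k p hk hn3]
    have hx0 : ∀ i ∈ Finset.range k, 0 ≤ (k:ℝ)^2/((p:ℝ)-k-i)^2 :=
      fun i _ => by positivity
    have hx1 : ∀ i ∈ Finset.range k, (k:ℝ)^2/((p:ℝ)-k-i)^2 ≤ 1 := by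
      intro i hi
      have hle := Finset.single_le_sum hx0 hi
      have hsum : ∑ x ∈ Finset.range k, (k:ℝ)^2/((p:ℝ)-k-x)^2 = S := rfl
      rw [hsum] at hle
      linarith
    have hW : 1 - S ≤ ∏ i ∈ Finset.range k, (1 - (k:ℝ)^2/((p:ℝ)-k-i)^2) :=
      aux_weier (Finset.range k) (fun i => (k:ℝ)^2/((p:ℝ)-k-i)^2) hx0 hx1
    rw [div_le_iff₀ hT0]
    -- 1 - ∏ ≤ S ≤ T * g^2 = g^2 * T
    have : 1 - ∏ i ∈ Finset.range k, (1 - (k:ℝ)^2/((p:ℝ)-k-i)^2) ≤ S := by linarith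
    calc 1 - ∏ i ∈ Finset.range k, (1 - (k:ℝ)^2/((p:ℝ)-k-i)^2) ≤ S := this
      _ ≤ ((k:ℝ)^3/(p:ℝ)^2) * ((p:ℝ)/((p:ℝ) - 2 * k))^2 := hub
      _ = ((p:ℝ)/((p:ℝ) - 2 * k))^2 * ((k:ℝ)^3/(p:ℝ)^2) := by ring
end

section
/- Let K, P : ℕ → ℕ with K_n ≤ P_n and K_n²/P_n → 0. If n³·(K_n³/P_n² + (K_n²/P_n)³) → ∞, then n²·(1 − q(K_n,P_n)) → ∞. -/
open Filter

lemma desc_ineq (k P : ℕ) (h2 : 2 * k ≤ P) :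
    (P + k) ^ k * (P - k).descFactorial k ≤ P ^ k * P.descFactorial k := by
  have e : ∀ c : ℕ, c ^ k = ∏ _i ∈ Finset.range k, c := fun c => by simp
  rw [Nat.descFactorial_eq_prod_range, Nat.descFactorial_eq_prod_range,
    e (P + k), e P, ← Finset.prod_mul_distrib, ← Finset.prod_mul_distrib]
  apply Finset.prod_le_prod'
  intro i hi
  rw [Finset.mem_range] at hi
  have h1 : k + i + 1 ≤ P := by omega
  obtain ⟨a, ha⟩ : ∃ a, P = a + k + i := ⟨P - k - i, by omega⟩
  have e2 : P - k - i = a := by omega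
  have e3 : P - i = a + k := by omega
  rw [e2, e3, ha]
  nlinarith [sq_nonneg k]

lemma choose_ineq (k P : ℕ) (h2 : 2 * k ≤ P) :
    (P + k) ^ k * (P - k).choose k ≤ P ^ k * P.choose k := by
  have h := desc_ineq k P h2
  rw [Nat.descFactorial_eq_factorial_mul_choose, Nat.descFactorial_eq_factorial_mul_choose] at h
  have hf : 0 < k.factorial := Nat.factorial_pos k
  apply Nat.le_of_mul_le_mul_left _ hf
  calc k.factorial * ((P + k) ^ k * (P - k).choose k)
      = (P + k) ^ k * (k.factorial * (P - k).choose k) := by ring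
    _ ≤ P ^ k * (k.factorial * P.choose k) := h
    _ = k.factorial * (P ^ k * P.choose k) := by ring

lemma q_bound (k P : ℕ) (hk : 0 < k) (h2 : 2 * k ≤ P) :
    (1 + (k : ℝ) ^ 2 / P) * qKP k P ≤ 1 := by
  have hP : 0 < P := by omega
  have hPr : (0 : ℝ) < P := by exact_mod_cast hP
  have hC : 0 < (P.choose k : ℝ) := by
    exact_mod_cast Nat.choose_pos (by omega : k ≤ P)
  rw [qKP, if_pos h2]
  rw [← mul_div_assoc, div_le_one hC]
  -- (1 + k²/P) * choose(P-k,k) ≤ choose P k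
  have hpow : (1 + (k : ℝ) ^ 2 / P) ≤ ((P + k : ℝ) / P) ^ k := by
    have hb : (1 : ℝ) + k * ((k : ℝ) / P) ≤ (1 + (k : ℝ) / P) ^ k := by
      apply one_add_mul_le_pow
      have : (0:ℝ) ≤ (k : ℝ) / P := by positivity
      linarith
    have he : ((P + k : ℝ) / P) = 1 + (k : ℝ) / P := by
      field_simp
    rw [he]
    calc (1 + (k : ℝ) ^ 2 / P) = 1 + k * ((k : ℝ) / P) := by ring
      _ ≤ _ := hb
  have hch : ((P + k : ℝ) / P) ^ k * ((P - k).choose k : ℝ) ≤ (P.choose k : ℝ) := by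
    have h := choose_ineq k P h2
    have hr : ((P + k : ℝ)) ^ k * ((P - k).choose k : ℝ) ≤ (P:ℝ) ^ k * (P.choose k : ℝ) := by
      exact_mod_cast h
    rw [div_pow, div_mul_eq_mul_div, div_le_iff₀ (by positivity)]
    calc ((P + k : ℝ)) ^ k * ((P - k).choose k : ℝ) ≤ (P:ℝ) ^ k * (P.choose k : ℝ) := hr
      _ = (P.choose k : ℝ) * (P:ℝ) ^ k := by ring
  have hCnn : (0 : ℝ) ≤ ((P - k).choose k : ℝ) := by positivity
  calc (1 + (k : ℝ) ^ 2 / P) * ((P - k).choose k : ℝ)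
      ≤ ((P + k : ℝ) / P) ^ k * ((P - k).choose k : ℝ) :=
        mul_le_mul_of_nonneg_right hpow hCnn
    _ ≤ (P.choose k : ℝ) := hch

lemma one_sub_q (k P : ℕ) (hk : 0 < k) (h2 : 2 * k ≤ P) (hx : (k : ℝ) ^ 2 / P ≤ 1) :
    (k : ℝ) ^ 2 / P / 2 ≤ 1 - qKP k P := by
  set x : ℝ := (k : ℝ) ^ 2 / P with hxdef
  have hx0 : 0 ≤ x := by positivity
  have hq := q_bound k P hk h2
  have hq0 : 0 ≤ qKP k P := by
    rw [qKP]; split <;> positivity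
  -- (1+x) q ≤ 1 so q ≤ 1/(1+x), 1 - q ≥ x/(1+x) ≥ x/2
  have h1x : (0:ℝ) < 1 + x := by linarith
  nlinarith

theorem n_sq_one_sub_q_to_infty (K P : ℕ → ℕ)
    (hK : ∀ n, 0 < K n) (hKP : ∀ n, K n ≤ P n)
    (hlim : Tendsto (fun n => ((K n : ℝ) ^ 2) / (P n : ℝ)) atTop (nhds 0))
    (hcond : Tendsto (fun n : ℕ =>
        (n : ℝ) ^ 3 * ((K n : ℝ) ^ 3 / (P n : ℝ) ^ 2 + ((K n : ℝ) ^ 2 / (P n : ℝ)) ^ 3))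
      atTop atTop) :
    Tendsto (fun n : ℕ => (n : ℝ) ^ 2 * (1 - qKP (K n) (P n))) atTop atTop := by
  set x : ℕ → ℝ := fun n => ((K n : ℝ) ^ 2) / (P n : ℝ) with hxdef
  set f : ℕ → ℝ := fun n =>
    (n : ℝ) ^ 3 * ((K n : ℝ) ^ 3 / (P n : ℝ) ^ 2 + ((K n : ℝ) ^ 2 / (P n : ℝ)) ^ 3) with hfdef
  set g : ℕ → ℝ := fun n => (n : ℝ) ^ 2 * x n with hgdef
  have hxev : ∀ᶠ n in atTop, x n ≤ 1 / 2 := by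
    have := hlim.eventually (eventually_le_nhds (by norm_num : (0:ℝ) < 1/2))
    exact this
  have hx0 : ∀ n, 0 ≤ x n := fun n => by positivity
  have hPpos : ∀ n, 0 < P n := fun n => lt_of_lt_of_le (hK n) (hKP n)
  have h2K : ∀ᶠ n in atTop, 2 * K n ≤ P n := by
    filter_upwards [hxev] with n hn
    have hPr : (0:ℝ) < (P n : ℝ) := by exact_mod_cast hPpos n
    have h1 : 2 * (K n : ℝ) ^ 2 ≤ (P n : ℝ) := by
      rw [div_le_iff₀ hPr] at hn
      linarith
    have h2 : (K n : ℝ) ≤ (K n : ℝ) ^ 2 := by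
      have : (1:ℝ) ≤ (K n : ℝ) := by exact_mod_cast hK n
      nlinarith
    have : 2 * (K n : ℝ) ≤ (P n : ℝ) := by linarith
    exact_mod_cast this
  -- f n ^ 2 ≤ 4 * g n ^ 3 eventually
  have hfg : ∀ᶠ n in atTop, f n ^ 2 ≤ 4 * g n ^ 3 := by
    filter_upwards [hxev] with n hn
    have hPr : (1:ℝ) ≤ (P n : ℝ) := by exact_mod_cast hPpos n
    have hkr : (0:ℝ) ≤ (K n : ℝ) := by positivity
    have ha2 : ((K n : ℝ) ^ 3 / (P n : ℝ) ^ 2) ^ 2 ≤ x n ^ 3 := by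
      rw [hxdef]
      rw [div_pow, div_pow, div_le_div_iff₀ (by positivity) (by positivity)]
      calc ((K n:ℝ) ^ 3) ^ 2 * (P n : ℝ) ^ 3 = ((K n:ℝ)^2)^3 * (P n : ℝ) ^ 3 := by ring
        _ ≤ ((K n:ℝ)^2)^3 * ((P n : ℝ) ^ 2) ^ 2 := by
            apply mul_le_mul_of_nonneg_left _ (by positivity)
            calc (P n : ℝ) ^ 3 = (P n : ℝ) ^ 3 * 1 := by ring
              _ ≤ (P n : ℝ) ^ 3 * (P n : ℝ) := by
                  apply mul_le_mul_of_nonneg_left hPr (by positivity)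
              _ = ((P n : ℝ) ^ 2) ^ 2 := by ring
    have hb2 : (x n ^ 3) ^ 2 ≤ x n ^ 3 := by
      have h1 : x n ≤ 1 := by linarith
      calc (x n ^ 3) ^ 2 = x n ^ 6 := by ring
        _ ≤ x n ^ 3 := pow_le_pow_of_le_one (hx0 n) h1 (by norm_num)
    have hg3 : g n ^ 3 = (n:ℝ) ^ 6 * x n ^ 3 := by rw [hgdef]; ring
    have hab : (0:ℝ) ≤ (K n : ℝ) ^ 3 / (P n : ℝ) ^ 2 := by positivity
    have hbb : (0:ℝ) ≤ x n ^ 3 := by positivity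
    rw [hfdef, hg3]
    have hn6 : (0:ℝ) ≤ (n:ℝ)^6 := by positivity
    have key : ((K n : ℝ) ^ 3 / (P n : ℝ) ^ 2 + x n ^ 3) ^ 2 ≤ 4 * x n ^ 3 := by
      nlinarith [sq_nonneg ((K n : ℝ) ^ 3 / (P n : ℝ) ^ 2 - x n ^ 3)]
    calc ((n : ℝ) ^ 3 * ((K n : ℝ) ^ 3 / (P n : ℝ) ^ 2 + ((K n : ℝ) ^ 2 / (P n : ℝ)) ^ 3)) ^ 2
        = (n:ℝ)^6 * ((K n : ℝ) ^ 3 / (P n : ℝ) ^ 2 + x n ^ 3) ^ 2 := by rw [hxdef]; ring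
      _ ≤ (n:ℝ)^6 * (4 * x n ^ 3) := mul_le_mul_of_nonneg_left key hn6
      _ = 4 * ((n:ℝ) ^ 6 * x n ^ 3) := by ring
  have hf2 : Tendsto (fun n => f n ^ 2) atTop atTop := by
    have := hcond.atTop_mul_atTop₀ hcond
    simpa [pow_two] using this
  have hg3 : Tendsto (fun n => g n ^ 3) atTop atTop := by
    apply tendsto_atTop_mono' atTop _ (hf2.atTop_div_const (by norm_num : (0:ℝ) < 4))
    filter_upwards [hfg] with n hn
    linarith
  have hg : Tendsto g atTop atTop := by
    rw [tendsto_atTop] at hg3 ⊢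
    intro M
    filter_upwards [hg3 ((max M 0) ^ 3)] with n hn
    have hg0 : 0 ≤ g n := by
      rw [hgdef]; have := hx0 n; positivity
    have : max M 0 ≤ g n := by
      apply le_of_pow_le_pow_left₀ (by norm_num : (3:ℕ) ≠ 0) hg0 hn
    exact le_trans (le_max_left M 0) this
  apply tendsto_atTop_mono' atTop _ (hg.atTop_div_const (by norm_num : (0:ℝ) < 2))
  filter_upwards [hxev, h2K] with n hn h2n
  have hb := one_sub_q (K n) (P n) (hK n) h2n (by linarith)
  have hn2 : (0:ℝ) ≤ (n:ℝ)^2 := by positivity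
  calc g n / 2 = (n:ℝ)^2 * (x n / 2) := by rw [hgdef]; ring
    _ ≤ (n:ℝ)^2 * (1 - qKP (K n) (P n)) := mul_le_mul_of_nonneg_left hb hn2
end

section
/- Let K, P : ℕ → ℕ be sequences with K_n ≤ P_n such that q(K_n,P_n) → q* with 0 ≤ q* < 1. Then the probability that the random key graph K(n; K_n,P_n) contains at least one triangle tends to 1 as n → ∞. -/
open Finset Filter

/-- The key assignment `f` contains a triangle: three distinct nodes with pairwise
intersecting key rings. -/
def hasTriangle (n P : ℕ) (f : Fin n → Finset (Fin P)) : Prop :=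
  ∃ i j k : Fin n, i ≠ j ∧ i ≠ k ∧ j ≠ k ∧
    (f i ∩ f j).Nonempty ∧ (f i ∩ f k).Nonempty ∧ (f j ∩ f k).Nonempty

instance (n P : ℕ) (f : Fin n → Finset (Fin P)) : Decidable (hasTriangle n P f) := by
  unfold hasTriangle; infer_instance


lemma nat_sub_mul_ineq (a b k : ℕ) (hab : a ≤ b) : (a - k) * b ≤ (b - k) * a := by
  rw [Nat.sub_mul, Nat.sub_mul, Nat.mul_comm a b]
  exact Nat.sub_le_sub_left (Nat.mul_le_mul_left k hab) _

lemma descFactorial_cross (M p k : ℕ) (h : M ≤ p) :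
    (M - k).descFactorial k * p.descFactorial k
      ≤ (p - k).descFactorial k * M.descFactorial k := by
  rw [Nat.descFactorial_eq_prod_range, Nat.descFactorial_eq_prod_range,
    Nat.descFactorial_eq_prod_range, Nat.descFactorial_eq_prod_range,
    ← Finset.prod_mul_distrib, ← Finset.prod_mul_distrib]
  refine Finset.prod_le_prod' fun j _ => ?_
  have hab : M - j ≤ p - j := Nat.sub_le_sub_right h j
  calc (M - k - j) * (p - j) = (M - j - k) * (p - j) := by
        rw [Nat.sub_sub, Nat.sub_sub, Nat.add_comm]
    _ ≤ (p - j - k) * (M - j) := nat_sub_mul_ineq _ _ _ hab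
    _ = (p - k - j) * (M - j) := by rw [Nat.sub_sub, Nat.sub_sub, Nat.add_comm]

lemma choose_cross (M p k : ℕ) (h : M ≤ p) :
    (M - k).choose k * p.choose k ≤ (p - k).choose k * M.choose k := by
  have key := descFactorial_cross M p k h
  rw [Nat.descFactorial_eq_factorial_mul_choose, Nat.descFactorial_eq_factorial_mul_choose,
    Nat.descFactorial_eq_factorial_mul_choose, Nat.descFactorial_eq_factorial_mul_choose] at key
  have hf : 0 < Nat.factorial k * Nat.factorial k :=
    Nat.mul_pos k.factorial_pos k.factorial_pos
  refine le_of_mul_le_mul_left ?_ hf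
  calc Nat.factorial k * Nat.factorial k * ((M - k).choose k * p.choose k)
      = Nat.factorial k * (M - k).choose k * (Nat.factorial k * p.choose k) := by ring
    _ ≤ Nat.factorial k * (p - k).choose k * (Nat.factorial k * M.choose k) := key
    _ = Nat.factorial k * Nat.factorial k * ((p - k).choose k * M.choose k) := by ring

lemma qKP_nonneg_s12 (k p : ℕ) : 0 ≤ qKP k p := by
  unfold qKP; split
  · positivity
  · exact le_refl 0

lemma qKP_le_one_s12 (k p : ℕ) : qKP k p ≤ 1 := by
  unfold qKP; split
  · rcases Nat.eq_zero_or_pos (p.choose k) with h | h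
    · simp [h]
    · rw [div_le_one (by exact_mod_cast h)]
      exact_mod_cast Nat.choose_le_choose k (Nat.sub_le p k)
  · exact zero_le_one

/-- The key ratio bound: `C(p - i*k, k)/C(p,k) ≤ q^i`. -/
lemma ratio_le_q_pow (k p : ℕ) (hk : 0 < k) (hkp : k ≤ p) (i : ℕ) :
    ((p - i * k).choose k : ℝ) / (p.choose k) ≤ (qKP k p) ^ i := by
  have hC : (0:ℝ) < (p.choose k : ℝ) := by exact_mod_cast Nat.choose_pos hkp
  induction i with
  | zero => simp [div_self hC.ne']
  | succ i ih =>
    by_cases h2 : 2 * k ≤ p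
    · have hq : qKP k p = ((p - k).choose k : ℝ) / (p.choose k) := if_pos h2
      have hM : p - i * k ≤ p := Nat.sub_le _ _
      have key := choose_cross (p - i * k) p k hM
      have hsub : p - (i + 1) * k = p - i * k - k := by
        rw [Nat.succ_mul, Nat.sub_sub]
      rw [hsub, pow_succ]
      have step : ((p - i * k - k).choose k : ℝ) / (p.choose k)
          ≤ ((p - k).choose k : ℝ) / (p.choose k) * (((p - i * k).choose k : ℝ) / (p.choose k)) := by
        rw [div_mul_div_comm, div_le_div_iff₀ hC (by positivity)]
        calc ((p - i * k - k).choose k : ℝ) * ((p.choose k : ℝ) * (p.choose k : ℝ))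
            = (((p - i * k - k).choose k * p.choose k : ℕ) : ℝ) * (p.choose k : ℝ) := by
              push_cast; ring
          _ ≤ (((p - k).choose k * (p - i * k).choose k : ℕ) : ℝ) * (p.choose k : ℝ) :=
              mul_le_mul_of_nonneg_right (by exact_mod_cast key) hC.le
          _ = ((p - k).choose k : ℝ) * ((p - i * k).choose k : ℝ) * (p.choose k : ℝ) := by
              push_cast; ring
      calc ((p - i * k - k).choose k : ℝ) / (p.choose k) ≤ _ := step
        _ = qKP k p * (((p - i * k).choose k : ℝ) / (p.choose k)) := by rw [hq]
        _ ≤ qKP k p * (qKP k p) ^ i :=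
            mul_le_mul_of_nonneg_left ih (qKP_nonneg_s12 k p)
        _ = (qKP k p) ^ i * qKP k p := mul_comm _ _
    · have hq : qKP k p = 0 := if_neg h2
      have hz : (p - (i + 1) * k).choose k = 0 := by
        apply Nat.choose_eq_zero_of_lt
        have : p - (i + 1) * k ≤ p - k := by
          apply Nat.sub_le_sub_left
          exact Nat.le_mul_of_pos_left k (Nat.succ_pos i)
        have hpk : p - k < k := by omega
        omega
      rw [hz, hq]
      simp

lemma exists_pairwise_disjoint_of_no_triangle {ι : Type*} [DecidableEq ι] {p : ℕ}
    (f : ι → Finset (Fin p)) :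
    ∀ (t : ℕ) (X : Finset ι), t * (t + 1) ≤ 2 * X.card →
    (∀ i ∈ X, ∀ j ∈ X, ∀ k ∈ X, i ≠ j → i ≠ k → j ≠ k →
      Disjoint (f i) (f j) ∨ Disjoint (f i) (f k) ∨ Disjoint (f j) (f k)) →
    ∃ T ⊆ X, T.card = t ∧ ∀ i ∈ T, ∀ j ∈ T, i ≠ j → Disjoint (f i) (f j) := by
  intro t
  induction t with
  | zero => exact fun X _ _ => ⟨∅, empty_subset _, card_empty, by simp⟩
  | succ t ih =>
    intro X hcard htri
    have hX0 : X.Nonempty := by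
      rw [← card_pos]; nlinarith
    obtain ⟨a, ha⟩ := hX0
    set Nb := X.filter (fun b => b ≠ a ∧ ¬ Disjoint (f a) (f b)) with hNbdef
    by_cases hNb : t + 1 ≤ Nb.card
    · obtain ⟨T, hTsub, hTcard⟩ := Finset.exists_subset_card_eq hNb
      refine ⟨T, hTsub.trans (filter_subset _ _), hTcard, ?_⟩
      intro i hi j hj hij
      have hi' := Finset.mem_filter.1 (hTsub hi)
      have hj' := Finset.mem_filter.1 (hTsub hj)
      rcases htri a ha i hi'.1 j hj'.1 (Ne.symm hi'.2.1) (Ne.symm hj'.2.1) hij with h | h | h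
      · exact absurd h hi'.2.2
      · exact absurd h hj'.2.2
      · exact h
    · set D := X.filter (fun b => b ≠ a ∧ Disjoint (f a) (f b)) with hDdef
      have hsplit : X ⊆ insert a (Nb ∪ D) := by
        intro b hb
        rcases eq_or_ne b a with rfl | hba
        · exact Finset.mem_insert_self _ _
        · refine Finset.mem_insert_of_mem (Finset.mem_union.2 ?_)
          by_cases hd : Disjoint (f a) (f b)
          · exact Or.inr (Finset.mem_filter.2 ⟨hb, hba, hd⟩)
          · exact Or.inl (Finset.mem_filter.2 ⟨hb, hba, hd⟩)
      have hcX : X.card ≤ 1 + Nb.card + D.card := by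
        calc X.card ≤ (insert a (Nb ∪ D)).card := Finset.card_le_card hsplit
          _ ≤ 1 + (Nb ∪ D).card := by
              rw [add_comm]; exact Finset.card_insert_le _ _
          _ ≤ 1 + (Nb.card + D.card) := by
              exact Nat.add_le_add_left (Finset.card_union_le Nb D) 1
          _ = 1 + Nb.card + D.card := by ring
      have hD : t * (t + 1) ≤ 2 * D.card := by
        have hNb' : Nb.card ≤ t := by omega
        nlinarith
      obtain ⟨T, hTsub, hTcard, hTdisj⟩ := ih D hD (by
        intro i hi j hj k hk
        have hi' := (Finset.mem_filter.1 hi).1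
        have hj' := (Finset.mem_filter.1 hj).1
        have hk' := (Finset.mem_filter.1 hk).1
        exact htri i hi' j hj' k hk')
      have haT : a ∉ T := fun haT => ((Finset.mem_filter.1 (hTsub haT)).2.1) rfl
      refine ⟨insert a T, ?_, ?_, ?_⟩
      · intro b hb
        rcases Finset.mem_insert.1 hb with rfl | hb
        · exact ha
        · exact (Finset.mem_filter.1 (hTsub hb)).1
      · rw [Finset.card_insert_of_notMem haT, hTcard]
      · have hdisjA : ∀ b ∈ T, Disjoint (f a) (f b) := fun b hb =>
          (Finset.mem_filter.1 (hTsub hb)).2.2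
        intro i hi j hj hij
        rcases Finset.mem_insert.1 hi with hia | hi <;>
          rcases Finset.mem_insert.1 hj with hja | hj
        · exact absurd (hia.trans hja.symm) hij
        · rw [hia]; exact hdisjA j hj
        · rw [hja]; exact (hdisjA i hi).symm
        · exact hTdisj i hi j hj hij

lemma card_filter_pd_le {n p k : ℕ} :
    ∀ (T : Finset (Fin n)) (D : Fin n → Finset (Finset (Fin p))),
      (∀ a ∈ T, D a = Finset.univ.powersetCard k) →
      ((Fintype.piFinset D).filter
          (fun f => ∀ i ∈ T, ∀ j ∈ T, i ≠ j → Disjoint (f i) (f j))).card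
        ≤ (∏ i ∈ Finset.range T.card, (p - i * k).choose k) *
            ∏ i ∈ Finset.univ \ T, (D i).card := by
  intro T
  induction T using Finset.induction_on with
  | empty =>
    intro D _
    rw [Finset.filter_true_of_mem (fun f _ => by simp)]
    rw [Fintype.card_piFinset]
    simp
  | @insert a T haT ih =>
    intro D hD
    set D' : Fin n → Finset (Finset (Fin p)) := Function.update D a {∅} with hD'def
    set C1 := (p - T.card * k).choose k with hC1def
    set E := fun f : Fin n → Finset (Fin p) =>
      ∀ i ∈ insert a T, ∀ j ∈ insert a T, i ≠ j → Disjoint (f i) (f j) with hEdef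
    set cond := fun g : Fin n → Finset (Fin p) =>
      ∀ i ∈ T, ∀ j ∈ T, i ≠ j → Disjoint (g i) (g j) with hconddef
    have hmaps : ∀ f ∈ (Fintype.piFinset D).filter E,
        Function.update f a ∅ ∈ Fintype.piFinset D' := by
      intro f hf
      have hf1 := (Finset.mem_filter.1 hf).1
      rw [Fintype.mem_piFinset] at hf1 ⊢
      intro i
      rcases eq_or_ne i a with rfl | hia
      · simp [hD'def]
      · rw [Function.update_of_ne hia, hD'def, Function.update_of_ne hia]
        exact hf1 i
    have key := Finset.card_eq_sum_card_fiberwise hmaps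
    have hfiber : ∀ g ∈ Fintype.piFinset D',
        (((Fintype.piFinset D).filter E).filter
            (fun f => Function.update f a ∅ = g)).card
          ≤ if cond g then C1 else 0 := by
      intro g hg
      by_cases hcg : cond g
      · rw [if_pos hcg]
        set U := T.biUnion g with hUdef
        have hcardU : U.card = T.card * k := by
          rw [hUdef, Finset.card_biUnion (fun i hi j hj hij => hcg i hi j hj hij)]
          have : ∀ b ∈ T, (g b).card = k := by
            intro b hb
            have hb' : g b ∈ D' b := Fintype.mem_piFinset.1 hg b
            have hba : b ≠ a := fun h => haT (h ▸ hb)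
            rw [hD'def, Function.update_of_ne hba, hD b (Finset.mem_insert_of_mem hb),
              Finset.mem_powersetCard] at hb'
            exact hb'.2
          rw [Finset.sum_congr rfl this, Finset.sum_const, smul_eq_mul]
        calc (((Fintype.piFinset D).filter E).filter
              (fun f => Function.update f a ∅ = g)).card
            ≤ ((Finset.univ \ U).powersetCard k).card := by
              apply Finset.card_le_card_of_injOn (fun f => f a)
              · intro f hf
                have hf2 := Finset.mem_filter.1 hf
                have hf3 := hf2.2
                have hfE := (Finset.mem_filter.1 hf2.1).2
                have hfpi := (Finset.mem_filter.1 hf2.1).1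
                have hfa : f a ∈ Finset.univ.powersetCard k := by
                  have := Fintype.mem_piFinset.1 hfpi a
                  rwa [hD a (Finset.mem_insert_self a T)] at this
                rw [Finset.mem_coe]
                rw [Finset.mem_powersetCard] at hfa ⊢
                refine ⟨?_, hfa.2⟩
                intro x hx
                rw [Finset.mem_sdiff]
                refine ⟨Finset.mem_univ x, ?_⟩
                intro hxU
                obtain ⟨b, hb, hxb⟩ := Finset.mem_biUnion.1 hxU
                have hba : b ≠ a := fun h => haT (h ▸ hb)
                have hgb : g b = f b := by
                  have := congrFun hf3 b
                  rw [Function.update_of_ne hba] at this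
                  exact this.symm
                have hdisj := hfE a (Finset.mem_insert_self a T) b
                  (Finset.mem_insert_of_mem hb) (Ne.symm hba)
                exact Finset.disjoint_left.1 hdisj hx (hgb ▸ hxb)
              · intro f1 hf1 f2 hf2 hEq
                have h1 := (Finset.mem_filter.1 hf1).2
                have h2 := (Finset.mem_filter.1 hf2).2
                funext i
                rcases eq_or_ne i a with rfl | hia
                · exact hEq
                · have e1 := congrFun h1 i
                  have e2 := congrFun h2 i
                  rw [Function.update_of_ne hia] at e1 e2
                  rw [e1, e2]
          _ = C1 := by
              rw [Finset.card_powersetCard, Finset.card_sdiff_of_subset (Finset.subset_univ U),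
                Finset.card_univ, Fintype.card_fin, hcardU]
      · rw [if_neg hcg]
        rw [Nat.le_zero, Finset.card_eq_zero]
        apply Finset.eq_empty_of_forall_notMem
        intro f hf
        have hf2 := Finset.mem_filter.1 hf
        have hf3 := hf2.2
        have hfE := (Finset.mem_filter.1 hf2.1).2
        apply hcg
        intro i hi j hj hij
        have hia : i ≠ a := fun h => haT (h ▸ hi)
        have hja : j ≠ a := fun h => haT (h ▸ hj)
        have ei : g i = f i := by
          have := congrFun hf3 i; rw [Function.update_of_ne hia] at this
          exact this.symm
        have ej : g j = f j := by
          have := congrFun hf3 j; rw [Function.update_of_ne hja] at this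
          exact this.symm
        rw [ei, ej]
        exact hfE i (Finset.mem_insert_of_mem hi) j (Finset.mem_insert_of_mem hj) hij
    have step1 : ((Fintype.piFinset D).filter E).card
        ≤ C1 * ((Fintype.piFinset D').filter cond).card := by
      rw [key]
      calc ∑ g ∈ Fintype.piFinset D',
            (((Fintype.piFinset D).filter E).filter
              (fun f => Function.update f a ∅ = g)).card
          ≤ ∑ g ∈ Fintype.piFinset D', if cond g then C1 else 0 :=
            Finset.sum_le_sum hfiber
        _ = ∑ g ∈ (Fintype.piFinset D').filter cond, C1 := (Finset.sum_filter _ _).symm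
        _ = ((Fintype.piFinset D').filter cond).card * C1 := by
            rw [Finset.sum_const, smul_eq_mul]
        _ = C1 * ((Fintype.piFinset D').filter cond).card := mul_comm _ _
    have hD'T : ∀ b ∈ T, D' b = Finset.univ.powersetCard k := by
      intro b hb
      have hba : b ≠ a := fun h => haT (h ▸ hb)
      rw [hD'def, Function.update_of_ne hba]
      exact hD b (Finset.mem_insert_of_mem hb)
    have step2 := ih D' hD'T
    have haU : a ∈ Finset.univ \ T := Finset.mem_sdiff.2 ⟨Finset.mem_univ a, haT⟩
    have hprodD' : ∏ i ∈ Finset.univ \ T, (D' i).card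
        = ∏ i ∈ Finset.univ \ insert a T, (D i).card := by
      rw [← Finset.mul_prod_erase _ _ haU]
      have h1 : (D' a).card = 1 := by rw [hD'def, Function.update_self]; simp
      rw [h1, one_mul]
      have h2 : (Finset.univ \ T).erase a = Finset.univ \ insert a T := by
        ext i
        simp only [Finset.mem_erase, Finset.mem_sdiff, Finset.mem_univ, true_and,
          Finset.mem_insert]
        tauto
      rw [h2]
      apply Finset.prod_congr rfl
      intro i hi
      have hia : i ≠ a := by
        rw [← h2] at hi
        exact (Finset.mem_erase.1 hi).1
      rw [hD'def, Function.update_of_ne hia]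
    calc ((Fintype.piFinset D).filter E).card
        ≤ C1 * ((Fintype.piFinset D').filter cond).card := step1
      _ ≤ C1 * ((∏ i ∈ Finset.range T.card, (p - i * k).choose k) *
            ∏ i ∈ Finset.univ \ T, (D' i).card) := Nat.mul_le_mul_left _ step2
      _ = (∏ i ∈ Finset.range (insert a T).card, (p - i * k).choose k) *
            ∏ i ∈ Finset.univ \ insert a T, (D i).card := by
          rw [hprodD', Finset.card_insert_of_notMem haT, Finset.prod_range_succ]
          ring

lemma card_keySpace (n k p : ℕ) : (keySpace n k p).card = (p.choose k) ^ n := by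
  unfold keySpace
  rw [Fintype.card_piFinset]
  simp [Finset.card_powersetCard]

lemma card_no_triangle_le (n k p t : ℕ) (ht : t * (t + 1) ≤ 2 * n) :
    ((keySpace n k p).filter (fun f => ¬ hasTriangle n p f)).card
      ≤ n.choose t * ((∏ i ∈ Finset.range t, (p - i * k).choose k) *
          (p.choose k) ^ (n - t)) := by
  classical
  have hsub : (keySpace n k p).filter (fun f => ¬ hasTriangle n p f)
      ⊆ ((Finset.univ : Finset (Fin n)).powersetCard t).biUnion
          (fun T => (keySpace n k p).filter
            (fun f => ∀ i ∈ T, ∀ j ∈ T, i ≠ j → Disjoint (f i) (f j))) := by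
    intro f hf
    have hf1 := Finset.mem_filter.1 hf
    have hnt := hf1.2
    have htri : ∀ i ∈ (Finset.univ : Finset (Fin n)), ∀ j ∈ (Finset.univ : Finset (Fin n)),
        ∀ m ∈ (Finset.univ : Finset (Fin n)), i ≠ j → i ≠ m → j ≠ m →
        Disjoint (f i) (f j) ∨ Disjoint (f i) (f m) ∨ Disjoint (f j) (f m) := by
      intro i _ j _ m _ hij him hjm
      by_contra hcon
      push_neg at hcon
      obtain ⟨h1, h2, h3⟩ := hcon
      exact hnt ⟨i, j, m, hij, him, hjm,
        Finset.not_disjoint_iff_nonempty_inter.1 h1,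
        Finset.not_disjoint_iff_nonempty_inter.1 h2,
        Finset.not_disjoint_iff_nonempty_inter.1 h3⟩
    have hcardu : t * (t + 1) ≤ 2 * (Finset.univ : Finset (Fin n)).card := by
      rwa [Finset.card_univ, Fintype.card_fin]
    obtain ⟨T, hTsub, hTcard, hTdisj⟩ :=
      exists_pairwise_disjoint_of_no_triangle f t Finset.univ hcardu htri
    refine Finset.mem_biUnion.2 ⟨T, ?_, ?_⟩
    · exact Finset.mem_powersetCard.2 ⟨hTsub, hTcard⟩
    · exact Finset.mem_filter.2 ⟨hf1.1, hTdisj⟩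
  calc ((keySpace n k p).filter (fun f => ¬ hasTriangle n p f)).card
      ≤ (((Finset.univ : Finset (Fin n)).powersetCard t).biUnion
          (fun T => (keySpace n k p).filter
            (fun f => ∀ i ∈ T, ∀ j ∈ T, i ≠ j → Disjoint (f i) (f j)))).card :=
        Finset.card_le_card hsub
    _ ≤ ∑ T ∈ (Finset.univ : Finset (Fin n)).powersetCard t,
          ((keySpace n k p).filter
            (fun f => ∀ i ∈ T, ∀ j ∈ T, i ≠ j → Disjoint (f i) (f j))).card :=
        Finset.card_biUnion_le
    _ ≤ ∑ T ∈ (Finset.univ : Finset (Fin n)).powersetCard t,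
          ((∏ i ∈ Finset.range t, (p - i * k).choose k) * (p.choose k) ^ (n - t)) := by
        apply Finset.sum_le_sum
        intro T hT
        have hTcard := (Finset.mem_powersetCard.1 hT).2
        have := card_filter_pd_le (n := n) (p := p) (k := k) T
          (fun _ => Finset.univ.powersetCard k) (fun _ _ => rfl)
        rw [hTcard] at this
        refine this.trans (le_of_eq ?_)
        congr 1
        rw [Finset.prod_const, Finset.card_sdiff_of_subset (Finset.subset_univ T),
          Finset.card_univ, Fintype.card_fin, hTcard, Finset.card_powersetCard,
          Finset.card_univ, Fintype.card_fin]
    _ = n.choose t * ((∏ i ∈ Finset.range t, (p - i * k).choose k) *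
          (p.choose k) ^ (n - t)) := by
        rw [Finset.sum_const, smul_eq_mul, Finset.card_powersetCard,
          Finset.card_univ, Fintype.card_fin]

lemma ratio_no_triangle_le (n k p t : ℕ) (hk : 0 < k) (hkp : k ≤ p)
    (ht : t * (t + 1) ≤ 2 * n) (htn : t ≤ n) :
    (((keySpace n k p).filter (fun f => ¬ hasTriangle n p f)).card : ℝ)
        / ((keySpace n k p).card : ℝ)
      ≤ (n : ℝ) ^ t * (qKP k p) ^ (∑ i ∈ Finset.range t, i) := by
  have hC : (0:ℝ) < (p.choose k : ℝ) := by exact_mod_cast Nat.choose_pos hkp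
  have hCn : (0:ℝ) < ((p.choose k : ℝ)) ^ n := pow_pos hC n
  rw [card_keySpace]
  have h1 : ((((keySpace n k p).filter (fun f => ¬ hasTriangle n p f)).card : ℝ))
      ≤ (n.choose t : ℝ) * ((∏ i ∈ Finset.range t, ((p - i * k).choose k : ℝ)) *
          (p.choose k : ℝ) ^ (n - t)) := by
    have := card_no_triangle_le n k p t ht
    calc ((((keySpace n k p).filter (fun f => ¬ hasTriangle n p f)).card : ℝ))
        ≤ ((n.choose t * ((∏ i ∈ Finset.range t, (p - i * k).choose k) *
            (p.choose k) ^ (n - t)) : ℕ) : ℝ) := by exact_mod_cast this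
      _ = _ := by push_cast; ring
  rw [Nat.cast_pow, div_le_iff₀ hCn]
  have hpow : ((p.choose k : ℝ)) ^ n = (p.choose k : ℝ) ^ (n - t) * (p.choose k : ℝ) ^ t := by
    rw [← pow_add]; congr 1; omega
  calc ((((keySpace n k p).filter (fun f => ¬ hasTriangle n p f)).card : ℝ))
      ≤ (n.choose t : ℝ) * ((∏ i ∈ Finset.range t, ((p - i * k).choose k : ℝ)) *
          (p.choose k : ℝ) ^ (n - t)) := h1
    _ = ((n.choose t : ℝ) * ∏ i ∈ Finset.range t,
          (((p - i * k).choose k : ℝ) / (p.choose k : ℝ))) * (p.choose k : ℝ) ^ n := by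
        rw [hpow, Finset.prod_div_distrib, Finset.prod_const, Finset.card_range]
        generalize (∏ i ∈ Finset.range t, ((p - i * k).choose k : ℝ)) = Q
        field_simp
    _ ≤ ((n : ℝ) ^ t * ∏ i ∈ Finset.range t, (qKP k p) ^ i) * (p.choose k : ℝ) ^ n := by
        apply mul_le_mul_of_nonneg_right _ hCn.le
        apply mul_le_mul
        · exact_mod_cast Nat.choose_le_pow n t
        · apply Finset.prod_le_prod
          · intro i _; positivity
          · intro i _; exact ratio_le_q_pow k p hk hkp i
        · apply Finset.prod_nonneg; intro i _; positivity
        · positivity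
    _ = (n : ℝ) ^ t * (qKP k p) ^ (∑ i ∈ Finset.range t, i) * (p.choose k : ℝ) ^ n := by
        rw [Finset.prod_pow_eq_pow_sum]


theorem one_law_for_triangles_subcritical_q (K P : ℕ → ℕ)
    (hK : ∀ n, 0 < K n) (hKP : ∀ n, K n ≤ P n)
    (qstar : ℝ) (hq0 : 0 ≤ qstar) (hq1 : qstar < 1)
    (hq : Tendsto (fun n => qKP (K n) (P n)) atTop (nhds qstar)) :
    Tendsto (fun n : ℕ =>
        (((keySpace n (K n) (P n)).filter (fun f => hasTriangle n (P n) f)).card : ℝ) /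
          ((keySpace n (K n) (P n)).card : ℝ))
      atTop (nhds 1) := by
  classical
  set c : ℝ := (1 + qstar) / 2 with hcdef
  have hc0 : 0 ≤ c := by positivity
  have hc1 : c < 1 := by rw [hcdef]; linarith
  have hqc : ∀ᶠ n in atTop, qKP (K n) (P n) ≤ c :=
    hq.eventually_le_const (by rw [hcdef]; linarith)
  set x : ℕ → ℝ := fun n =>
    (((keySpace n (K n) (P n)).filter (fun f => ¬ hasTriangle n (P n) f)).card : ℝ) /
      ((keySpace n (K n) (P n)).card : ℝ) with hxdef
  -- sqrt tends to infinity
  have hs : Tendsto (fun n : ℕ => Nat.sqrt n) atTop atTop := by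
    apply Filter.tendsto_atTop_atTop.2
    intro b
    exact ⟨b * b, fun n hn => Nat.le_sqrt.2 hn⟩
  have hu : Tendsto (fun n : ℕ => (Nat.sqrt n - 1) / 2) atTop atTop := by
    refine Filter.tendsto_atTop_atTop.2 fun b => ⟨(2 * b + 1) * (2 * b + 1), fun n hn => ?_⟩
    have : 2 * b + 1 ≤ Nat.sqrt n := Nat.le_sqrt.2 hn
    omega
  -- the squared decay
  have hdecay : Tendsto (fun m : ℕ => 25 * ((m : ℝ) ^ 2 * c ^ m)) atTop (nhds 0) := by
    have := tendsto_pow_const_mul_const_pow_of_lt_one 2 hc0 hc1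
    simpa using (this.const_mul (25 : ℝ))
  have hdecay' : ∀ᶠ m : ℕ in atTop, 25 * ((m : ℝ) ^ 2 * c ^ m) ≤ 1 / 2 :=
    hdecay.eventually_le_const (by norm_num)
  obtain ⟨M, hM⟩ := Filter.eventually_atTop.1 hdecay'
  -- x is eventually bounded by (1/2)^(sqrt n)
  have hxb : ∀ᶠ n in atTop, x n ≤ (1 / 2 : ℝ) ^ Nat.sqrt n := by
    filter_upwards [hqc, Filter.eventually_ge_atTop 9,
      hu.eventually_ge_atTop M, hu.eventually_ge_atTop 1] with n hqn h9 hMn hu1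
    set s := Nat.sqrt n with hsdef
    set u := (s - 1) / 2 with hudef
    have hs3 : 3 ≤ s := Nat.le_sqrt.2 (by omega)
    have hsn : s ≤ n := Nat.sqrt_le_self n
    have hst : s * (s + 1) ≤ 2 * n := by
      have := Nat.sqrt_le n
      nlinarith
    have hb1 : x n ≤ (n : ℝ) ^ s * (qKP (K n) (P n)) ^ (∑ i ∈ Finset.range s, i) :=
      ratio_no_triangle_le n (K n) (P n) s (hK n) (hKP n) hst hsn
    have hq0' : 0 ≤ qKP (K n) (P n) := qKP_nonneg_s12 _ _
    have hsu : s * u ≤ ∑ i ∈ Finset.range s, i := by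
      rw [Finset.sum_range_id]
      exact Nat.mul_div_le_mul_div_assoc s (s - 1) 2
    have hb2 : (qKP (K n) (P n)) ^ (∑ i ∈ Finset.range s, i) ≤ c ^ (s * u) := by
      calc (qKP (K n) (P n)) ^ (∑ i ∈ Finset.range s, i)
          ≤ c ^ (∑ i ∈ Finset.range s, i) := pow_le_pow_left₀ hq0' hqn _
        _ ≤ c ^ (s * u) := pow_le_pow_of_le_one hc0 hc1.le hsu
    have hn25 : (n : ℝ) ≤ 25 * (u : ℝ) ^ 2 := by
      have h1 : n < (s + 1) * (s + 1) := Nat.lt_succ_sqrt n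
      have h2 : s ≤ 2 * u + 2 := by omega
      have h3 : n ≤ 25 * (u * u) := by nlinarith
      calc (n : ℝ) ≤ ((25 * (u * u) : ℕ) : ℝ) := by exact_mod_cast h3
        _ = 25 * (u : ℝ) ^ 2 := by push_cast; ring
    have hcu0 : (0:ℝ) ≤ c ^ u := pow_nonneg hc0 u
    calc x n ≤ (n : ℝ) ^ s * (qKP (K n) (P n)) ^ (∑ i ∈ Finset.range s, i) := hb1
      _ ≤ (n : ℝ) ^ s * c ^ (s * u) := by
          apply mul_le_mul_of_nonneg_left hb2 (by positivity)
      _ = ((n : ℝ) * c ^ u) ^ s := by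
          rw [mul_pow, ← pow_mul, mul_comm u s]
      _ ≤ (25 * ((u:ℝ) ^ 2 * c ^ u)) ^ s := by
          apply pow_le_pow_left₀ (by positivity)
          calc (n : ℝ) * c ^ u ≤ 25 * (u : ℝ) ^ 2 * c ^ u :=
                mul_le_mul_of_nonneg_right hn25 hcu0
            _ = 25 * ((u:ℝ) ^ 2 * c ^ u) := by ring
      _ ≤ (1 / 2 : ℝ) ^ s := by
          apply pow_le_pow_left₀ (by positivity)
          exact hM u hMn
  have hx0 : ∀ᶠ n in atTop, (0:ℝ) ≤ x n := by
    filter_upwards with n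
    positivity
  have hhalf : Tendsto (fun n : ℕ => (1 / 2 : ℝ) ^ Nat.sqrt n) atTop (nhds 0) :=
    (tendsto_pow_atTop_nhds_zero_of_lt_one (by norm_num) (by norm_num)).comp hs
  have hxz : Tendsto x atTop (nhds 0) := squeeze_zero' hx0 hxb hhalf
  -- final: probability of triangle = 1 - x n
  have hEq : ∀ n : ℕ,
      (((keySpace n (K n) (P n)).filter (fun f => hasTriangle n (P n) f)).card : ℝ) /
          ((keySpace n (K n) (P n)).card : ℝ) = 1 - x n := by
    intro n
    have hcard : ((keySpace n (K n) (P n)).filter (fun f => hasTriangle n (P n) f)).card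
        + ((keySpace n (K n) (P n)).filter (fun f => ¬ hasTriangle n (P n) f)).card
        = (keySpace n (K n) (P n)).card :=
      Finset.card_filter_add_card_filter_not _
    have hS : (0:ℝ) < ((keySpace n (K n) (P n)).card : ℝ) := by
      rw [card_keySpace]
      have h : 0 < (P n).choose (K n) := Nat.choose_pos (hKP n)
      have : (0:ℝ) < ((P n).choose (K n) : ℝ) := by exact_mod_cast h
      positivity
    rw [hxdef]
    field_simp
    push_cast [← hcard]
    ring
  have : Tendsto (fun n : ℕ => 1 - x n) atTop (nhds 1) := by
    have := tendsto_const_nhds (x := (1:ℝ)) (f := atTop (α := ℕ)) |>.sub hxz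
    simpa using this
  exact this.congr (fun n => (hEq n).symm)
end

section
/- Fix n ≥ 3 and K ≤ P. Partition nodes 1,…,n into k+1 disjoint triples with k = ⌊(n−3)/3⌋. Then the probability that the random key graph K(n; K,P) contains no triangle is at most (1 − (1−q(K,P))³)^{k+1} ≤ exp(−(k+1)(1−q(K,P))³). -/
open Finset Filter

namespace RKG

lemma logconc_aux (K m : ℕ) (hK : 0 < K) :
    ∀ j : ℕ, m.choose K * (m + K + j).choose K ≤ (m + j).choose K * (m + K).choose K := by
  intro j
  induction j with
  | zero => simp [mul_comm]
  | succ j ih =>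
    rcases lt_or_ge (m + j) K with hc | hc
    · have : m < K := by omega
      simp [Nat.choose_eq_zero_of_lt this]
    -- now K ≤ m + j, so K < m + j + 1
    set x := m + j + 1 with hx
    have hpos : 0 < x * (x - K) := by
      have : 0 < x - K := by omega
      have : 0 < x := by omega
      positivity
    refine Nat.le_of_mul_le_mul_right ?_ hpos
    have id1 : (m + j).choose K * x = x.choose K * (x - K) := by
      simpa using Nat.choose_mul_succ_eq (m + j) K
    have id2 : (m + K + j).choose K * (m + K + j + 1) = (m + K + j + 1).choose K * x := by
      have h := Nat.choose_mul_succ_eq (m + K + j) K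
      have h2 : m + K + j + 1 - K = x := by omega
      rw [h, h2]
    have key : m.choose K * (m + K + j + 1).choose K * (x * (x - K))
        = (m.choose K * (m + K + j).choose K) * ((m + K + j + 1) * (x - K)) := by
      rw [mul_assoc, ← mul_assoc ((m + K + j + 1).choose K), ← id2]; ring
    have key2 : (m + (j+1)).choose K * (m + K).choose K * (x * (x - K))
        = ((m + j).choose K * (m + K).choose K) * (x * x) := by
      have hx1 : m + (j + 1) = x := by omega
      rw [hx1, mul_comm (x.choose K) ((m+K).choose K), mul_assoc ((m+K).choose K),
        show x.choose K * (x * (x - K)) = x.choose K * (x - K) * x by ring, ← id1]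
      ring
    have hxx : (m + K + j + 1) * (x - K) ≤ x * x := by
      obtain ⟨d, hd⟩ : ∃ d, x = d + K := ⟨x - K, by omega⟩
      have hdk : x - K = d := by omega
      have hm : m + K + j + 1 = d + K + K := by omega
      rw [hdk, hm, hd]
      nlinarith
    have : m + K + (j+1) = m + K + j + 1 := by omega
    rw [this, key, key2]
    exact Nat.mul_le_mul ih hxx

lemma logconc (K P : ℕ) (hK : 0 < K) :
    (P - 2 * K).choose K * P.choose K ≤ (P - K).choose K * (P - K).choose K := by
  rcases le_or_gt (2 * K) P with h | h
  · have h1 : P - 2 * K + K = P - K := by omega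
    have h2 : P - 2 * K + K + K = P := by omega
    have := logconc_aux K (P - 2 * K) hK K
    rwa [h2, h1] at this
  · have : P - 2 * K = 0 := by omega
    rw [this, Nat.choose_eq_zero_of_lt hK]
    simp


lemma ite_and3 (p q r : Prop) [Decidable p] [Decidable q] [Decidable r] :
    (if p ∧ q ∧ r then (1:ℝ) else 0)
      = (if p then (1:ℝ) else 0) * ((if q then (1:ℝ) else 0) * (if r then (1:ℝ) else 0)) := by
  by_cases hp : p <;> by_cases hq : q <;> by_cases hr : r <;> simp [hp, hq, hr]

lemma ite_hit {P : ℕ} (s t : Finset (Fin P)) :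
    (if (s ∩ t).Nonempty then (1:ℝ) else 0) = 1 - (if t ∩ s = ∅ then (1:ℝ) else 0) := by
  by_cases h : t ∩ s = ∅ <;>
    simp [h, Finset.nonempty_iff_ne_empty, Finset.inter_comm s t]

lemma ite_miss_union {P : ℕ} (u s t : Finset (Fin P)) :
    (if u ∩ (s ∪ t) = ∅ then (1:ℝ) else 0)
      = (if u ∩ s = ∅ then (1:ℝ) else 0) * (if u ∩ t = ∅ then (1:ℝ) else 0) := by
  by_cases h1 : u ∩ s = ∅ <;> by_cases h2 : u ∩ t = ∅ <;>
    simp [Finset.inter_union_distrib_left, Finset.union_eq_empty, h1, h2]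



def AA (K P : ℕ) : Finset (Finset (Fin P)) := Finset.univ.powersetCard K

lemma card_AA (K P : ℕ) : (AA K P).card = P.choose K := by
  simp [AA, Finset.card_powersetCard]

lemma mem_AA_card {K P : ℕ} {s : Finset (Fin P)} (hs : s ∈ AA K P) : s.card = K :=
  (Finset.mem_powersetCard.mp hs).2

lemma card_filter_disj (K P : ℕ) (v : Finset (Fin P)) :
    ((AA K P).filter fun u => u ∩ v = ∅).card = (P - v.card).choose K := by
  have h : (AA K P).filter (fun u => u ∩ v = ∅) = Finset.powersetCard K vᶜ := by
    ext u
    simp only [AA, Finset.mem_filter, Finset.mem_powersetCard, Finset.subset_univ, true_and]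
    rw [Finset.subset_compl_comm]
    simp only [Finset.subset_iff, Finset.mem_compl]
    constructor
    · rintro ⟨hc, he⟩
      refine ⟨fun {x} hx hxu => ?_, hc⟩
      have : x ∈ u ∩ v := Finset.mem_inter.mpr ⟨hxu, hx⟩
      simp [he] at this
    · rintro ⟨hsub, hc⟩
      refine ⟨hc, ?_⟩
      ext x
      simp only [Finset.mem_inter, Finset.notMem_empty, iff_false, not_and]
      exact fun hxu hxv => hsub hxv hxu
  rw [h, Finset.card_powersetCard, Finset.card_compl]
  simp

lemma sum_disj_real (K P : ℕ) (v : Finset (Fin P)) :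
    (∑ u ∈ AA K P, if u ∩ v = ∅ then (1:ℝ) else 0) = ((P - v.card).choose K : ℝ) := by
  rw [Finset.sum_boole, card_filter_disj]

lemma sum_one (K P : ℕ) : (∑ _u ∈ AA K P, (1:ℝ)) = (P.choose K : ℝ) := by
  simp [card_AA]

lemma inner_sum (K P : ℕ) {s t : Finset (Fin P)} (hs : s ∈ AA K P) (ht : t ∈ AA K P) :
    (∑ u ∈ AA K P,
      (if (s ∩ u).Nonempty then (1:ℝ) else 0) * (if (t ∩ u).Nonempty then (1:ℝ) else 0))
    = (P.choose K : ℝ) - 2 * ((P - K).choose K : ℝ)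
        + (((P - (s ∪ t).card).choose K : ℕ) : ℝ) := by
  have key : ∀ u : Finset (Fin P),
      (if (s ∩ u).Nonempty then (1:ℝ) else 0) * (if (t ∩ u).Nonempty then (1:ℝ) else 0)
      = 1 - (if u ∩ s = ∅ then (1:ℝ) else 0) - (if u ∩ t = ∅ then (1:ℝ) else 0)
          + (if u ∩ (s ∪ t) = ∅ then (1:ℝ) else 0) := by
    intro u
    rw [ite_hit, ite_hit, ite_miss_union]
    ring
  rw [Finset.sum_congr rfl (fun u _ => key u), Finset.sum_add_distrib,
    Finset.sum_sub_distrib, Finset.sum_sub_distrib, sum_one,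
    sum_disj_real, sum_disj_real, sum_disj_real, mem_AA_card hs, mem_AA_card ht]
  ring

lemma G_ge (K P : ℕ) (hK : 0 < K) (hKP : K ≤ P) :
    ((P.choose K : ℝ) - ((P - K).choose K : ℝ)) ^ 3
      ≤ ∑ s ∈ AA K P, ∑ t ∈ AA K P, ∑ u ∈ AA K P,
          (if (s ∩ t).Nonempty ∧ (s ∩ u).Nonempty ∧ (t ∩ u).Nonempty then (1:ℝ) else 0) := by
  set M : ℝ := (P.choose K : ℝ) with hM
  set D : ℝ := ((P - K).choose K : ℝ) with hD
  set D2 : ℝ := ((P - 2 * K).choose K : ℝ) with hD2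
  -- step 1: innermost sum
  have step1 : ∀ s ∈ AA K P, ∀ t ∈ AA K P,
      (∑ u ∈ AA K P,
        (if (s ∩ t).Nonempty ∧ (s ∩ u).Nonempty ∧ (t ∩ u).Nonempty then (1:ℝ) else 0))
      = (if (s ∩ t).Nonempty then (1:ℝ) else 0)
          * (M - 2 * D + (((P - (s ∪ t).card).choose K : ℕ) : ℝ)) := by
    intro s hs t ht
    have : ∀ u : Finset (Fin P),
        (if (s ∩ t).Nonempty ∧ (s ∩ u).Nonempty ∧ (t ∩ u).Nonempty then (1:ℝ) else 0)
        = (if (s ∩ t).Nonempty then (1:ℝ) else 0)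
            * ((if (s ∩ u).Nonempty then (1:ℝ) else 0) * (if (t ∩ u).Nonempty then (1:ℝ) else 0)) :=
      fun u => ite_and3 _ _ _
    rw [Finset.sum_congr rfl (fun u _ => this u), ← Finset.mul_sum, inner_sum K P hs ht]
  have step1' := Finset.sum_congr rfl fun s hs =>
    Finset.sum_congr rfl fun t ht => step1 s hs t ht
  rw [step1']
  -- split product
  have split : ∀ s ∈ AA K P, ∀ t ∈ AA K P,
      (if (s ∩ t).Nonempty then (1:ℝ) else 0)
          * (M - 2 * D + (((P - (s ∪ t).card).choose K : ℕ) : ℝ))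
      = (if (s ∩ t).Nonempty then (1:ℝ) else 0) * (M - 2 * D)
        + (if (s ∩ t).Nonempty then (1:ℝ) else 0)
            * (((P - (s ∪ t).card).choose K : ℕ) : ℝ) := fun s _ t _ => by ring
  rw [Finset.sum_congr rfl fun s hs => Finset.sum_congr rfl fun t ht => split s hs t ht]
  have hsplit2 : ∀ s ∈ AA K P,
      (∑ t ∈ AA K P, ((if (s ∩ t).Nonempty then (1:ℝ) else 0) * (M - 2 * D)
        + (if (s ∩ t).Nonempty then (1:ℝ) else 0) * (((P - (s ∪ t).card).choose K : ℕ) : ℝ)))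
      = (∑ t ∈ AA K P, (if (s ∩ t).Nonempty then (1:ℝ) else 0) * (M - 2 * D))
        + ∑ t ∈ AA K P, (if (s ∩ t).Nonempty then (1:ℝ) else 0)
            * (((P - (s ∪ t).card).choose K : ℕ) : ℝ) := fun s _ => Finset.sum_add_distrib
  rw [Finset.sum_congr rfl hsplit2, Finset.sum_add_distrib]
  -- hit-count lemma
  have sum_hit : ∀ s ∈ AA K P,
      (∑ t ∈ AA K P, (if (s ∩ t).Nonempty then (1:ℝ) else 0)) = M - D := by
    intro s hs
    have : ∀ t : Finset (Fin P), (if (s ∩ t).Nonempty then (1:ℝ) else 0)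
        = 1 - (if t ∩ s = ∅ then (1:ℝ) else 0) := fun t => ite_hit s t
    rw [Finset.sum_congr rfl fun t _ => this t, Finset.sum_sub_distrib, sum_one,
      sum_disj_real, mem_AA_card hs]
  -- term 1
  have term1 : (∑ s ∈ AA K P, ∑ t ∈ AA K P,
      (if (s ∩ t).Nonempty then (1:ℝ) else 0) * (M - 2 * D)) = M * (M - D) * (M - 2 * D) := by
    have : ∀ s ∈ AA K P, (∑ t ∈ AA K P,
        (if (s ∩ t).Nonempty then (1:ℝ) else 0) * (M - 2 * D)) = (M - D) * (M - 2 * D) := by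
      intro s hs
      rw [← Finset.sum_mul, sum_hit s hs]
    rw [Finset.sum_congr rfl this, Finset.sum_const, card_AA]
    push_cast [hM]
    ring
  -- term 2
  have term2 : (∑ s ∈ AA K P, ∑ t ∈ AA K P, (if (s ∩ t).Nonempty then (1:ℝ) else 0)
      * (((P - (s ∪ t).card).choose K : ℕ) : ℝ)) = M * (D * (D - D2)) := by
    have expand : ∀ s ∈ AA K P, ∀ t ∈ AA K P,
        (if (s ∩ t).Nonempty then (1:ℝ) else 0) * (((P - (s ∪ t).card).choose K : ℕ) : ℝ)
        = ∑ u ∈ AA K P, (if (s ∩ t).Nonempty then (1:ℝ) else 0)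
            * ((if u ∩ s = ∅ then (1:ℝ) else 0) * (if u ∩ t = ∅ then (1:ℝ) else 0)) := by
      intro s hs t ht
      rw [← Finset.mul_sum]
      congr 1
      rw [← sum_disj_real K P (s ∪ t)]
      exact Finset.sum_congr rfl fun u _ => ite_miss_union u s t
    rw [Finset.sum_congr rfl fun s hs => Finset.sum_congr rfl fun t ht => expand s hs t ht]
    -- swap sums: s t u → u s t
    rw [Finset.sum_congr rfl fun s (_ : s ∈ AA K P) => Finset.sum_comm]
    rw [Finset.sum_comm]
    -- now ∑ u ∑ s ∑ t
    have inner_t : ∀ u ∈ AA K P, ∀ s ∈ AA K P,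
        (∑ t ∈ AA K P, (if (s ∩ t).Nonempty then (1:ℝ) else 0)
          * ((if u ∩ s = ∅ then (1:ℝ) else 0) * (if u ∩ t = ∅ then (1:ℝ) else 0)))
        = (if u ∩ s = ∅ then (1:ℝ) else 0) * (D - D2) := by
      intro u hu s hs
      have per_t : ∀ t : Finset (Fin P),
          (if (s ∩ t).Nonempty then (1:ℝ) else 0)
            * ((if u ∩ s = ∅ then (1:ℝ) else 0) * (if u ∩ t = ∅ then (1:ℝ) else 0))
          = (if u ∩ s = ∅ then (1:ℝ) else 0)
            * ((if t ∩ u = ∅ then (1:ℝ) else 0) - (if t ∩ (s ∪ u) = ∅ then (1:ℝ) else 0)) := by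
        intro t
        rw [ite_hit s t, ite_miss_union t s u, Finset.inter_comm u t]
        ring
      rw [Finset.sum_congr rfl fun t _ => per_t t, ← Finset.mul_sum, Finset.sum_sub_distrib,
        sum_disj_real, sum_disj_real, mem_AA_card hu]
      by_cases h : u ∩ s = ∅
      · have hdisj : Disjoint s u := by
          rw [Finset.disjoint_iff_inter_eq_empty, Finset.inter_comm]; exact h
        have hcard : (s ∪ u).card = 2 * K := by
          rw [Finset.card_union_of_disjoint hdisj, mem_AA_card hs, mem_AA_card hu]; ring
        rw [hcard]
      · simp [h]
    rw [Finset.sum_congr rfl fun u hu => Finset.sum_congr rfl fun s hs => inner_t u hu s hs]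
    have inner_s : ∀ u ∈ AA K P,
        (∑ s ∈ AA K P, (if u ∩ s = ∅ then (1:ℝ) else 0) * (D - D2)) = D * (D - D2) := by
      intro u hu
      rw [← Finset.sum_mul]
      congr 1
      rw [Finset.sum_congr rfl fun s (_ : s ∈ AA K P) => by rw [Finset.inter_comm u s],
        sum_disj_real, mem_AA_card hu]
    rw [Finset.sum_congr rfl inner_s, Finset.sum_const, card_AA]
    push_cast [hM]
    ring
  rw [term1, term2]
  -- final algebra
  have hDM : D ≤ M := by
    rw [hM, hD]
    exact_mod_cast Nat.choose_le_choose K (Nat.sub_le P K)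
  have hlog : D2 * M ≤ D * D := by
    rw [hM, hD, hD2]
    exact_mod_cast logconc K P hK
  have hD2 : (0:ℝ) ≤ D2 := by positivity
  have hDpos : (0:ℝ) ≤ D := by positivity
  nlinarith [mul_le_mul_of_nonneg_left hlog hDpos]


lemma sum_cons {α : Type*} [DecidableEq α] (B : Finset α) (m : ℕ)
    (g : (Fin (m+1) → α) → ℝ) :
    ∑ f ∈ Fintype.piFinset (fun _ : Fin (m+1) => B), g f
      = ∑ x ∈ B, ∑ f ∈ Fintype.piFinset (fun _ : Fin m => B), g (Fin.cons x f) := by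
  rw [← Finset.sum_product']
  refine (Finset.sum_nbij' (fun f => (f 0, Fin.tail f)) (fun p => Fin.cons p.1 p.2)
    ?_ ?_ ?_ ?_ ?_)
  · intro f hf
    simp only [Fintype.mem_piFinset] at hf
    simp [Finset.mem_product, Fintype.mem_piFinset, Fin.tail, hf]
  · intro p hp
    simp only [Finset.mem_product, Fintype.mem_piFinset] at hp
    simp only [Fintype.mem_piFinset]
    intro i
    refine Fin.cases ?_ ?_ i
    · simpa using hp.1
    · intro j; simpa using hp.2 j
  · intro f _; exact Fin.cons_self_tail f
  · intro p _; simp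
  · intro f _; rw [Fin.cons_self_tail]


end RKG

namespace RKG

lemma sum_cons3 {α : Type*} [DecidableEq α] (B : Finset α) (m : ℕ)
    (g : (Fin (m+3) → α) → ℝ) :
    ∑ f ∈ Fintype.piFinset (fun _ : Fin (m+3) => B), g f
      = ∑ s ∈ B, ∑ t ∈ B, ∑ u ∈ B, ∑ f ∈ Fintype.piFinset (fun _ : Fin m => B),
          g (Fin.cons s (Fin.cons t (Fin.cons u f))) := by
  rw [RKG.sum_cons B (m+2) g]
  refine Finset.sum_congr rfl fun s _ => ?_
  rw [RKG.sum_cons B (m+1) (fun f => g (Fin.cons s f))]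
  refine Finset.sum_congr rfl fun t _ => ?_
  rw [RKG.sum_cons B m (fun f => g (Fin.cons s (Fin.cons t f)))]

noncomputable def Tb (K P : ℕ) : ℝ :=
  ∑ s ∈ AA K P, ∑ t ∈ AA K P, ∑ u ∈ AA K P,
    if ¬((s ∩ t).Nonempty ∧ (s ∩ u).Nonempty ∧ (t ∩ u).Nonempty) then (1:ℝ) else 0

lemma Tb_nonneg (K P : ℕ) : 0 ≤ Tb K P := by
  unfold Tb
  refine Finset.sum_nonneg fun s _ => Finset.sum_nonneg fun t _ => Finset.sum_nonneg fun u _ => ?_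
  positivity

lemma Tb_le (K P : ℕ) (hK : 0 < K) (hKP : K ≤ P) :
    Tb K P ≤ (P.choose K : ℝ)^3
      - ((P.choose K : ℝ) - ((P - K).choose K : ℝ))^3 := by
  have key : ∀ (p : Prop) [Decidable p],
      (if ¬ p then (1:ℝ) else 0) = 1 - (if p then (1:ℝ) else 0) := by
    intro p _
    by_cases h : p <;> simp [h]
  have hT : Tb K P = (P.choose K : ℝ)^3
      - ∑ s ∈ AA K P, ∑ t ∈ AA K P, ∑ u ∈ AA K P,
          (if (s ∩ t).Nonempty ∧ (s ∩ u).Nonempty ∧ (t ∩ u).Nonempty then (1:ℝ) else 0) := by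
    unfold Tb
    rw [Finset.sum_congr rfl fun s _ => Finset.sum_congr rfl fun t _ =>
      Finset.sum_congr rfl fun u _ => key _]
    rw [Finset.sum_congr rfl fun s (_ : s ∈ AA K P) => Finset.sum_congr rfl
      fun t (_ : t ∈ AA K P) => Finset.sum_sub_distrib _ _]
    rw [Finset.sum_congr rfl fun s (_ : s ∈ AA K P) => Finset.sum_sub_distrib _ _]
    rw [Finset.sum_sub_distrib]
    congr 1
    rw [Finset.sum_congr rfl fun s (_ : s ∈ AA K P) => Finset.sum_congr rfl
      fun t (_ : t ∈ AA K P) => sum_one K P]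
    rw [Finset.sum_const, Finset.sum_const, card_AA]
    push_cast
    ring
  rw [hT]
  have := G_ge K P hK hKP
  linarith

end RKG

namespace RKG

lemma keySpace_eq (n K P : ℕ) :
    keySpace n K P = Fintype.piFinset (fun _ : Fin n => AA K P) := rfl

lemma card_keySpace (n K P : ℕ) : ((keySpace n K P).card : ℝ) = (P.choose K : ℝ) ^ n := by
  rw [keySpace_eq, Fintype.card_piFinset]
  push_cast [card_AA]
  simp

lemma pointwise (K P m : ℕ) (s t u : Finset (Fin P)) (g : Fin m → Finset (Fin P)) :
    (if ¬ hasTriangle (m+3) P (Fin.cons s (Fin.cons t (Fin.cons u g))) then (1:ℝ) else 0)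
      ≤ (if ¬((s ∩ t).Nonempty ∧ (s ∩ u).Nonempty ∧ (t ∩ u).Nonempty) then (1:ℝ) else 0)
        * (if ¬ hasTriangle m P g then (1:ℝ) else 0) := by
  set f : Fin (m+3) → Finset (Fin P) := Fin.cons s (Fin.cons t (Fin.cons u g)) with hf
  by_cases h : hasTriangle (m+3) P f
  · rw [if_neg (by simpa using h)]
    positivity
  · have hfs : f 0 = s := rfl
    have hft : f 1 = t := by
      rw [hf, show (1 : Fin (m+3)) = Fin.succ 0 from (Fin.succ_zero_eq_one).symm,
        Fin.cons_succ, Fin.cons_zero]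
    have hfu : f 2 = u := by
      rw [hf, show (2 : Fin (m+3)) = Fin.succ 1 from (Fin.succ_one_eq_two).symm,
        Fin.cons_succ, show (1 : Fin (m+2)) = Fin.succ 0 from (Fin.succ_zero_eq_one).symm,
        Fin.cons_succ, Fin.cons_zero]
    have hBad : ¬((s ∩ t).Nonempty ∧ (s ∩ u).Nonempty ∧ (t ∩ u).Nonempty) := by
      rintro ⟨h1, h2, h3⟩
      exact h ⟨0, 1, 2, by simp [Fin.ext_iff], by simp [Fin.ext_iff, Nat.mod_eq_of_lt (show 2 < m + 3 by omega)],
          by simp [Fin.ext_iff, Nat.mod_eq_of_lt (show 2 < m + 3 by omega)],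
        by rw [hfs, hft]; exact h1, by rw [hfs, hfu]; exact h2, by rw [hft, hfu]; exact h3⟩
    have hg : ¬ hasTriangle m P g := by
      rintro ⟨i, j, k, hij, hik, hjk, e1, e2, e3⟩
      have emb : ∀ i : Fin m, f i.succ.succ.succ = g i := by
        intro i; rw [hf, Fin.cons_succ, Fin.cons_succ, Fin.cons_succ]
      refine h ⟨i.succ.succ.succ, j.succ.succ.succ, k.succ.succ.succ, ?_, ?_, ?_, ?_, ?_, ?_⟩
      · simpa [Fin.succ_inj] using hij
      · simpa [Fin.succ_inj] using hik
      · simpa [Fin.succ_inj] using hjk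
      · rw [emb, emb]; exact e1
      · rw [emb, emb]; exact e2
      · rw [emb, emb]; exact e3
    rw [if_pos (by simpa using h), if_pos hBad, if_pos hg]
    norm_num

lemma step (K P m : ℕ) :
    (((keySpace (m+3) K P).filter (fun f => ¬ hasTriangle (m+3) P f)).card : ℝ)
      ≤ Tb K P * (((keySpace m K P).filter (fun f => ¬ hasTriangle m P f)).card : ℝ) := by
  have hL : (((keySpace (m+3) K P).filter (fun f => ¬ hasTriangle (m+3) P f)).card : ℝ)
      = ∑ f ∈ keySpace (m+3) K P, if ¬ hasTriangle (m+3) P f then (1:ℝ) else 0 :=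
    (Finset.sum_boole _ _).symm
  have hR : (((keySpace m K P).filter (fun f => ¬ hasTriangle m P f)).card : ℝ)
      = ∑ g ∈ keySpace m K P, if ¬ hasTriangle m P g then (1:ℝ) else 0 :=
    (Finset.sum_boole _ _).symm
  rw [hL, hR, keySpace_eq, keySpace_eq,
    sum_cons3 (AA K P) m (fun f => if ¬ hasTriangle (m+3) P f then (1:ℝ) else 0)]
  calc
    (∑ s ∈ AA K P, ∑ t ∈ AA K P, ∑ u ∈ AA K P, ∑ g ∈ Fintype.piFinset (fun _ : Fin m => AA K P),
        if ¬ hasTriangle (m+3) P (Fin.cons s (Fin.cons t (Fin.cons u g))) then (1:ℝ) else 0)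
      ≤ ∑ s ∈ AA K P, ∑ t ∈ AA K P, ∑ u ∈ AA K P,
          ∑ g ∈ Fintype.piFinset (fun _ : Fin m => AA K P),
          (if ¬((s ∩ t).Nonempty ∧ (s ∩ u).Nonempty ∧ (t ∩ u).Nonempty) then (1:ℝ) else 0)
            * (if ¬ hasTriangle m P g then (1:ℝ) else 0) := by
        refine Finset.sum_le_sum fun s _ => Finset.sum_le_sum fun t _ =>
          Finset.sum_le_sum fun u _ => Finset.sum_le_sum fun g _ => ?_
        exact pointwise K P m s t u g
    _ = Tb K P * ∑ g ∈ Fintype.piFinset (fun _ : Fin m => AA K P),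
          (if ¬ hasTriangle m P g then (1:ℝ) else 0) := by
        unfold Tb
        rw [Finset.sum_mul]
        refine Finset.sum_congr rfl fun s _ => ?_
        rw [Finset.sum_mul]
        refine Finset.sum_congr rfl fun t _ => ?_
        rw [Finset.sum_mul]
        refine Finset.sum_congr rfl fun u _ => ?_
        rw [← Finset.mul_sum]

lemma iter (K P : ℕ) (j r : ℕ) :
    (((keySpace (r + 3*j) K P).filter (fun f => ¬ hasTriangle (r + 3*j) P f)).card : ℝ)
      ≤ (P.choose K : ℝ)^r * (Tb K P)^j := by
  induction j with
  | zero =>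
    simp only [Nat.mul_zero, Nat.add_zero, pow_zero, mul_one]
    calc (((keySpace r K P).filter (fun f => ¬ hasTriangle r P f)).card : ℝ)
        ≤ ((keySpace r K P).card : ℝ) := by exact_mod_cast Finset.card_filter_le _ _
      _ = (P.choose K : ℝ)^r := card_keySpace r K P
  | succ j ih =>
    have h : r + 3*(j+1) = (r + 3*j) + 3 := by ring
    rw [h]
    calc (((keySpace ((r + 3*j) + 3) K P).filter
            (fun f => ¬ hasTriangle ((r + 3*j) + 3) P f)).card : ℝ)
        ≤ Tb K P * (((keySpace (r + 3*j) K P).filter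
            (fun f => ¬ hasTriangle (r + 3*j) P f)).card : ℝ) := step K P (r + 3*j)
      _ ≤ Tb K P * ((P.choose K : ℝ)^r * (Tb K P)^j) :=
          mul_le_mul_of_nonneg_left ih (Tb_nonneg K P)
      _ = (P.choose K : ℝ)^r * (Tb K P)^(j+1) := by ring

lemma qKP_eq (K P : ℕ) (hK : 0 < K) :
    qKP K P = ((P - K).choose K : ℝ) / (P.choose K : ℝ) := by
  unfold qKP
  split_ifs with h
  · rfl
  · have : P - K < K := by omega
    rw [Nat.choose_eq_zero_of_lt this]
    simp

end RKG

theorem no_triangle_probability_bound (n K P : ℕ) (hn : 3 ≤ n) (hK : 0 < K) (hKP : K ≤ P) :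
    (((keySpace n K P).filter (fun f => ¬ hasTriangle n P f)).card : ℝ) /
        ((keySpace n K P).card : ℝ)
      ≤ (1 - (1 - qKP K P) ^ 3) ^ ((n - 3) / 3 + 1) ∧
    (1 - (1 - qKP K P) ^ 3) ^ ((n - 3) / 3 + 1)
      ≤ Real.exp (-(((n - 3) / 3 + 1 : ℕ) : ℝ) * (1 - qKP K P) ^ 3) := by
  set M : ℝ := (P.choose K : ℝ) with hM
  set D : ℝ := ((P - K).choose K : ℝ) with hD
  have hMpos : (0:ℝ) < M := by
    rw [hM]; exact_mod_cast Nat.choose_pos hKP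
  have hDnn : (0:ℝ) ≤ D := by rw [hD]; positivity
  have hDM : D ≤ M := by
    rw [hM, hD]; exact_mod_cast Nat.choose_le_choose K (Nat.sub_le P K)
  have hq : qKP K P = D / M := by rw [hD, hM]; exact RKG.qKP_eq K P hK
  have hq0 : 0 ≤ qKP K P := by rw [hq]; positivity
  have hq1 : qKP K P ≤ 1 := by rw [hq, div_le_one hMpos]; exact hDM
  set k1 : ℕ := (n - 3) / 3 + 1 with hk1def
  have hdiv : 3 * ((n - 3) / 3) ≤ n - 3 := Nat.mul_div_le (n - 3) 3
  have hk1 : 3 * k1 ≤ n := by omega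
  set r : ℕ := n - 3 * k1 with hrdef
  have hr : r + 3 * k1 = n := by omega
  have hiter := RKG.iter K P k1 r
  rw [hr] at hiter
  have hTb0 : 0 ≤ RKG.Tb K P := RKG.Tb_nonneg K P
  have hTb_le : RKG.Tb K P ≤ M^3 - (M - D)^3 := by
    rw [hM, hD]; exact RKG.Tb_le K P hK hKP
  have h1q : 1 - qKP K P = (M - D) / M := by
    rw [hq]; field_simp
  have base_le : RKG.Tb K P / M^3 ≤ 1 - (1 - qKP K P)^3 := by
    rw [h1q, div_pow]
    have hpow : (0:ℝ) < M^3 := by positivity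
    calc RKG.Tb K P / M^3 ≤ (M^3 - (M - D)^3) / M^3 :=
          (div_le_div_iff_of_pos_right hpow).mpr hTb_le
      _ = 1 - (M - D)^3 / M^3 := by
          rw [sub_div, div_self (ne_of_gt hpow)]
  have hbase0 : 0 ≤ RKG.Tb K P / M^3 := by positivity
  constructor
  · rw [RKG.card_keySpace n K P, ← hM]
    calc (((keySpace n K P).filter (fun f => ¬ hasTriangle n P f)).card : ℝ) / M^n
        ≤ ((P.choose K : ℝ)^r * (RKG.Tb K P)^k1) / M^n :=
          (div_le_div_iff_of_pos_right (pow_pos hMpos n)).mpr hiter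
      _ = (RKG.Tb K P / M^3)^k1 := by
          have hMn : M ^ n = M ^ r * (M^3)^k1 := by
            rw [← pow_mul, ← pow_add, hr]
          rw [hMn, ← hM, div_pow, mul_div_mul_left _ _ (ne_of_gt (pow_pos hMpos r))]
      _ ≤ (1 - (1 - qKP K P)^3)^k1 := pow_le_pow_left₀ hbase0 base_le k1
  · have hbase1 : 0 ≤ 1 - (1 - qKP K P)^3 := by
      have h1 : 0 ≤ 1 - qKP K P := by linarith
      have h2 : 1 - qKP K P ≤ 1 := by linarith
      have : (1 - qKP K P)^3 ≤ 1 := pow_le_one₀ h1 h2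
      linarith
    have hexp : 1 - (1 - qKP K P)^3 ≤ Real.exp (-(1 - qKP K P)^3) := by
      have := Real.add_one_le_exp (-(1 - qKP K P)^3)
      linarith
    calc (1 - (1 - qKP K P)^3)^k1
        ≤ (Real.exp (-(1 - qKP K P)^3))^k1 := pow_le_pow_left₀ hbase1 hexp k1
      _ = Real.exp ((k1 : ℝ) * (-(1 - qKP K P)^3)) := by
          rw [← Real.exp_nat_mul]
      _ = Real.exp (-(k1 : ℝ) * (1 - qKP K P)^3) := by ring_nf
end

section
/- Fix positive integers K and P with 3K ≤ P. For c_k(K,P) = [C(K,k)C(P−K,K−k)/C(P,K)]·[C(P−2K+k,K)/C(P,K)]², the ratio c_{k+1}/c_k equals (1/(k+1))·((K−k)²/(P−3K+k+1))·((P−2K+k+1)/(P−3K+k+1)) and is monotonically nonincreasing in k for 0 ≤ k ≤ K−1. -/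
noncomputable def cKP (k K P : ℕ) : ℝ :=
  ((K.choose k * (P - K).choose (K - k) : ℕ) : ℝ) / (P.choose K) *
    (((P - 2 * K + k).choose K : ℝ) / (P.choose K)) ^ 2

lemma aux_ineq (t m u Kr : ℝ) (ht : 0 ≤ t) (hm : 1 ≤ m) (hu : 1 ≤ u) (hKr : 0 ≤ Kr) :
    1/(t+2) * ((m-1)^2/(u+1)) * ((u+Kr+1)/(u+1)) ≤ 1/(t+1) * (m^2/u) * ((u+Kr)/u) := by
  have h0 : (0:ℝ) < u := by linarith
  have h1 : (0:ℝ) < t+1 := by linarith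
  rw [one_div, one_div, inv_mul_eq_div, inv_mul_eq_div, div_div, div_div,
    div_mul_div_comm, div_mul_div_comm]
  rw [div_le_div_iff₀ (by positivity) (by positivity)]
  have e1 : (m-1)^2 ≤ m^2 := by nlinarith
  have e2 : (u+Kr+1)*u^2 ≤ (u+Kr)*(u+1)^2 := by nlinarith
  have e3 : t+1 ≤ t+2 := by linarith
  have big : (m-1)^2*((u+Kr+1)*u^2)*(t+1) ≤ m^2*((u+Kr)*(u+1)^2)*(t+2) := by
    apply mul_le_mul (mul_le_mul e1 e2 (by positivity) (by positivity)) e3 (by positivity)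
    positivity
  nlinarith [big]

lemma ratio_formula (K P : ℕ) (hK : 0 < K) (h3K : 3 * K ≤ P) (k : ℕ) (hk : k < K) :
    cKP (k + 1) K P / cKP k K P
      = (1 / ((k : ℝ) + 1)) * (((K : ℝ) - k) ^ 2 / ((P : ℝ) - 3 * K + k + 1)) *
          (((P : ℝ) - 2 * K + k + 1) / ((P : ℝ) - 3 * K + k + 1)) := by
  have hKP : K ≤ P := by omega
  have h2K : 2 * K ≤ P := by omega
  have hkK : k ≤ K := hk.le
  -- cast facts
  have hc0 : (0:ℝ) < (P.choose K : ℝ) := by exact_mod_cast Nat.choose_pos hKP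
  have hc1 : (0:ℝ) < (K.choose k : ℝ) := by exact_mod_cast Nat.choose_pos hkK
  have hc2 : (0:ℝ) < ((P - K).choose (K - k) : ℝ) := by
    exact_mod_cast Nat.choose_pos (by omega)
  have hc3 : (0:ℝ) < ((P - 2*K + k).choose K : ℝ) := by
    exact_mod_cast Nat.choose_pos (by omega)
  have hck : cKP k K P ≠ 0 := by
    unfold cKP
    push_cast
    positivity
  have hd1 : ((k:ℝ) + 1) ≠ 0 := by positivity
  have hd2 : ((P:ℝ) - 2*K + k + 1) ≠ 0 := by
    have : (2*K:ℝ) ≤ P := by exact_mod_cast h2K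
    push_cast at this ⊢; nlinarith [Nat.cast_nonneg (α := ℝ) k]
  have hd3 : ((P:ℝ) - 3*K + k + 1) ≠ 0 := by
    have : (3*K:ℝ) ≤ P := by exact_mod_cast h3K
    nlinarith [Nat.cast_nonneg (α := ℝ) k]
  -- key identities
  have e1 : (K.choose (k+1) : ℝ) * ((k:ℝ)+1) = (K.choose k : ℝ) * ((K:ℝ) - k) := by
    have := Nat.choose_succ_right_eq K k
    have hcast : ((K - k : ℕ) : ℝ) = (K:ℝ) - k := by
      rw [Nat.cast_sub hkK]
    calc (K.choose (k+1) : ℝ) * ((k:ℝ)+1) = ((K.choose (k+1) * (k+1) : ℕ) : ℝ) := by push_cast; ring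
      _ = ((K.choose k * (K - k) : ℕ) : ℝ) := by rw [this]
      _ = (K.choose k : ℝ) * ((K:ℝ) - k) := by push_cast [hkK]; ring
  have e2 : ((P-K).choose (K - (k+1)) : ℝ) * ((P:ℝ) - 2*K + k + 1)
      = ((P-K).choose (K - k) : ℝ) * ((K:ℝ) - k) := by
    have h := Nat.choose_succ_right_eq (P - K) (K - k - 1)
    have h1 : K - k - 1 + 1 = K - k := by omega
    rw [h1] at h
    have h2 : K - (k+1) = K - k - 1 := by omega
    have h3 : P - K - (K - k - 1) = P - 2*K + k + 1 := by omega
    rw [h3] at h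
    rw [h2]
    calc ((P-K).choose (K-k-1) : ℝ) * ((P:ℝ) - 2*K + k + 1)
        = (((P-K).choose (K-k-1) * (P - 2*K + k + 1) : ℕ) : ℝ) := by
          push_cast [h2K]; ring
      _ = (((P-K).choose (K-k) * (K - k) : ℕ) : ℝ) := by rw [← h]
      _ = ((P-K).choose (K - k) : ℝ) * ((K:ℝ) - k) := by push_cast [hkK]; ring
  have e3 : ((P - 2*K + k).choose K : ℝ) * ((P:ℝ) - 2*K + k + 1)
      = ((P - 2*K + k + 1).choose K : ℝ) * ((P:ℝ) - 3*K + k + 1) := by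
    have h := Nat.choose_mul_succ_eq (P - 2*K + k) K
    have h1 : P - 2*K + k + 1 - K = P - 3*K + k + 1 := by omega
    rw [h1] at h
    calc ((P - 2*K + k).choose K : ℝ) * ((P:ℝ) - 2*K + k + 1)
        = (((P - 2*K + k).choose K * (P - 2*K + k + 1) : ℕ) : ℝ) := by push_cast [h2K]; ring
      _ = (((P - 2*K + k + 1).choose K * (P - 3*K + k + 1) : ℕ) : ℝ) := by rw [h]
      _ = ((P - 2*K + k + 1).choose K : ℝ) * ((P:ℝ) - 3*K + k + 1) := by push_cast [h3K]; ring
  have r1 : (K.choose (k+1) : ℝ) = (K.choose k : ℝ) * ((K:ℝ) - k) / ((k:ℝ)+1) := by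
    rw [eq_div_iff hd1]; exact e1
  have r2 : ((P-K).choose (K - (k+1)) : ℝ)
      = ((P-K).choose (K - k) : ℝ) * ((K:ℝ) - k) / ((P:ℝ) - 2*K + k + 1) := by
    rw [eq_div_iff hd2]; exact e2
  have r3 : ((P - 2*K + k + 1).choose K : ℝ)
      = ((P - 2*K + k).choose K : ℝ) * ((P:ℝ) - 2*K + k + 1) / ((P:ℝ) - 3*K + k + 1) := by
    rw [eq_div_iff hd3]; linarith [e3]
  rw [div_eq_iff hck]
  unfold cKP
  have hidx : P - 2*K + (k+1) = P - 2*K + k + 1 := by omega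
  rw [hidx]
  push_cast
  rw [r1, r2, r3]
  field_simp

theorem cKP_ratio_formula_and_monotone (K P : ℕ) (hK : 0 < K) (h3K : 3 * K ≤ P) :
    (∀ k : ℕ, k < K →
      cKP (k + 1) K P / cKP k K P
        = (1 / ((k : ℝ) + 1)) * (((K : ℝ) - k) ^ 2 / ((P : ℝ) - 3 * K + k + 1)) *
            (((P : ℝ) - 2 * K + k + 1) / ((P : ℝ) - 3 * K + k + 1)))
    ∧
    (∀ k : ℕ, k + 2 ≤ K →
      cKP (k + 2) K P / cKP (k + 1) K P ≤ cKP (k + 1) K P / cKP k K P) := by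
  constructor
  · exact ratio_formula K P hK h3K
  · intro k hk
    have h1 := ratio_formula K P hK h3K k (by omega)
    have h2 := ratio_formula K P hK h3K (k+1) (by omega)
    rw [show k + 2 = (k+1) + 1 from rfl, h2, h1]
    push_cast
    have hKk : ((k:ℝ)) + 2 ≤ K := by exact_mod_cast hk
    have hPK : (3*K:ℝ) ≤ P := by exact_mod_cast h3K
    have := aux_ineq (k:ℝ) ((K:ℝ) - k) ((P:ℝ) - 3*K + k + 1) (K:ℝ)
      (Nat.cast_nonneg k) (by linarith) (by nlinarith [Nat.cast_nonneg (α := ℝ) k]) (Nat.cast_nonneg K)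
    convert this using 2 <;> ring
end

section
/- For positive integers K ≤ P with 2K ≤ P, c₁(K,P) ≤ 1 − q(K,P), where c₁(K,P) = [C(K,1)C(P−K,K−1)/C(P,K)]·[C(P−2K+1,K)/C(P,K)]² and q(K,P) = C(P−K,K)/C(P,K). -/
lemma key_nat (K P : ℕ) (hK : 0 < K) (hKP : K ≤ P) :
    K.choose 1 * (P - K).choose (K - 1) + (P - K).choose K ≤ P.choose K := by
  have h := Nat.add_choose_eq K (P - K) K
  rw [Nat.add_sub_cancel' hKP] at h
  rw [h]
  have hsub : ({(1, K - 1), (0, K)} : Finset (ℕ × ℕ)) ⊆ Finset.HasAntidiagonal.antidiagonal K := by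
    intro p hp
    simp only [Finset.mem_insert, Finset.mem_singleton] at hp
    rcases hp with rfl | rfl <;> simp [Nat.add_sub_cancel' hK]
  calc K.choose 1 * (P - K).choose (K - 1) + (P - K).choose K
      = ∑ ij ∈ ({(1, K - 1), (0, K)} : Finset (ℕ × ℕ)),
          K.choose ij.1 * (P - K).choose ij.2 := by
        rw [Finset.sum_insert (by simp), Finset.sum_singleton]
        simp
    _ ≤ ∑ ij ∈ Finset.HasAntidiagonal.antidiagonal K, K.choose ij.1 * (P - K).choose ij.2 :=
        Finset.sum_le_sum_of_subset hsub

theorem c_one_le_one_sub_q (K P : ℕ) (hK : 0 < K) (hKP : K ≤ P) (h2K : 2 * K ≤ P) :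
    cKP 1 K P ≤ 1 - qKP K P := by
  have hC : (0 : ℝ) < (P.choose K : ℝ) := by
    exact_mod_cast Nat.choose_pos hKP
  rw [qKP, if_pos h2K, cKP]
  set C : ℝ := (P.choose K : ℝ)
  have hA0 : (0 : ℝ) ≤ ((K.choose 1 * (P - K).choose (K - 1) : ℕ) : ℝ) / C := by
    positivity
  have hf : (((P - 2 * K + 1).choose K : ℝ) / C) ^ 2 ≤ 1 := by
    have hle : (P - 2 * K + 1).choose K ≤ P.choose K := by
      apply Nat.choose_le_choose
      omega
    have h1 : (0 : ℝ) ≤ ((P - 2 * K + 1).choose K : ℝ) / C := by positivity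
    have h2 : ((P - 2 * K + 1).choose K : ℝ) / C ≤ 1 := by
      rw [div_le_one hC]; show _ ≤ ((P.choose K : ℕ) : ℝ); exact_mod_cast hle
    nlinarith
  have step1 : ((K.choose 1 * (P - K).choose (K - 1) : ℕ) : ℝ) / C *
      (((P - 2 * K + 1).choose K : ℝ) / C) ^ 2 ≤
      ((K.choose 1 * (P - K).choose (K - 1) : ℕ) : ℝ) / C := by
    nlinarith
  refine step1.trans ?_
  have hkey : ((K.choose 1 * (P - K).choose (K - 1) : ℕ) : ℝ) + ((P - K).choose K : ℝ)
      ≤ C := by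
    show _ ≤ ((P.choose K : ℕ) : ℝ)
    exact_mod_cast key_nat K P hK hKP
  rw [le_sub_iff_add_le, ← add_div, div_le_one hC]
  exact hkey
end

section
/- Let K, P : ℕ → ℕ with K_n ≤ P_n and K_n²/P_n → 0. Then for all sufficiently large n, c_k(K_n,P_n) ≤ (1 − q(K_n,P_n))^k for every k = 1,…,K_n. -/
open Filter

lemma myaux1 (k K m : ℕ) :
    (k.factorial : ℝ) * (K.choose k * (K + m).choose (K - k)) * ((m : ℝ) + 1) ^ k
      ≤ (K + m).choose K * ((K : ℝ) ^ 2) ^ k := by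
  induction k with
  | zero => simp
  | succ k ih =>
    by_cases h : k + 1 ≤ K
    · obtain ⟨j, rfl⟩ : ∃ j, K = k + 1 + j := ⟨K - (k + 1), by omega⟩
      simp only [show k + 1 + j - (k + 1) = j from by omega,
        show k + 1 + j - k = j + 1 from by omega] at ih ⊢
      have h1 : ((k + 1 + j).choose (k + 1) : ℝ) * (k + 1) = (k + 1 + j).choose k * (j + 1) := by
        have := Nat.choose_succ_right_eq (k + 1 + j) k
        rw [show (k + 1 + j) - k = j + 1 from by omega] at this
        exact_mod_cast this
      have h2 : ((k + 1 + j + m).choose (j + 1) : ℝ) * (j + 1)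
          = (k + 1 + j + m).choose j * ((m : ℝ) + k + 1) := by
        have := Nat.choose_succ_right_eq (k + 1 + j + m) j
        rw [show (k + 1 + j + m) - j = m + k + 1 from by omega] at this
        exact_mod_cast this
      have hpos : (0 : ℝ) < ((k : ℝ) + 1) * ((m : ℝ) + (k : ℝ) + 1) := by positivity
      rw [← mul_le_mul_iff_right₀ hpos]
      have key : ((k : ℝ) + 1) * ((m : ℝ) + (k : ℝ) + 1) *
          (((k + 1).factorial : ℝ) * ((k + 1 + j).choose (k + 1) * (k + 1 + j + m).choose j)
            * ((m : ℝ) + 1) ^ (k + 1))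
          = (((j : ℝ) + 1) ^ 2 * (((m : ℝ) + 1) * ((k : ℝ) + 1))) *
            ((k.factorial : ℝ) * ((k + 1 + j).choose k * (k + 1 + j + m).choose (j + 1))
              * ((m : ℝ) + 1) ^ k) := by
        push_cast [Nat.factorial_succ]
        linear_combination (((k : ℝ) + 1) * (k.factorial : ℝ) * ((m : ℝ) + 1) ^ (k + 1)) *
          ((((m : ℝ) + (k : ℝ) + 1) * ((k + 1 + j + m).choose j : ℝ)) * h1
            - (((j : ℝ) + 1) * ((k + 1 + j).choose k : ℝ)) * h2)
      rw [key]
      have hAB : (((j : ℝ) + 1) ^ 2 * (((m : ℝ) + 1) * ((k : ℝ) + 1)))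
          ≤ ((k : ℝ) + 1) * (((m : ℝ) + (k : ℝ) + 1) * ((k : ℝ) + 1 + (j : ℝ)) ^ 2) := by
        have e1 : ((j : ℝ) + 1) ^ 2 ≤ ((k : ℝ) + 1 + j) ^ 2 := by
          have h0 : (0:ℝ) ≤ (j : ℝ) + 1 := by positivity
          have h0' : ((j : ℝ) + 1) ≤ (k : ℝ) + 1 + j := by
            have : (0:ℝ) ≤ (k : ℝ) := by positivity
            linarith
          exact pow_le_pow_left₀ h0 h0' 2
        have e2 : ((m : ℝ) + 1) ≤ (m : ℝ) + (k : ℝ) + 1 := by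
          have : (0:ℝ) ≤ (k : ℝ) := by positivity
          linarith
        have e3 := mul_le_mul e1 e2 (by positivity) (by positivity)
        have e4 := mul_le_mul_of_nonneg_left e3 (by positivity : (0:ℝ) ≤ (k : ℝ) + 1)
        nlinarith [e4]
      calc (((j : ℝ) + 1) ^ 2 * (((m : ℝ) + 1) * ((k : ℝ) + 1))) *
            ((k.factorial : ℝ) * ((k + 1 + j).choose k * (k + 1 + j + m).choose (j + 1))
              * ((m : ℝ) + 1) ^ k)
          ≤ (((j : ℝ) + 1) ^ 2 * (((m : ℝ) + 1) * ((k : ℝ) + 1))) *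
            (((k + 1 + j + m).choose (k + 1 + j) : ℝ) * (((k : ℝ) + 1 + j) ^ 2) ^ k) := by
            apply mul_le_mul_of_nonneg_left _ (by positivity)
            convert ih using 3 <;> push_cast <;> rfl
        _ ≤ (((k : ℝ) + 1) * (((m : ℝ) + (k : ℝ) + 1) * ((k : ℝ) + 1 + (j : ℝ)) ^ 2)) *
            (((k + 1 + j + m).choose (k + 1 + j) : ℝ) * (((k : ℝ) + 1 + j) ^ 2) ^ k) :=
            by exact mul_le_mul_of_nonneg_right hAB (by positivity)
        _ = ((k : ℝ) + 1) * ((m : ℝ) + (k : ℝ) + 1) *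
            (((k + 1 + j + m).choose (k + 1 + j) : ℝ) * (((k + 1 + j : ℕ) : ℝ) ^ 2) ^ (k + 1)) := by
            push_cast; ring
    · have : K.choose (k + 1) = 0 := Nat.choose_eq_zero_of_lt (by omega)
      rw [this]
      push_cast
      rw [show ((0:ℝ)) * ((K + m).choose (K - (k+1)) : ℝ) = 0 from by ring]
      rw [mul_zero, zero_mul]
      positivity

lemma myaux2 (j K m : ℕ) :
    ((K + m + j).choose K : ℝ) * ((m : ℝ) + 1) ^ j
      ≤ ((K + m).choose K : ℝ) * ((K : ℝ) + m + 1) ^ j := by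
  induction j with
  | zero => simp
  | succ j ih =>
    rw [show K + m + (j + 1) = K + m + j + 1 from by omega]
    have h1 : ((K + m + j).choose K : ℝ) * ((K : ℝ) + m + j + 1)
        = ((K + m + j + 1).choose K : ℝ) * ((m : ℝ) + j + 1) := by
      have := Nat.choose_mul_succ_eq (K + m + j) K
      rw [show K + m + j + 1 - K = m + j + 1 from by omega] at this
      have := congrArg (fun x : ℕ => (x : ℝ)) this
      push_cast at this ⊢
      linarith [this]
    have hpos : (0 : ℝ) < (m : ℝ) + j + 1 := by positivity
    rw [← mul_le_mul_iff_left₀ hpos]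
    have key : ((K + m + j + 1).choose K : ℝ) * ((m : ℝ) + 1) ^ (j + 1) * ((m : ℝ) + j + 1)
        = (((K : ℝ) + m + j + 1) * ((m : ℝ) + 1)) *
          (((K + m + j).choose K : ℝ) * ((m : ℝ) + 1) ^ j) := by
      rw [pow_succ]
      linear_combination ((m : ℝ) + 1) ^ (j + 1) * h1.symm
    rw [key]
    have e1 : (((K : ℝ) + m + j + 1) * ((m : ℝ) + 1))
        ≤ ((m : ℝ) + j + 1) * ((K : ℝ) + m + 1) := by
      have : (0:ℝ) ≤ (j : ℝ) * K := by positivity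
      nlinarith [this]
    calc (((K : ℝ) + m + j + 1) * ((m : ℝ) + 1)) *
          (((K + m + j).choose K : ℝ) * ((m : ℝ) + 1) ^ j)
        ≤ (((K : ℝ) + m + j + 1) * ((m : ℝ) + 1)) *
          (((K + m).choose K : ℝ) * ((K : ℝ) + m + 1) ^ j) :=
          mul_le_mul_of_nonneg_left ih (by positivity)
      _ ≤ (((m : ℝ) + j + 1) * ((K : ℝ) + m + 1)) *
          (((K + m).choose K : ℝ) * ((K : ℝ) + m + 1) ^ j) :=
          mul_le_mul_of_nonneg_right e1 (by positivity)
      _ = ((K + m).choose K : ℝ) * ((K : ℝ) + m + 1) ^ (j + 1) * ((m : ℝ) + j + 1) := by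
          rw [pow_succ]; ring

lemma myaux3 (Kv M : ℕ) (h1 : 1 ≤ Kv) :
    M.choose Kv + Kv * M.choose (Kv - 1) ≤ (M + Kv).choose Kv := by
  rw [Nat.add_choose_eq]
  have hne : ((Kv, 0) : ℕ × ℕ) ≠ (Kv - 1, 1) := by simp
  have hsub : ({(Kv, 0), (Kv - 1, 1)} : Finset (ℕ × ℕ)) ⊆ Finset.HasAntidiagonal.antidiagonal Kv := by
    intro p hp
    simp only [Finset.mem_insert, Finset.mem_singleton] at hp
    rcases hp with rfl | rfl <;> simp [Finset.HasAntidiagonal.mem_antidiagonal] <;> omega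
  calc M.choose Kv + Kv * M.choose (Kv - 1)
      = ∑ p ∈ ({(Kv, 0), (Kv - 1, 1)} : Finset (ℕ × ℕ)), M.choose p.1 * Kv.choose p.2 := by
        rw [Finset.sum_pair hne]
        simp [Nat.choose_one_right]
        ring
    _ ≤ ∑ p ∈ Finset.HasAntidiagonal.antidiagonal Kv, M.choose p.1 * Kv.choose p.2 :=
        Finset.sum_le_sum_of_subset hsub

lemma my_two_pow_le_fact {k : ℕ} (h : 4 ≤ k) : 2 ^ k ≤ k.factorial := by
  induction k, h using Nat.le_induction with
  | base => decide
  | succ n hn ih =>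
    rw [pow_succ, Nat.factorial_succ]
    calc 2 ^ n * 2 ≤ n.factorial * (n + 1) := Nat.mul_le_mul ih (by omega)
      _ = (n + 1) * n.factorial := Nat.mul_comm _ _


set_option maxHeartbeats 1000000 in
theorem c_k_le_geometric_eventually (K P : ℕ → ℕ)
    (hK : ∀ n, 0 < K n) (hKP : ∀ n, K n ≤ P n)
    (hlim : Tendsto (fun n => ((K n : ℝ) ^ 2) / (P n : ℝ)) atTop (nhds 0)) :
    ∀ᶠ n in atTop, ∀ k : ℕ, 1 ≤ k → k ≤ K n →
      cKP k (K n) (P n) ≤ (1 - qKP (K n) (P n)) ^ k := by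
  have h8 : ∀ᶠ n in atTop, ((K n : ℝ) ^ 2) / (P n : ℝ) < 1 / 8 :=
    hlim.eventually (gt_mem_nhds (by norm_num))
  filter_upwards [h8] with n hn k hk1 hkK
  set a := K n with ha'
  set b := P n with hb'
  have ha : 0 < a := hK n
  have hab : a ≤ b := hKP n
  have hb0 : 0 < b := lt_of_lt_of_le ha hab
  have hbR : (0 : ℝ) < b := by exact_mod_cast hb0
  have h8R : 8 * (a : ℝ) ^ 2 < b := by
    rw [div_lt_iff₀ hbR] at hn; linarith
  have h8n : 8 * a ^ 2 < b := by exact_mod_cast h8R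
  have haa : a ≤ a ^ 2 := Nat.le_self_pow (by norm_num) a
  have h2K : 2 * a ≤ b := by nlinarith
  have h4K : 4 * a ^ 2 ≤ b := by omega
  -- notation
  set Cp : ℝ := (b.choose a : ℝ) with hCp'
  set Cq : ℝ := ((b - a).choose a : ℝ) with hCq'
  set D : ℝ := ((b - a).choose (a - 1) : ℝ) with hD'
  set F : ℕ := b - 2 * a + 1 with hF'
  have hCp : (0 : ℝ) < Cp := by rw [hCp']; exact_mod_cast Nat.choose_pos hab
  have hCq : (0 : ℝ) < Cq := by rw [hCq']; exact_mod_cast Nat.choose_pos (by omega : a ≤ b - a)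
  have hF0 : (0 : ℝ) < (F : ℝ) := by exact_mod_cast (by omega : 0 < F)
  have hfac : (0 : ℝ) < (k.factorial : ℝ) := by exact_mod_cast k.factorial_pos
  set x : ℝ := (a : ℝ) ^ 2 / (F : ℝ) with hx'
  set q : ℝ := Cq / Cp with hq'
  have hq0 : 0 < q := div_pos hCq hCp
  have hq1 : q ≤ 1 := by
    rw [hq', div_le_one hCp, hCp', hCq']
    exact_mod_cast Nat.choose_le_choose a (Nat.sub_le b a)
  -- A1 : factorial bound
  have A1 := myaux1 k a (b - 2 * a)
  rw [show a + (b - 2 * a) = b - a from by omega] at A1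
  have eF : ((b - 2 * a : ℕ) : ℝ) + 1 = (F : ℝ) := by
    rw [hF']; push_cast; ring
  rw [eF] at A1
  -- B : middle binomial bound
  have hB : ((b - 2 * a + k).choose a : ℝ) ≤ Cq := by
    rw [hCq']
    exact_mod_cast Nat.choose_le_choose a (by omega : b - 2 * a + k ≤ b - a)
  have hB0 : (0 : ℝ) ≤ ((b - 2 * a + k).choose a : ℝ) := by positivity
  -- C : q ≥ 1/2
  have A2 := myaux2 a a (b - 2 * a)
  rw [show a + (b - 2 * a) + a = b from by omega,
      show a + (b - 2 * a) = b - a from by omega, eF] at A2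
  have eA : ((a : ℝ) + ((b - 2 * a : ℕ) : ℝ) + 1) = ((b - a + 1 : ℕ) : ℝ) := by
    exact_mod_cast (by omega : a + (b - 2 * a) + 1 = (b - a) + 1)
  rw [eA] at A2
  rw [← hCq'] at A1 A2
  rw [← hCp'] at A2
  set A : ℕ := b - a + 1 with hA'
  have hA0 : (0 : ℝ) < (A : ℝ) := by rw [hA']; exact_mod_cast (by omega : 0 < b - a + 1)
  have hFA : (F : ℝ) = (A : ℝ) - (a : ℝ) := by
    have : F + a = A := by omega
    have := congrArg (fun m : ℕ => (m : ℝ)) this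
    push_cast at this
    linarith
  -- Bernoulli lower bound on (F/A)^a
  have hber : (1 : ℝ) / 2 ≤ ((F : ℝ) / (A : ℝ)) ^ a := by
    have h2A : 2 * a ^ 2 ≤ A := by
      obtain ⟨s, hs⟩ : ∃ s, a ^ 2 = s := ⟨_, rfl⟩
      rw [hs] at h8n ⊢
      omega
    have h2AR : 2 * (a : ℝ) ^ 2 ≤ (A : ℝ) := by exact_mod_cast h2A
    have haA : a ≤ A := le_trans haa (le_trans (by nlinarith : a ^ 2 ≤ 2 * a ^ 2) h2A)
    have haAR : (a : ℝ) ≤ (A : ℝ) := by exact_mod_cast haA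
    have hber' := one_add_mul_le_pow (a := -((a : ℝ) / (A : ℝ))) (by
      have h1 : (a : ℝ) / (A : ℝ) ≤ 1 := by rw [div_le_one hA0]; linarith
      linarith) a
    have e1 : (1 : ℝ) + -((a : ℝ) / (A : ℝ)) = (F : ℝ) / (A : ℝ) := by
      rw [hFA]
      field_simp
      ring
    rw [e1] at hber'
    have e2 : (1 : ℝ) / 2 ≤ 1 + (a : ℝ) * -((a : ℝ) / (A : ℝ)) := by
      have h3 : (a : ℝ) ^ 2 / A ≤ 1 / 2 := by
        rw [div_le_iff₀ hA0]
        linarith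
      have h4 : (a : ℝ) * -((a : ℝ) / (A : ℝ)) = -((a : ℝ) ^ 2 / A) := by ring
      rw [h4]
      linarith
    linarith
  -- q ≥ 1/2
  have hCp2 : Cp ≤ 2 * Cq := by
    have hA2F : ((A : ℝ)) ^ a ≤ 2 * (F : ℝ) ^ a := by
      rw [div_pow, le_div_iff₀ (by positivity)] at hber
      linarith
    have h1 : Cp * (F : ℝ) ^ a ≤ 2 * Cq * (F : ℝ) ^ a := by
      calc Cp * (F : ℝ) ^ a ≤ Cq * (A : ℝ) ^ a := A2
        _ ≤ Cq * (2 * (F : ℝ) ^ a) := mul_le_mul_of_nonneg_left hA2F hCq.le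
        _ = 2 * Cq * (F : ℝ) ^ a := by ring
    exact le_of_mul_le_mul_right h1 (pow_pos hF0 a)
  have hqhalf : (1 : ℝ) / 2 ≤ q := by
    rw [hq', le_div_iff₀ hCp]
    linarith
  -- Vandermonde piece : Cq + a * D ≤ Cp
  have hD : Cq + (a : ℝ) * D ≤ Cp := by
    have h := myaux3 a (b - a) ha
    rw [show b - a + a = b from by omega] at h
    rw [hCp', hCq', hD']
    exact_mod_cast h
  -- identity : Cq * a = D * F
  have hE : Cq * (a : ℝ) = D * (F : ℝ) := by
    have h := Nat.choose_succ_right_eq (b - a) (a - 1)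
    rw [show a - 1 + 1 = a from by omega, show b - a - (a - 1) = F from by omega] at h
    rw [hCq', hD']
    exact_mod_cast h
  have hqx : q * x ≤ 1 - q := by
    have hqxD : q * x = (a : ℝ) * D / Cp := by
      rw [hq', hx']
      rw [div_mul_div_comm, div_eq_div_iff (by positivity) hCp.ne']
      linear_combination ((a : ℝ) * Cp) * hE
    rw [hqxD, hq', div_le_iff₀ hCp]
    have : (1 - Cq / Cp) * Cp = Cp - Cq := by field_simp
    rw [this]
    linarith
  have hqx0 : 0 ≤ q * x := by positivity
  -- q^3 / k! ≤ q^k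
  have hq3k : q ^ 3 / (k.factorial : ℝ) ≤ q ^ k := by
    by_cases hk3 : k ≤ 3
    · have h1 : q ^ 3 ≤ q ^ k := pow_le_pow_of_le_one hq0.le hq1 hk3
      have h2 : (1 : ℝ) ≤ (k.factorial : ℝ) := by exact_mod_cast k.factorial_pos
      calc q ^ 3 / (k.factorial : ℝ) ≤ q ^ 3 := div_le_self (by positivity) h2
        _ ≤ q ^ k := h1
    · push_neg at hk3
      have h2p : ((2 : ℝ)) ^ k ≤ (k.factorial : ℝ) := by
        exact_mod_cast my_two_pow_le_fact (by omega)
      have hq3 : q ^ 3 ≤ 1 := pow_le_one₀ hq0.le hq1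
      have hhalf : (1 : ℝ) / 2 ^ k ≤ q ^ k := by
        have := pow_le_pow_left₀ (by norm_num : (0:ℝ) ≤ 1/2) hqhalf k
        rw [div_pow, one_pow] at this
        exact this
      calc q ^ 3 / (k.factorial : ℝ) ≤ 1 / (k.factorial : ℝ) := by gcongr
        _ ≤ 1 / 2 ^ k := by gcongr
        _ ≤ q ^ k := hhalf
  -- numerator bound
  have hN : ((a.choose k * (b - a).choose (a - k) : ℕ) : ℝ)
      ≤ Cq * ((a : ℝ) ^ 2) ^ k / ((k.factorial : ℝ) * (F : ℝ) ^ k) := by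
    rw [le_div_iff₀ (by positivity)]
    calc ((a.choose k * (b - a).choose (a - k) : ℕ) : ℝ) * ((k.factorial : ℝ) * (F : ℝ) ^ k)
        = (k.factorial : ℝ) * ((a.choose k : ℝ) * ((b - a).choose (a - k) : ℝ)) * (F : ℝ) ^ k := by
          push_cast
          ring
      _ ≤ Cq * ((a : ℝ) ^ 2) ^ k := A1
  -- assemble
  simp only [cKP, qKP, if_pos h2K]
  rw [← hCp', ← hCq', ← hq']
  calc ((a.choose k * (b - a).choose (a - k) : ℕ) : ℝ) / Cp * (((b - 2 * a + k).choose a : ℝ) / Cp) ^ 2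
      ≤ (Cq * ((a : ℝ) ^ 2) ^ k / ((k.factorial : ℝ) * (F : ℝ) ^ k)) / Cp * ((Cq : ℝ) / Cp) ^ 2 := by
        gcongr
    _ = q ^ 3 * x ^ k / (k.factorial : ℝ) := by
        rw [hq', hx', div_pow]
        field_simp
        ring_nf
        rw [mul_assoc, ← mul_pow, mul_inv_cancel₀ hF0.ne', one_pow, mul_one]
    _ = (q ^ 3 / (k.factorial : ℝ)) * x ^ k := by ring
    _ ≤ q ^ k * x ^ k := mul_le_mul_of_nonneg_right hq3k (by positivity)
    _ = (q * x) ^ k := (mul_pow q x k).symm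
    _ ≤ (1 - q) ^ k := pow_le_pow_left₀ hqx0 hqx k
end
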